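/- arXiv:2210.16717 — 9 statements merged into one kernel-verified Lean document; each statement's English description precedes it below -/
import Mathlib

section
/- For every integer k ≥ 4 and any two roots α, β of the k-generalized Fibonacci polynomial f_k with |β| < |α| < 1, the ratio of their absolute values satisfies |α|/|β| > 1 + 1/(10 · k^(9.6) · (π/e)^k). -/
open Polynomial Real

set_option maxHeartbeats 1000000

/-- The `k`-generalized Fibonacci polynomial `f_k(X) = X^k - X^(k-1) - ⋯ - X - 1`,
viewed as a polynomial over `ℂ`. -/
noncomputable def fibPoly (k : ℕ) : Polynomial ℂ :=
  X ^ k - ∑ i ∈ Finset.range k, X ^ i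


lemma pow_sub_pow_le' {x y : ℝ} (h0 : 0 ≤ y) (hxy : y ≤ x) (hx : x ≤ 1) (n : ℕ) :
    x ^ n - y ^ n ≤ n * (x - y) := by
  induction n with
  | zero => simp
  | succ n ih =>
    have hyn : y ^ n ≤ 1 := pow_le_one₀ h0 (hxy.trans hx)
    have hxyn : y ^ n ≤ x ^ n := pow_le_pow_left₀ h0 hxy n
    rw [pow_succ, pow_succ]
    push_cast
    nlinarith [mul_nonneg (sub_nonneg.2 hx) (sub_nonneg.2 hxyn),
      mul_nonneg (sub_nonneg.2 hxy) (sub_nonneg.2 hyn)]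

lemma taylor2 (x y : ℂ) (hx : ‖x‖ ≤ 1) (hy : ‖y‖ ≤ 1) (n : ℕ) :
    ‖(y ^ n - x ^ n - n * x ^ (n - 1) * (y - x))‖ ≤
      (n : ℝ) ^ 2 * ‖(y - x)‖ ^ 2 := by
  induction n with
  | zero => simp
  | succ n ih =>
    have key : y ^ (n+1) - x ^ (n+1) - ((n+1 : ℕ) : ℂ) * x ^ ((n+1) - 1) * (y - x)
        = y * (y ^ n - x ^ n - (n:ℂ) * x ^ (n-1) * (y - x)) + (n:ℂ) * (y-x)^2 * x ^ (n-1) := by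
      cases n with
      | zero => simp
      | succ m =>
        have h1 : (m + 1 : ℕ) - 1 = m := rfl
        have h2 : (m + 1 + 1 : ℕ) - 1 = m + 1 := rfl
        rw [h1, h2]
        push_cast
        ring
    rw [key]
    have hxn : ‖(x ^ (n-1))‖ ≤ 1 := by
      rw [norm_pow]; exact pow_le_one₀ (norm_nonneg x) hx
    calc ‖_‖ ≤ ‖(y * (y ^ n - x ^ n - (n:ℂ) * x ^ (n-1) * (y - x)))‖
            + ‖((n:ℂ) * (y-x)^2 * x ^ (n-1))‖ := norm_add_le _ _
      _ ≤ 1 * ((n : ℝ)^2 * ‖(y - x)‖ ^ 2)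
            + (n:ℝ) * ‖(y-x)‖^2 * 1 := by
          rw [norm_mul, norm_mul, norm_mul, norm_pow, Complex.norm_natCast]
          gcongr
      _ ≤ ((n+1 : ℕ) : ℝ)^2 * ‖(y - x)‖ ^ 2 := by
          push_cast
          nlinarith [sq_nonneg (‖(y-x)‖), norm_nonneg (y-x)]

-- tiny arithmetic helpers (small contexts for nlinarith)
lemma ar1 {A X : ℝ} (h : A * X = 1) (h3 : X ≤ 3) (h0 : 0 < X) : 1/3 ≤ A := by
  nlinarith

lemma ar2 {a b ε : ℝ} (hcon : a ≤ (1+ε)*b) (hb1 : b ≤ 1) (hε0 : 0 ≤ ε) : a - b ≤ ε := by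
  nlinarith

lemma ar3 {a b ε : ℝ} (h0 : 0 ≤ b) (hba : b ≤ a) (ha1 : a ≤ 1) (hab : a - b ≤ ε) :
    a^2 - b^2 ≤ 2*ε := by nlinarith

lemma ar4 {x y z M : ℝ} (hx0 : 0 ≤ x) (hx : x ≤ M) (hy0 : 0 ≤ y) (hy : y ≤ 9)
    (hz0 : 0 ≤ z) (hz : z ≤ 9) : x*y*z ≤ 81*M := by
  calc x*y*z ≤ (x*y)*9 := mul_le_mul_of_nonneg_left hz (mul_nonneg hx0 hy0)
    _ ≤ (x*9)*9 := mul_le_mul_of_nonneg_right (mul_le_mul_of_nonneg_left hy hx0) (by norm_num)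
    _ ≤ 81*M := by linarith

lemma ar5 {x y M : ℝ} (hx : 0 ≤ x) (hy : 0 ≤ y) (h : x^2 - y^2 ≤ M) (h' : -M ≤ x^2 - y^2) :
    (x - y)^2 ≤ M := by
  rcases le_total y x with h1 | h1
  · nlinarith [mul_nonneg hy (sub_nonneg.2 h1)]
  · nlinarith [mul_nonneg hx (sub_nonneg.2 h1)]

lemma ar6 {A : ℝ} (h3 : 1/3 ≤ A) : (A^2)⁻¹ ≤ 9 := by
  rw [inv_le_comm₀ (by nlinarith) (by norm_num)]
  nlinarith

lemma ar7 {t : ℝ} (h0 : 0 ≤ t) (h : t ≤ 1/480000) : (41*t)^2 ≤ t := by nlinarith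

lemma ar8 {K : ℝ} (h : 4 ≤ K) : (K+1)^2 + 2*K^2 ≤ 4*K^2 := by nlinarith

lemma ar9 {K d : ℝ} (hK : 4 ≤ K) (h : K - 1 ≤ 12*K^2*d) : 1 ≤ 16*K*d := by
  have hKpos : (0:ℝ) < 3*K := by linarith
  have h3 : 0 ≤ 3*K*(16*K*d - 1) := by nlinarith
  have h4 : 0 ≤ 16*K*d - 1 := (mul_nonneg_iff_of_pos_left hKpos).mp h3
  linarith

lemma key (k : ℕ) (hk : 4 ≤ k) (α β : ℂ)
    (hα : α ^ (k+1) - 2 * α ^ k + 1 = 0) (hβ : β ^ (k+1) - 2 * β ^ k + 1 = 0)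
    (h1 : ‖β‖ < ‖α‖) (h2 : ‖α‖ < 1)
    (hia : 0 ≤ α.im) (hib : 0 ≤ β.im)
    (ε : ℝ) (hε0 : 0 ≤ ε) (hε : ε ≤ 1 / (30000 * (k:ℝ)^3))
    (hcon : ‖α‖ ≤ (1 + ε) * ‖β‖) : False := by
  set a := ‖α‖ with ha_def
  set b := ‖β‖ with hb_def
  have hk4 : (4:ℝ) ≤ (k:ℝ) := by exact_mod_cast hk
  have hkpos : (0:ℝ) < k := by linarith
  have hkε : ε ≤ (k:ℝ) * ε := le_mul_of_one_le_left hε0 (by linarith)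
  have hkε0 : 0 ≤ (k:ℝ) * ε := mul_nonneg hkpos.le hε0
  -- g-equation in product form
  have gα : α ^ k * (2 - α) = 1 := by linear_combination -hα
  have gβ : β ^ k * (2 - β) = 1 := by linear_combination -hβ
  have absα : a ^ k * ‖(2 - α)‖ = 1 := by
    rw [ha_def, ← norm_pow, ← norm_mul, gα, norm_one]
  have absβ : b ^ k * ‖(2 - β)‖ = 1 := by
    rw [hb_def, ← norm_pow, ← norm_mul, gβ, norm_one]
  have ha0 : 0 ≤ a := norm_nonneg α
  have hb0 : 0 ≤ b := norm_nonneg β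
  have hb1 : b < 1 := h1.trans h2
  have ha1 : a ≤ 1 := h2.le
  have hba : b ≤ a := h1.le
  have h2α : ‖(2 - α)‖ ≤ 3 := by
    calc ‖(2 - α)‖ ≤ ‖(2:ℂ)‖ + ‖α‖ := by
          simpa [sub_eq_add_neg] using norm_add_le 2 (-α)
      _ ≤ 3 := by simp only [Complex.norm_two]; linarith
  have h2β : ‖(2 - β)‖ ≤ 3 := by
    calc ‖(2 - β)‖ ≤ ‖(2:ℂ)‖ + ‖β‖ := by
          simpa [sub_eq_add_neg] using norm_add_le 2 (-β)
      _ ≤ 3 := by simp only [Complex.norm_two]; linarith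
  have h2α0 : 0 < ‖(2 - α)‖ := by
    rcases (norm_nonneg (2-α)).lt_or_eq with h | h
    · exact h
    · exfalso; rw [← h] at absα; simp at absα
  have h2β0 : 0 < ‖(2 - β)‖ := by
    rcases (norm_nonneg (2-β)).lt_or_eq with h | h
    · exact h
    · exfalso; rw [← h] at absβ; simp at absβ
  have hA3 : (1:ℝ)/3 ≤ a ^ k := ar1 absα h2α h2α0
  have hB3 : (1:ℝ)/3 ≤ b ^ k := ar1 absβ h2β h2β0
  have hA1 : a ^ k ≤ 1 := pow_le_one₀ ha0 ha1
  have hB1 : b ^ k ≤ 1 := pow_le_one₀ hb0 hb1.le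
  have hApos : (0:ℝ) < a ^ k := by linarith
  have hBpos : (0:ℝ) < b ^ k := by linarith
  have hab : a - b ≤ ε := ar2 hcon hb1.le hε0
  -- real part formulas
  have hre_gen : ∀ z : ℂ, ‖z‖ ^ 2 = z.re ^ 2 + z.im ^ 2 := by
    intro z; rw [Complex.sq_norm, Complex.normSq_apply]; ring
  have e2α : ‖(2 - α)‖ ^ 2 = (2 - α.re)^2 + α.im^2 := by
    rw [hre_gen (2 - α)]; simp [Complex.sub_re, Complex.sub_im]
  have e2β : ‖(2 - β)‖ ^ 2 = (2 - β.re)^2 + β.im^2 := by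
    rw [hre_gen (2 - β)]; simp [Complex.sub_re, Complex.sub_im]
  have eaα : a ^ 2 = α.re^2 + α.im^2 := hre_gen α
  have eaβ : b ^ 2 = β.re^2 + β.im^2 := hre_gen β
  have invα : ‖(2 - α)‖ = (a ^ k)⁻¹ := eq_inv_of_mul_eq_one_left
    (by rw [mul_comm]; exact absα)
  have invβ : ‖(2 - β)‖ = (b ^ k)⁻¹ := eq_inv_of_mul_eq_one_left
    (by rw [mul_comm]; exact absβ)
  have hreα : 4 * α.re = 4 + a^2 - ((a^k)⁻¹)^2 := by
    rw [← invα]; linear_combination e2α - eaα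
  have hreβ : 4 * β.re = 4 + b^2 - ((b^k)⁻¹)^2 := by
    rw [← invβ]; linear_combination e2β - eaβ
  -- bound on Q - P
  have hQP : ((b^k)⁻¹)^2 - ((a^k)⁻¹)^2 ≤ 162 * (k * ε) := by
    have hid : ((b^k)⁻¹)^2 - ((a^k)⁻¹)^2
        = ((a^k)^2 - (b^k)^2) * ((a^k)^2)⁻¹ * ((b^k)^2)⁻¹ := by
      have hA := hApos.ne'
      have hB := hBpos.ne'
      field_simp
    rw [hid]
    have h9a : ((a^k)^2)⁻¹ ≤ 9 := ar6 hA3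
    have h9b : ((b^k)^2)⁻¹ ≤ 9 := ar6 hB3
    have hdiff : (a^k)^2 - (b^k)^2 ≤ 2 * (k * ε) := by
      have h' := pow_sub_pow_le' hb0 hba ha1 (k*2)
      have hA2 : a ^ (k*2) = (a^k)^2 := by rw [pow_mul]
      have hB2 : b ^ (k*2) = (b^k)^2 := by rw [pow_mul]
      rw [hA2, hB2] at h'
      push_cast at h'
      have h'' : ((k:ℝ)*2) * (a - b) ≤ ((k:ℝ)*2) * ε :=
        mul_le_mul_of_nonneg_left hab (by positivity)
      linarith
    have hdiff0 : 0 ≤ (a^k)^2 - (b^k)^2 := by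
      have h' : b^k ≤ a^k := pow_le_pow_left₀ hb0 hba k
      have h'' : (b^k)^2 ≤ (a^k)^2 := pow_le_pow_left₀ hBpos.le h' 2
      linarith
    calc ((a^k)^2 - (b^k)^2) * ((a^k)^2)⁻¹ * ((b^k)^2)⁻¹
        ≤ 81 * (2 * (k*ε)) := ar4 hdiff0 hdiff (by positivity) h9a (by positivity) h9b
      _ = 162 * (k*ε) := by ring
  have hQP0 : 0 ≤ ((b^k)⁻¹)^2 - ((a^k)⁻¹)^2 := by
    have hba' : b^k ≤ a^k := pow_le_pow_left₀ hb0 hba k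
    have h' : (a^k)⁻¹ ≤ (b^k)⁻¹ := by
      apply inv_anti₀ hBpos hba'
    have i1 : 0 ≤ (a^k)⁻¹ := by positivity
    have h'' : ((a^k)⁻¹)^2 ≤ ((b^k)⁻¹)^2 := pow_le_pow_left₀ i1 h' 2
    linarith
  -- ΔR bounds
  have hab2 : a^2 - b^2 ≤ 2*ε := ar3 hb0 hba ha1 hab
  have hab20 : 0 ≤ a^2 - b^2 := by
    have h'' : b^2 ≤ a^2 := pow_le_pow_left₀ hb0 hba 2
    linarith
  have hΔR : α.re - β.re ≤ 41 * (k * ε) := by linarith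
  have hΔR0 : 0 ≤ α.re - β.re := by linarith
  -- Im part
  have hreabs : |α.re| ≤ a := Complex.abs_re_le_norm α
  have hrebabs : |β.re| ≤ b := Complex.abs_re_le_norm β
  have hresum : |α.re + β.re| ≤ 2 := by
    have h' := abs_add_le α.re β.re
    have hra : |α.re| ≤ 1 := hreabs.trans ha1
    have hrb : |β.re| ≤ 1 := hrebabs.trans hb1.le
    linarith
  have hre2 : |α.re^2 - β.re^2| ≤ 82 * (k * ε) := by
    have hfac : α.re^2 - β.re^2 = (α.re - β.re) * (α.re + β.re) := by ring
    rw [hfac, abs_mul, abs_of_nonneg hΔR0]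
    calc (α.re - β.re) * |α.re + β.re| ≤ (41 * (k*ε)) * 2 :=
          mul_le_mul hΔR hresum (abs_nonneg _) (by positivity)
      _ = 82 * (k*ε) := by ring
  have him2 : α.im^2 - β.im^2 ≤ 84 * (k * ε) ∧ -(84 * (k * ε)) ≤ α.im^2 - β.im^2 := by
    have hid : α.im^2 - β.im^2 = (a^2 - b^2) - (α.re^2 - β.re^2) := by
      rw [eaα, eaβ]; ring
    obtain ⟨hl, hr⟩ := abs_le.1 hre2
    constructor <;> (rw [hid]; linarith)
  have hΔI : (α.im - β.im)^2 ≤ 84 * (k * ε) := ar5 hia hib him2.1 him2.2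
  -- distance squared upper bound
  have hd2eq : ‖(α - β)‖^2 = (α.re - β.re)^2 + (α.im - β.im)^2 := by
    rw [hre_gen (α - β)]; simp [Complex.sub_re, Complex.sub_im]
  have hkεsmall : (k:ℝ) * ε ≤ 1 / (30000 * (k:ℝ)^2) := by
    rw [le_div_iff₀ (by positivity)] at hε ⊢
    calc (k:ℝ) * ε * (30000 * (k:ℝ)^2) = (ε * (30000 * (k:ℝ)^3)) := by ring
      _ ≤ 1 := hε
  have hΔRsq : (α.re - β.re)^2 ≤ (k:ℝ) * ε := by
    have h16 : (16:ℝ) ≤ (k:ℝ)^2 := by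
      have h'' : (4:ℝ)*4 ≤ (k:ℝ)*(k:ℝ) :=
        mul_le_mul hk4 hk4 (by norm_num) (by linarith)
      calc (16:ℝ) = 4*4 := by norm_num
        _ ≤ (k:ℝ)*(k:ℝ) := h''
        _ = (k:ℝ)^2 := (sq (k:ℝ)).symm
    have h41 : (41 * ((k:ℝ)*ε))^2 ≤ (k:ℝ)*ε := by
      apply ar7 hkε0
      calc (k:ℝ)*ε ≤ 1 / (30000 * (k:ℝ)^2) := hkεsmall
        _ ≤ 1/480000 := by
          rw [div_le_div_iff₀ (by positivity) (by norm_num)]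
          linarith
    calc (α.re - β.re)^2 ≤ (41 * ((k:ℝ)*ε))^2 := by
          apply sq_le_sq' <;> linarith
      _ ≤ (k:ℝ)*ε := h41
  have hupper : ‖(α - β)‖^2 ≤ 85 * ((k:ℝ) * ε) := by
    rw [hd2eq]; linarith
  -- separation lower bound
  have hne : α ≠ β := by
    intro h'
    have hab' : a = b := by rw [ha_def, hb_def, h']
    linarith
  have hdpos : 0 < ‖(α - β)‖ := norm_pos_iff.mpr (sub_ne_zero.2 hne)
  have hk1 : 1 ≤ k := by omega
  have e1 := taylor2 β α hb1.le ha1 (k+1)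
  have e2 := taylor2 β α hb1.le ha1 k
  rw [Nat.add_sub_cancel] at e1
  have hide : ((k+1:ℂ) * β ^ k - 2*(k:ℂ)*β^(k-1)) * (α - β)
      = -(α^(k+1) - β^(k+1) - ((k+1:ℕ):ℂ) * β^k * (α-β))
        + 2*(α^k - β^k - (k:ℂ)*β^(k-1)*(α-β))
        + ((α^(k+1) - 2*α^k + 1) - (β^(k+1) - 2*β^k + 1)) := by
    push_cast
    ring
  have hDle : ‖(((k+1:ℂ) * β ^ k - 2*(k:ℂ)*β^(k-1)) * (α - β))‖
      ≤ (((k:ℝ)+1)^2 + 2*(k:ℝ)^2) * ‖(α - β)‖^2 := by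
    rw [hide, hα, hβ, sub_zero, add_zero]
    calc ‖(-(α^(k+1) - β^(k+1) - ((k+1:ℕ):ℂ) * β^k * (α-β))
            + 2*(α^k - β^k - (k:ℂ)*β^(k-1)*(α-β)))‖
        ≤ ‖(-(α^(k+1) - β^(k+1) - ((k+1:ℕ):ℂ) * β^k * (α-β)))‖
          + ‖(2*(α^k - β^k - (k:ℂ)*β^(k-1)*(α-β)))‖ := norm_add_le _ _
      _ = ‖(α^(k+1) - β^(k+1) - ((k+1:ℕ):ℂ) * β^k * (α-β))‖
          + 2 * ‖(α^k - β^k - (k:ℂ)*β^(k-1)*(α-β))‖ := by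
          rw [norm_neg, norm_mul, Complex.norm_two]
      _ ≤ ((k+1:ℕ):ℝ)^2 * ‖(α - β)‖^2
          + 2 * ((k:ℝ)^2 * ‖(α - β)‖^2) := by
          gcongr
      _ = (((k:ℝ)+1)^2 + 2*(k:ℝ)^2) * ‖(α - β)‖^2 := by
          push_cast; ring
  have hfac : (k+1:ℂ)*β^k - 2*(k:ℂ)*β^(k-1) = β^(k-1) * ((k+1:ℂ)*β - 2*(k:ℂ)) := by
    have h' : β ^ k = β^(k-1) * β := by
      rw [← pow_succ, Nat.sub_add_cancel hk1]
    rw [h']; ring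
  have hbk1 : (1:ℝ)/3 ≤ b^(k-1) := by
    have h' : b^k ≤ b^(k-1) := pow_le_pow_of_le_one hb0 hb1.le (Nat.sub_le k 1)
    linarith
  have habs2 : (k:ℝ) - 1 ≤ ‖((k+1:ℂ)*β - 2*(k:ℂ))‖ := by
    have h' : ‖(2*(k:ℂ))‖ - ‖(k+1:ℂ)*β‖ ≤ ‖2*(k:ℂ) - (k+1:ℂ)*β‖ := norm_sub_norm_le _ _
    rw [norm_sub_rev] at h'
    have e3 : ‖(2*(k:ℂ))‖ = 2*(k:ℝ) := by
      rw [norm_mul]; simp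
    have e4 : ‖(k+1:ℂ)*β‖ = ((k:ℝ)+1) * b := by
      rw [norm_mul]
      have : ‖(k+1:ℂ)‖ = (k:ℝ)+1 := by
        rw [show (k+1:ℂ) = ((k+1:ℕ):ℂ) by push_cast; ring]
        rw [Complex.norm_natCast]; push_cast; ring
      rw [this, hb_def]
    have e5 : ((k:ℝ)+1) * b ≤ (k:ℝ)+1 := by
      have := mul_le_mul_of_nonneg_left hb1.le (show (0:ℝ) ≤ (k:ℝ)+1 by linarith)
      linarith
    rw [e3, e4] at h'
    linarith
  have hDlow : (1/3) * ((k:ℝ) - 1)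
      ≤ ‖((k+1:ℂ) * β ^ k - 2*(k:ℂ)*β^(k-1))‖ := by
    rw [hfac, norm_mul, norm_pow]
    rw [← hb_def]
    have hknn : (0:ℝ) ≤ (k:ℝ) - 1 := by linarith
    calc (1/3) * ((k:ℝ) - 1) ≤ b^(k-1) * ‖((k+1:ℂ)*β - 2*(k:ℂ))‖ := by
          apply mul_le_mul hbk1 habs2 hknn (by positivity)
      _ = b^(k-1) * ‖((k+1:ℂ)*β - 2*(k:ℂ))‖ := rfl
  -- combine
  have hquad : (1/3) * ((k:ℝ) - 1) * ‖(α - β)‖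
      ≤ 4*(k:ℝ)^2 * ‖(α - β)‖^2 := by
    calc (1/3) * ((k:ℝ) - 1) * ‖(α - β)‖
        ≤ ‖((k+1:ℂ) * β ^ k - 2*(k:ℂ)*β^(k-1))‖ * ‖(α - β)‖ :=
          mul_le_mul_of_nonneg_right hDlow hdpos.le
      _ = ‖(((k+1:ℂ) * β ^ k - 2*(k:ℂ)*β^(k-1)) * (α - β))‖ := (norm_mul _ _).symm
      _ ≤ (((k:ℝ)+1)^2 + 2*(k:ℝ)^2) * ‖(α - β)‖^2 := hDle
      _ ≤ 4*(k:ℝ)^2 * ‖(α - β)‖^2 := by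
          apply mul_le_mul_of_nonneg_right (ar8 hk4) (by positivity)
  have hdlow : 1 ≤ 16*(k:ℝ)*‖(α - β)‖ := by
    apply ar9 hk4
    have h12 : 12*(k:ℝ)^2 * ‖(α - β)‖
        = (4*(k:ℝ)^2 * ‖(α - β)‖^2) * (3 / ‖(α - β)‖) := by
      field_simp
      ring
    rw [h12]
    have := mul_le_mul_of_nonneg_right hquad (show (0:ℝ) ≤ 3 / ‖(α - β)‖ by positivity)
    calc (k:ℝ) - 1 = (1/3) * ((k:ℝ)-1) * ‖(α - β)‖ * (3 / ‖(α - β)‖) := by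
          field_simp
      _ ≤ _ := this
  -- final contradiction
  have h16k : (0:ℝ) < 16*(k:ℝ) := by linarith
  have hdlow2 : 1/(16*(k:ℝ)) ≤ ‖(α - β)‖ := by
    rw [div_le_iff₀ h16k]
    linarith [hdlow]
  have hfin1 : (1/(16*(k:ℝ)))^2 ≤ 85 * ((k:ℝ) * ε) :=
    le_trans (pow_le_pow_left₀ (by positivity) hdlow2 2) hupper
  have hfin2 : 85 * ((k:ℝ)*ε) ≤ 85 * (1/(30000*(k:ℝ)^2)) := by linarith [hkεsmall]
  have hfin3 : (1/(16*(k:ℝ)))^2 = 1/(256*(k:ℝ)^2) := by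
    rw [div_pow, show (16*(k:ℝ))^2 = 256*(k:ℝ)^2 by ring]
    norm_num
  rw [hfin3] at hfin1
  have hfin4 : 1/(256*(k:ℝ)^2) ≤ 85/(30000*(k:ℝ)^2) := by
    rw [mul_one_div] at hfin2
    linarith
  rw [div_le_div_iff₀ (by positivity) (by positivity)] at hfin4
  have h16' : (16:ℝ) ≤ (k:ℝ)^2 := by
    have h'' : (4:ℝ)*4 ≤ (k:ℝ)*(k:ℝ) := mul_le_mul hk4 hk4 (by norm_num) (by linarith)
    calc (16:ℝ) = 4*4 := by norm_num
      _ ≤ (k:ℝ)*(k:ℝ) := h''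
      _ = (k:ℝ)^2 := (sq (k:ℝ)).symm
  linarith [hfin4, h16']

/-- For every integer `k ≥ 4` and any two roots `α, β` of `f_k` with `|β| < |α| < 1`,
one has `|α|/|β| > 1 + 1/(10 · k^(9.6) · (π/e)^k)`. -/
theorem fibPoly_abs_root_ratio (k : ℕ) (hk : 4 ≤ k) (α β : ℂ)
    (hα : (fibPoly k).IsRoot α) (hβ : (fibPoly k).IsRoot β)
    (h1 : ‖β‖ < ‖α‖) (h2 : ‖α‖ < 1) :
    ‖α‖ / ‖β‖ >
      1 + 1 / (10 * (k : ℝ) ^ (9.6 : ℝ) * (π / Real.exp 1) ^ k) := by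
  set ε : ℝ := 1 / (10 * (k : ℝ) ^ (9.6 : ℝ) * (π / Real.exp 1) ^ k) with hεdef
  have hk4 : (4:ℝ) ≤ (k:ℝ) := by exact_mod_cast hk
  have hkpos : (0:ℝ) < (k:ℝ) := by linarith
  -- root equations
  have hαe : α ^ (k+1) - 2 * α ^ k + 1 = 0 := by
    have h := hα
    simp only [fibPoly, IsRoot, eval_sub, eval_pow, eval_X, eval_finset_sum] at h
    have hg : (∑ i ∈ Finset.range k, α ^ i) * (α - 1) = α ^ k - 1 := geom_sum_mul α k
    linear_combination (α - 1) * h + hg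
  have hβe : β ^ (k+1) - 2 * β ^ k + 1 = 0 := by
    have h := hβ
    simp only [fibPoly, IsRoot, eval_sub, eval_pow, eval_X, eval_finset_sum] at h
    have hg : (∑ i ∈ Finset.range k, β ^ i) * (β - 1) = β ^ k - 1 := geom_sum_mul β k
    linear_combination (β - 1) * h + hg
  have hβ0 : β ≠ 0 := by
    intro h'
    rw [h', zero_pow (by omega : k + 1 ≠ 0), zero_pow (by omega : k ≠ 0)] at hβe
    norm_num at hβe
  -- ε bounds
  have hπe : 1 ≤ π / Real.exp 1 := by
    rw [le_div_iff₀ (Real.exp_pos 1)]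
    have ha : Real.exp 1 < 2.7182818286 := Real.exp_one_lt_d9
    have hb : (3.141592:ℝ) < π := Real.pi_gt_d6
    linarith
  have hπek : 1 ≤ (π / Real.exp 1) ^ k := one_le_pow₀ hπe
  have hkr1 : (1:ℝ) ≤ (k:ℝ) := by linarith
  have hr96 : (k:ℝ)^(9:ℝ) ≤ (k:ℝ)^(9.6:ℝ) :=
    Real.rpow_le_rpow_of_exponent_le hkr1 (by norm_num)
  have hr9 : (k:ℝ)^(9:ℝ) = (k:ℝ)^(9:ℕ) := by
    rw [show (9:ℝ) = ((9:ℕ):ℝ) by norm_num, Real.rpow_natCast]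
  have hk9 : 3000 * (k:ℝ)^3 ≤ (k:ℝ)^(9:ℕ) := by
    have h6 : (4:ℝ)^6 ≤ (k:ℝ)^6 := pow_le_pow_left₀ (by norm_num) hk4 6
    have h3 : (0:ℝ) ≤ (k:ℝ)^3 := by positivity
    calc 3000*(k:ℝ)^3 ≤ 4096 * (k:ℝ)^3 := by linarith
      _ = (4:ℝ)^6 * (k:ℝ)^3 := by norm_num
      _ ≤ (k:ℝ)^6 * (k:ℝ)^3 := mul_le_mul_of_nonneg_right h6 h3
      _ = (k:ℝ)^(9:ℕ) := by ring
  have hA : 3000*(k:ℝ)^3 ≤ (k:ℝ)^(9.6:ℝ) := by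
    rw [← hr9] at hk9; linarith
  have hden : 30000 * (k:ℝ)^3 ≤ 10 * (k:ℝ)^(9.6:ℝ) * (π / Real.exp 1)^k := by
    calc 30000*(k:ℝ)^3 = 10 * (3000*(k:ℝ)^3) * 1 := by ring
      _ ≤ 10 * (k:ℝ)^(9.6:ℝ) * (π/Real.exp 1)^k := by
        apply mul_le_mul _ hπek (by norm_num) _
        · apply mul_le_mul_of_nonneg_left hA (by norm_num)
        · positivity
  have hεle : ε ≤ 1/(30000*(k:ℝ)^3) := by
    rw [hεdef]
    apply one_div_le_one_div_of_le (by positivity) hden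
  have hε0 : (0:ℝ) ≤ ε := by rw [hεdef]; positivity
  -- contradiction setup
  by_contra hcon
  push_neg at hcon
  have hβpos : 0 < ‖β‖ := norm_pos_iff.mpr hβ0
  have hcon' : ‖α‖ ≤ (1 + ε) * ‖β‖ := by
    rw [div_le_iff₀ hβpos] at hcon
    exact hcon
  -- conjugation to ensure nonnegative imaginary parts
  have hconj : ∀ z : ℂ, z ^ (k+1) - 2*z^k + 1 = 0 →
      ((starRingEnd ℂ) z) ^ (k+1) - 2*((starRingEnd ℂ) z)^k + 1 = 0 := by
    intro z hz
    have h' := congrArg (starRingEnd ℂ) hz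
    simpa [map_sub, map_add, map_pow, map_mul, map_one, map_zero, Complex.conj_ofNat] using h'
  set α' : ℂ := if 0 ≤ α.im then α else (starRingEnd ℂ) α with hα'def
  set β' : ℂ := if 0 ≤ β.im then β else (starRingEnd ℂ) β with hβ'def
  have hα'eq : α' ^ (k+1) - 2*α'^k + 1 = 0 := by
    by_cases h : 0 ≤ α.im
    · rw [hα'def, if_pos h]; exact hαe
    · rw [hα'def, if_neg h]; exact hconj α hαe
  have hβ'eq : β' ^ (k+1) - 2*β'^k + 1 = 0 := by
    by_cases h : 0 ≤ β.im
    · rw [hβ'def, if_pos h]; exact hβe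
    · rw [hβ'def, if_neg h]; exact hconj β hβe
  have hα'abs : ‖α'‖ = ‖α‖ := by
    by_cases h : 0 ≤ α.im
    · rw [hα'def, if_pos h]
    · rw [hα'def, if_neg h, Complex.norm_conj]
  have hβ'abs : ‖β'‖ = ‖β‖ := by
    by_cases h : 0 ≤ β.im
    · rw [hβ'def, if_pos h]
    · rw [hβ'def, if_neg h, Complex.norm_conj]
  have hα'im : 0 ≤ α'.im := by
    by_cases h : 0 ≤ α.im
    · rw [hα'def, if_pos h]; exact h
    · rw [hα'def, if_neg h, Complex.conj_im]; push_neg at h; linarith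
  have hβ'im : 0 ≤ β'.im := by
    by_cases h : 0 ≤ β.im
    · rw [hβ'def, if_pos h]; exact h
    · rw [hβ'def, if_neg h, Complex.conj_im]; push_neg at h; linarith
  exact key k hk α' β' hα'eq hβ'eq
    (by rw [hα'abs, hβ'abs]; exact h1)
    (by rw [hα'abs]; exact h2) hα'im hβ'im ε hε0 hεle
    (by rw [hα'abs, hβ'abs]; exact hcon')
end

section
/- For every integer k ≥ 4 and any two distinct roots α, β of the k-generalized Fibonacci polynomial f_k in ℂ, one has |α − β| > 1/(k^(6.6) · (π/e)^k). -/
open Polynomial Real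

open Finset

/-- From being a root, the sum form. -/
lemma fib_sum {k : ℕ} {z : ℂ} (h : (fibPoly k).IsRoot z) :
    z ^ k = ∑ i ∈ range k, z ^ i := by
  have h0 : eval z (fibPoly k) = 0 := h
  simp only [fibPoly, eval_sub, eval_pow, eval_X, eval_finset_sum] at h0
  exact sub_eq_zero.mp h0

/-- Key equation: `z^k (2 - z) = 1`. -/
lemma fib_key {k : ℕ} {z : ℂ} (h : (fibPoly k).IsRoot z) : z ^ k * (2 - z) = 1 := by
  have hS : z ^ k = ∑ i ∈ range k, z ^ i := fib_sum h
  have h1 : (∑ i ∈ range k, z ^ i) * (z - 1) = z ^ k - 1 := geom_sum_mul z k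
  linear_combination (1 - z) * hS - h1

/-- All roots have norm at most 2. -/
lemma fib_norm_le_two {k : ℕ} (hk : 1 ≤ k) {z : ℂ} (h : (fibPoly k).IsRoot z) :
    ‖z‖ ≤ 2 := by
  by_contra hgt
  push_neg at hgt
  set r := ‖z‖ with hr
  have hr0 : (0:ℝ) ≤ r := norm_nonneg z
  have hS : z ^ k = ∑ i ∈ range k, z ^ i := fib_sum h
  have h1 : r ^ k ≤ ∑ i ∈ range k, r ^ i := by
    calc r ^ k = ‖z ^ k‖ := (norm_pow z k).symm
    _ = ‖∑ i ∈ range k, z ^ i‖ := by rw [hS]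
    _ ≤ ∑ i ∈ range k, ‖z ^ i‖ := norm_sum_le _ _
    _ = ∑ i ∈ range k, r ^ i := by simp only [norm_pow, hr]
  have h2 : (∑ i ∈ range k, r ^ i) * (r - 1) = r ^ k - 1 := geom_sum_mul r k
  have h3 : (0:ℝ) ≤ ∑ i ∈ range k, r ^ i := by positivity
  have h4 : (∑ i ∈ range k, r ^ i) * 1 ≤ (∑ i ∈ range k, r ^ i) * (r - 1) := by
    apply mul_le_mul_of_nonneg_left _ h3
    linarith
  nlinarith

/-- `‖z‖^k * ‖2 - z‖ = 1` for roots. -/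
lemma fib_norm_key {k : ℕ} {z : ℂ} (h : (fibPoly k).IsRoot z) :
    ‖z‖ ^ k * ‖2 - z‖ = 1 := by
  have := fib_key h
  calc ‖z‖ ^ k * ‖2 - z‖ = ‖z ^ k * (2 - z)‖ := by rw [norm_mul, norm_pow]
  _ = 1 := by rw [this, norm_one]

/-- Roots have `‖z‖^k ≥ 1/4`. -/
lemma fib_pow_ge {k : ℕ} (hk : 1 ≤ k) {z : ℂ} (h : (fibPoly k).IsRoot z) :
    1 / 4 ≤ ‖z‖ ^ k := by
  have h2 : ‖z‖ ≤ 2 := fib_norm_le_two hk h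
  have hkey : ‖z‖ ^ k * ‖2 - z‖ = 1 := fib_norm_key h
  have h4 : ‖(2:ℂ) - z‖ ≤ 4 := by
    calc ‖(2:ℂ) - z‖ ≤ ‖(2:ℂ)‖ + ‖z‖ := norm_sub_le _ _
    _ ≤ 2 + 2 := by
        have : ‖(2:ℂ)‖ = 2 := by norm_num
        linarith
    _ = 4 := by norm_num
  have hp : (0:ℝ) ≤ ‖z‖ ^ k := by positivity
  nlinarith

/-- Roots have `‖z‖^(k-1) ≥ 1/4`. -/
lemma fib_pow_pred_ge {k : ℕ} (hk : 1 ≤ k) {z : ℂ} (h : (fibPoly k).IsRoot z) :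
    1 / 4 ≤ ‖z‖ ^ (k - 1) := by
  rcases le_or_gt ‖z‖ 1 with h1 | h1
  · have : ‖z‖ ^ k ≤ ‖z‖ ^ (k - 1) :=
      pow_le_pow_of_le_one (norm_nonneg z) h1 (by omega)
    have := fib_pow_ge hk h
    linarith
  · have : (1:ℝ) ≤ ‖z‖ ^ (k - 1) := one_le_pow₀ h1.le
    linarith

/-- `(3/2)^k > k+1` for `k ≥ 4`. -/
lemma aux_pow32 : ∀ k : ℕ, 4 ≤ k → (k : ℝ) + 1 < (3/2) ^ k := by
  intro k hk
  induction k with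
  | zero => omega
  | succ n ih =>
    rcases Nat.lt_or_ge n 4 with hn | hn
    · interval_cases n
      · omega
      · omega
      · omega
      · norm_num
    · have h := ih (by omega)
      have h32 : (0:ℝ) < (3/2:ℝ)^n := by positivity
      push_cast
      calc (n:ℝ) + 1 + 1 ≤ (3/2) * ((n:ℝ) + 1) := by
            have : (4:ℝ) ≤ n := by exact_mod_cast hn
            nlinarith
      _ < (3/2) * (3/2)^n := by nlinarith
      _ = (3/2)^(n+1) := by rw [pow_succ]; ring

/-- Real inequality: if `1 < r ≤ 2 - 1/(k+1)` then `r^k (2-r) > 1`. -/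
lemma aux_real {k : ℕ} (hk : 4 ≤ k) {r : ℝ} (h1 : 1 < r)
    (h2 : r ≤ 2 - 1/((k:ℝ)+1)) : 1 < r ^ k * (2 - r) := by
  have hk4 : (4:ℝ) ≤ k := by exact_mod_cast hk
  set t := r - 1 with ht
  have ht0 : 0 < t := by simp [ht]; linarith
  rcases le_or_gt t (1/2) with hc | hc
  · -- Bernoulli case
    have hb : 1 + (k:ℝ) * t ≤ (1 + t) ^ k := one_add_mul_le_pow (by linarith) k
    have hr : r = 1 + t := by simp [ht]
    have h2r : 2 - r = 1 - t := by simp [ht]; ring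
    have hpos : (0:ℝ) < 1 - t := by linarith
    have hktnn : 0 ≤ (k:ℝ)*t := by positivity
    have hkt : (k:ℝ)*t*t ≤ ((k:ℝ)*t)*(1/2) :=
      mul_le_mul_of_nonneg_left hc hktnn
    have e3 : 1*t ≤ ((k:ℝ)/2 - 1)*t := mul_le_mul_of_nonneg_right (by linarith) ht0.le
    calc (1:ℝ) < (1 + (k:ℝ)*t) * (1 - t) := by nlinarith [hkt, e3]
    _ ≤ (1+t)^k * (1-t) := by nlinarith [pow_pos (show (0:ℝ) < 1 + t by linarith) k]
    _ = r ^ k * (2 - r) := by rw [← hr, ← h2r]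
  · -- large-t case : r ≥ 3/2
    have hr32 : (3/2:ℝ) ≤ r := by simp [ht] at hc ⊢; linarith
    have hpk : ((k:ℝ)+1) < (3/2)^k := aux_pow32 k hk
    have hrk : (3/2:ℝ)^k ≤ r^k := pow_le_pow_left₀ (by norm_num) hr32 k
    have hk1 : (0:ℝ) < (k:ℝ)+1 := by linarith
    have h2r : 1/((k:ℝ)+1) ≤ 2 - r := by linarith
    have h2r0 : 0 < 1/((k:ℝ)+1) := by positivity
    calc (1:ℝ) = ((k:ℝ)+1) * (1/((k:ℝ)+1)) := by field_simp
    _ < (3/2)^k * (1/((k:ℝ)+1)) := by nlinarith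
    _ ≤ r^k * (2 - r) := by
        apply mul_le_mul hrk h2r (le_of_lt h2r0) (by positivity)

/-- Dichotomy: a root with norm `> 1` is within `(5/9)^k` of `2`. -/
lemma fib_dichotomy {k : ℕ} (hk : 4 ≤ k) {z : ℂ} (h : (fibPoly k).IsRoot z)
    (h1 : 1 < ‖z‖) : ‖(2:ℂ) - z‖ ≤ (5/9:ℝ) ^ k ∧ 2 - (5/9:ℝ)^k ≤ ‖z‖ := by
  set r := ‖z‖ with hr
  have hle2 : r ≤ 2 := fib_norm_le_two (by omega) h
  have hkey : r ^ k * ‖(2:ℂ) - z‖ = 1 := fib_norm_key h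
  have hlow : 2 - r ≤ ‖(2:ℂ) - z‖ := by
    have := norm_sub_norm_le (2:ℂ) z
    have h2 : ‖(2:ℂ)‖ = 2 := by norm_num
    rw [h2] at this
    exact this
  -- r^k (2-r) ≤ 1
  have hrk0 : (0:ℝ) < r ^ k := by positivity
  have hle1 : r ^ k * (2 - r) ≤ 1 := by
    calc r ^ k * (2 - r) ≤ r ^ k * ‖(2:ℂ) - z‖ :=
      mul_le_mul_of_nonneg_left hlow (le_of_lt hrk0)
    _ = 1 := hkey
  -- hence r > 2 - 1/(k+1) ≥ 9/5
  have hbig : 2 - 1/((k:ℝ)+1) < r := by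
    by_contra hcon
    push_neg at hcon
    exact absurd hle1 (not_le.mpr (aux_real hk h1 hcon))
  have hk4 : (4:ℝ) ≤ k := by exact_mod_cast hk
  have h95 : (9/5:ℝ) ≤ r := by
    have : 1/((k:ℝ)+1) ≤ 1/5 := by
      apply div_le_div_of_nonneg_left <;> linarith
    linarith
  -- now ‖2 - z‖ = r^{-k} ≤ (5/9)^k
  have hnorm : ‖(2:ℂ) - z‖ = 1 / r ^ k := by
    field_simp at hkey ⊢
    linarith [hkey]
  have hrpow : (9/5:ℝ)^k ≤ r^k := pow_le_pow_left₀ (by norm_num) h95 k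
  have h95pos : (0:ℝ) < (9/5:ℝ)^k := by positivity
  have hfin : ‖(2:ℂ) - z‖ ≤ (5/9:ℝ)^k := by
    rw [hnorm]
    have h59 : (5/9:ℝ)^k = 1 / (9/5:ℝ)^k := by
      rw [← one_div_pow]
      norm_num
    rw [h59]
    apply one_div_le_one_div_of_le h95pos hrpow
  refine ⟨hfin, ?_⟩
  have := norm_sub_norm_le z (2:ℂ) -- wrong direction? use: r ≥ 2 - ‖2 - z‖
  have h2 : ‖(2:ℂ)‖ = 2 := by norm_num
  have htri : ‖(2:ℂ)‖ - ‖(2:ℂ) - z‖ ≤ ‖(2:ℂ) - ((2:ℂ) - z)‖ := norm_sub_norm_le _ _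
  simp only [sub_sub_cancel, h2] at htri
  linarith

/-- `(k+1)(5/9)^k ≤ 1/2` for `k ≥ 4`. -/
lemma aux_59 : ∀ k : ℕ, 4 ≤ k → ((k:ℝ)+1) * (5/9:ℝ)^k ≤ 1/2 := by
  intro k hk
  induction k with
  | zero => omega
  | succ n ih =>
    rcases Nat.lt_or_ge n 4 with hn | hn
    · interval_cases n
      · omega
      · omega
      · omega
      · norm_num
    · have h := ih (by omega)
      have hp : (0:ℝ) ≤ (5/9:ℝ)^n := by positivity
      have hn4 : (4:ℝ) ≤ n := by exact_mod_cast hn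
      push_cast
      calc ((n:ℝ) + 1 + 1) * (5/9:ℝ)^(n+1) = (((n:ℝ)+2) * (5/9)) * (5/9:ℝ)^n := by
            rw [pow_succ]; ring
      _ ≤ ((n:ℝ)+1) * (5/9:ℝ)^n := by nlinarith
      _ ≤ 1/2 := h

/-- Bound on `‖α^i - β^i‖`. -/
lemma pow_sub_pow_bound {α β : ℂ} {M : ℝ} (hα : ‖α‖ ≤ M) (hβ : ‖β‖ ≤ M) (i : ℕ) :
    ‖α ^ i - β ^ i‖ ≤ ‖α - β‖ * (i * M ^ (i - 1)) := by
  have hM0 : 0 ≤ M := le_trans (norm_nonneg α) hα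
  rw [← geom_sum₂_mul α β i, norm_mul, mul_comm]
  apply mul_le_mul_of_nonneg_left _ (norm_nonneg _)
  calc ‖∑ j ∈ range i, α ^ j * β ^ (i - 1 - j)‖
      ≤ ∑ j ∈ range i, ‖α ^ j * β ^ (i-1-j)‖ := norm_sum_le _ _
  _ ≤ ∑ _j ∈ range i, M ^ (i-1) := by
      apply Finset.sum_le_sum
      intro j hj
      rw [norm_mul, norm_pow, norm_pow]
      calc ‖α‖^j * ‖β‖^(i-1-j) ≤ M^j * M^(i-1-j) := by
            apply mul_le_mul (pow_le_pow_left₀ (norm_nonneg _) hα j)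
              (pow_le_pow_left₀ (norm_nonneg _) hβ _) (by positivity) (by positivity)
      _ = M ^ (i-1) := by
            rw [← pow_add]
            congr 1
            have := Finset.mem_range.mp hj
            omega
  _ = i * M ^ (i-1) := by rw [Finset.sum_const, Finset.card_range, nsmul_eq_mul]

/-- Bound on the difference between the divided-difference sum and `n β^(n-1)`. -/
lemma S_bound {α β : ℂ} {M : ℝ} (hα : ‖α‖ ≤ M) (hβ : ‖β‖ ≤ M) (hM : 1 ≤ M) (n : ℕ) :
    ‖(∑ i ∈ range n, α ^ i * β ^ (n - 1 - i)) - n * β ^ (n-1)‖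
      ≤ ‖α - β‖ * ((n:ℝ)^2 * M ^ (n - 2)) := by
  have hM0 : (0:ℝ) ≤ M := by linarith
  have hrw : (n:ℂ) * β ^ (n-1) = ∑ _i ∈ range n, β ^ (n-1) := by
    rw [Finset.sum_const, Finset.card_range, nsmul_eq_mul]
  rw [hrw, ← Finset.sum_sub_distrib]
  calc ‖∑ i ∈ range n, (α^i * β^(n-1-i) - β^(n-1))‖
      ≤ ∑ i ∈ range n, ‖α^i * β^(n-1-i) - β^(n-1)‖ := norm_sum_le _ _
  _ ≤ ∑ _i ∈ range n, ‖α - β‖ * ((n:ℝ) * M^(n-2)) := by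
      apply Finset.sum_le_sum
      intro i hi
      have hin : i < n := Finset.mem_range.mp hi
      have hpow : β^i * β^(n-1-i) = β^(n-1) := by
        rw [← pow_add]; congr 1; omega
      have hsplit : α^i * β^(n-1-i) - β^(n-1) = (α^i - β^i) * β^(n-1-i) := by
        rw [sub_mul, hpow]
      rw [hsplit, norm_mul, norm_pow]
      rcases Nat.eq_zero_or_pos i with rfl | hipos
      · simp only [pow_zero, sub_self, norm_zero, zero_mul]
        positivity
      · calc ‖α^i - β^i‖ * ‖β‖^(n-1-i)
            ≤ (‖α-β‖ * (i * M^(i-1))) * M^(n-1-i) := by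
              apply mul_le_mul (pow_sub_pow_bound hα hβ i)
                (pow_le_pow_left₀ (norm_nonneg _) hβ _) (by positivity) (by positivity)
        _ = ‖α-β‖ * ((i:ℝ) * (M^(i-1) * M^(n-1-i))) := by ring
        _ = ‖α-β‖ * ((i:ℝ) * M^(n-2)) := by
              rw [← pow_add]
              congr 3
              omega
        _ ≤ ‖α-β‖ * ((n:ℝ) * M^(n-2)) := by
              apply mul_le_mul_of_nonneg_left _ (norm_nonneg _)
              apply mul_le_mul_of_nonneg_right _ (by positivity)
              exact_mod_cast hin.le
  _ = (n:ℝ) * (‖α-β‖ * ((n:ℝ) * M^(n-2))) := by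
      rw [Finset.sum_const, Finset.card_range, nsmul_eq_mul]
  _ = ‖α - β‖ * ((n:ℝ)^2 * M^(n-2)) := by ring

/-- Core derivative-style estimate. -/
lemma core_bound {k : ℕ} (hk : 4 ≤ k) {α β : ℂ}
    (hα : α ^ k * (2 - α) = 1) (hβ : β ^ k * (2 - β) = 1) (hne : α ≠ β)
    {M : ℝ} (hMα : ‖α‖ ≤ M) (hMβ : ‖β‖ ≤ M) (hM : 1 ≤ M) :
    ‖β‖ ^ (k-1) * ‖2 * (k:ℂ) - ((k:ℂ)+1) * β‖
      ≤ ‖α - β‖ * (4 * (k:ℝ)^2 * M ^ (k-1)) := by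
  have hsub : α - β ≠ 0 := sub_ne_zero.mpr hne
  set S1 : ℂ := ∑ i ∈ range k, α^i * β^(k-1-i) with hS1
  set S2 : ℂ := ∑ i ∈ range (k+1), α^i * β^(k+1-1-i) with hS2
  have hgk : S1 * (α - β) = α^k - β^k := geom_sum₂_mul α β k
  have hgk1 : S2 * (α - β) = α^(k+1) - β^(k+1) := geom_sum₂_mul α β (k+1)
  have hQ : 2 * S1 - S2 = 0 := by
    have hz : (2 * S1 - S2) * (α - β) = 0 := by
      have e : (2 * S1 - S2) * (α - β)
          = 2*(S1 * (α-β)) - S2 * (α-β) := by ring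
      rw [e, hgk, hgk1]
      linear_combination hα - hβ
    rcases mul_eq_zero.mp hz with h0 | h0
    · exact h0
    · exact absurd h0 hsub
  have hid : (2*(k:ℂ))*β^(k-1) - ((k:ℂ)+1)*β^k
      = 2*((k:ℂ)*β^(k-1) - S1) - (((k:ℂ)+1)*β^k - S2) + (2*S1 - S2) := by ring
  rw [hQ, add_zero] at hid
  have hb1 := S_bound hMα hMβ hM k
  have hb2 := S_bound hMα hMβ hM (k+1)
  rw [← hS1] at hb1
  rw [← hS2] at hb2
  have hk11 : k + 1 - 1 = k := by omega
  have hk12 : k + 1 - 2 = k - 1 := by omega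
  rw [hk11, hk12] at hb2
  have hfac : (2*(k:ℂ))*β^(k-1) - ((k:ℂ)+1)*β^k = β^(k-1) * (2*(k:ℂ) - ((k:ℂ)+1)*β) := by
    have hkk : β^k = β^(k-1) * β := by
      rw [← pow_succ]; congr 1; omega
    rw [hkk]; ring
  have hd0 : (0:ℝ) ≤ ‖α - β‖ := norm_nonneg _
  have hMM : M^(k-2) ≤ M^(k-1) := pow_le_pow_right₀ hM (by omega)
  have hkR : (4:ℝ) ≤ (k:ℝ) := by exact_mod_cast hk
  calc ‖β‖ ^ (k-1) * ‖2*(k:ℂ) - ((k:ℂ)+1)*β‖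
      = ‖(2*(k:ℂ))*β^(k-1) - ((k:ℂ)+1)*β^k‖ := by rw [hfac, norm_mul, norm_pow]
  _ = ‖2*((k:ℂ)*β^(k-1) - S1) - (((k:ℂ)+1)*β^k - S2)‖ := by rw [hid]
  _ ≤ ‖2*((k:ℂ)*β^(k-1) - S1)‖ + ‖((k:ℂ)+1)*β^k - S2‖ := norm_sub_le _ _
  _ = 2*‖S1 - (k:ℂ)*β^(k-1)‖ + ‖S2 - ((k:ℂ)+1)*β^k‖ := by
      rw [norm_mul, ← norm_neg ((k:ℂ)*β^(k-1) - S1), ← norm_neg (((k:ℂ)+1)*β^k - S2)]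
      simp only [neg_sub]
      norm_num
  _ ≤ 2*(‖α-β‖ * ((k:ℝ)^2 * M^(k-2))) + ‖α-β‖ * (((k:ℝ)+1)^2 * M^(k-1)) := by
      have hb2' : ‖S2 - ((k:ℂ)+1)*β^k‖ ≤ ‖α-β‖ * (((k:ℝ)+1)^2 * M^(k-1)) := by
        have : ((k+1:ℕ):ℂ) = (k:ℂ)+1 := by push_cast; ring
        rw [this] at hb2
        have h2 : (((k+1:ℕ)):ℝ)^2 = ((k:ℝ)+1)^2 := by push_cast; ring
        rw [h2] at hb2
        exact hb2
      linarith [hb1]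
  _ ≤ ‖α - β‖ * (4 * (k:ℝ)^2 * M ^ (k-1)) := by
      have p1 : ‖α-β‖ * ((k:ℝ)^2 * M^(k-2)) ≤ ‖α-β‖ * ((k:ℝ)^2 * M^(k-1)) :=
        mul_le_mul_of_nonneg_left (mul_le_mul_of_nonneg_left hMM (by positivity)) hd0
      have p2 : ‖α-β‖ * (((k:ℝ)+1)^2 * M^(k-1)) ≤ ‖α-β‖ * ((2*(k:ℝ)^2) * M^(k-1)) := by
        apply mul_le_mul_of_nonneg_left _ hd0
        apply mul_le_mul_of_nonneg_right _ (by positivity)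
        nlinarith
      nlinarith [p1, p2]

/-- Case A: both roots in the closed unit disk. -/
lemma caseA {k : ℕ} (hk : 4 ≤ k) {α β : ℂ}
    (hrα : (fibPoly k).IsRoot α) (hrβ : (fibPoly k).IsRoot β) (hne : α ≠ β)
    (h1 : ‖α‖ ≤ 1) (h2 : ‖β‖ ≤ 1) : 1/(8*(k:ℝ)^2) ≤ ‖α - β‖ := by
  have hkey := core_bound hk (fib_key hrα) (fib_key hrβ) hne h1 h2 le_rfl
  rw [one_pow] at hkey
  have hβ14 : 1/4 ≤ ‖β‖^(k-1) := fib_pow_pred_ge (by omega) hrβ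
  have hkR : (4:ℝ) ≤ (k:ℝ) := by exact_mod_cast hk
  have hlow : (k:ℝ) - 1 ≤ ‖2*(k:ℂ) - ((k:ℂ)+1)*β‖ := by
    have htri : ‖2*(k:ℂ)‖ - ‖((k:ℂ)+1)*β‖ ≤ ‖2*(k:ℂ) - ((k:ℂ)+1)*β‖ :=
      norm_sub_norm_le _ _
    have e1 : ‖2*(k:ℂ)‖ = 2*(k:ℝ) := by
      rw [norm_mul, Complex.norm_natCast]
      norm_num
    have e2 : ‖((k:ℂ)+1)*β‖ ≤ (k:ℝ)+1 := by
      rw [norm_mul]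
      have hcast : ‖(k:ℂ)+1‖ = (k:ℝ)+1 := by
        have hc : ((k:ℂ)+1) = ((k+1:ℕ):ℂ) := by push_cast; ring
        rw [hc, Complex.norm_natCast]; push_cast; ring
      rw [hcast]
      have hkpos : (0:ℝ) ≤ (k:ℝ)+1 := by linarith
      nlinarith [norm_nonneg β]
    linarith
  have hLHS : (3:ℝ)/4 ≤ ‖β‖^(k-1) * ‖2*(k:ℂ) - ((k:ℂ)+1)*β‖ := by
    have := mul_le_mul hβ14 (show (3:ℝ) ≤ ‖2*(k:ℂ) - ((k:ℂ)+1)*β‖ by linarith)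
      (by norm_num) (by positivity)
    linarith
  rw [div_le_iff₀ (by positivity : (0:ℝ) < 8*(k:ℝ)^2)]
  nlinarith [hkey, norm_nonneg (α - β)]

/-- Case C: both roots close to 2. -/
lemma caseC {k : ℕ} (hk : 4 ≤ k) {α β : ℂ}
    (hrα : (fibPoly k).IsRoot α) (hrβ : (fibPoly k).IsRoot β) (hne : α ≠ β)
    (h2 : ‖(2:ℂ) - β‖ ≤ (5/9:ℝ)^k) :
    1/(8*(k:ℝ)^2) ≤ ‖α - β‖ := by
  set δ := (5/9:ℝ)^k with hδdef
  have hδpos : 0 < δ := by positivity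
  have hδ12 : ((k:ℝ)+1)*δ ≤ 1/2 := aux_59 k hk
  have hkR : (4:ℝ) ≤ (k:ℝ) := by exact_mod_cast hk
  have hδ1 : δ ≤ 1 := by nlinarith
  have hαle : ‖α‖ ≤ 2 := fib_norm_le_two (by omega) hrα
  have hβle : ‖β‖ ≤ 2 := fib_norm_le_two (by omega) hrβ
  have hkey := core_bound hk (fib_key hrα) (fib_key hrβ) hne hαle hβle (by norm_num)
  have hβge : 2 - δ ≤ ‖β‖ := by
    have htri : ‖(2:ℂ)‖ - ‖(2:ℂ) - β‖ ≤ ‖(2:ℂ) - ((2:ℂ) - β)‖ := norm_sub_norm_le _ _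
    simp only [sub_sub_cancel] at htri
    have h2n : ‖(2:ℂ)‖ = 2 := by norm_num
    rw [h2n] at htri
    linarith
  have hlow : (3:ℝ)/2 ≤ ‖2*(k:ℂ) - ((k:ℂ)+1)*β‖ := by
    have hid : 2*(k:ℂ) - ((k:ℂ)+1)*β = -(2 - ((k:ℂ)+1)*((2:ℂ)-β)) := by ring
    rw [hid, norm_neg]
    have htri : ‖(2:ℂ)‖ - ‖((k:ℂ)+1)*((2:ℂ)-β)‖ ≤ ‖2 - ((k:ℂ)+1)*((2:ℂ)-β)‖ :=
      norm_sub_norm_le _ _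
    have h2n : ‖(2:ℂ)‖ = 2 := by norm_num
    have hkn : ‖((k:ℂ)+1)*((2:ℂ)-β)‖ ≤ 1/2 := by
      rw [norm_mul]
      have hcast : ‖(k:ℂ)+1‖ = (k:ℝ)+1 := by
        have hc : ((k:ℂ)+1) = ((k+1:ℕ):ℂ) := by push_cast; ring
        rw [hc, Complex.norm_natCast]; push_cast; ring
      rw [hcast]
      have : ((k:ℝ)+1) * ‖(2:ℂ)-β‖ ≤ ((k:ℝ)+1) * δ :=
        mul_le_mul_of_nonneg_left h2 (by linarith)
      linarith
    linarith
  have hpowge : (2-δ)^(k-1) ≤ ‖β‖^(k-1) :=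
    pow_le_pow_left₀ (by linarith) hβge _
  -- Bernoulli : (1 - δ/2)^(k-1) ≥ 3/4
  have hbern : (3:ℝ)/4 ≤ (1 - δ/2)^(k-1) := by
    have hb : 1 + (k-1:ℕ) * (-(δ/2)) ≤ (1 + (-(δ/2)))^(k-1) :=
      one_add_mul_le_pow (by linarith) (k-1)
    have hcast : ((k-1:ℕ):ℝ) = (k:ℝ) - 1 := by
      have : (1:ℕ) ≤ k := by omega
      push_cast [this]
      ring
    rw [hcast] at hb
    have : ((k:ℝ)-1) * (δ/2) ≤ 1/4 := by nlinarith
    have he : (1 + (-(δ/2)))^(k-1) = (1 - δ/2)^(k-1) := by ring_nf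
    rw [he] at hb
    linarith
  have hsplit : (2-δ)^(k-1) = 2^(k-1) * (1-δ/2)^(k-1) := by
    rw [← mul_pow]
    congr 1
    ring
  have h2pos : (0:ℝ) < 2^(k-1) := by positivity
  have hLHS : (3:ℝ)/2 * (2^(k-1) * (3/4)) ≤ ‖β‖^(k-1) * ‖2*(k:ℂ) - ((k:ℂ)+1)*β‖ := by
    have hp : 2^(k-1) * (3/4:ℝ) ≤ (2-δ)^(k-1) := by
      rw [hsplit]
      apply mul_le_mul_of_nonneg_left hbern (le_of_lt h2pos)
    have := mul_le_mul (le_trans hp hpowge) hlow (by norm_num) (by positivity)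
    linarith
  -- combine : (9/8) * 2^(k-1) ≤ d * (4 k^2 * 2^(k-1))
  have hcomb : (9/8:ℝ) * 2^(k-1) ≤ ‖α-β‖ * (4*(k:ℝ)^2) * 2^(k-1) := by
    have : ‖α-β‖ * (4*(k:ℝ)^2 * 2^(k-1)) = ‖α-β‖ * (4*(k:ℝ)^2) * 2^(k-1) := by ring
    rw [← this]
    calc (9/8:ℝ) * 2^(k-1) = 3/2 * (2^(k-1) * (3/4)) := by ring
    _ ≤ ‖β‖^(k-1) * ‖2*(k:ℂ) - ((k:ℂ)+1)*β‖ := hLHS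
    _ ≤ ‖α-β‖ * (4*(k:ℝ)^2 * 2^(k-1)) := hkey
  have hfin : (9/8:ℝ) ≤ ‖α-β‖ * (4*(k:ℝ)^2) :=
    le_of_mul_le_mul_right hcomb h2pos
  rw [div_le_iff₀ (by positivity : (0:ℝ) < 8*(k:ℝ)^2)]
  nlinarith [hfin, norm_nonneg (α-β)]

/-- For every integer `k ≥ 4` and any two distinct roots `α, β` of `f_k` in `ℂ`,
one has `|α − β| > 1/(k^(6.6) · (π/e)^k)`. -/
theorem fibPoly_root_separation (k : ℕ) (hk : 4 ≤ k) (α β : ℂ)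
    (hα : (fibPoly k).IsRoot α) (hβ : (fibPoly k).IsRoot β) (hne : α ≠ β) :
    ‖α - β‖ > 1 / ((k : ℝ) ^ (6.6 : ℝ) * (π / Real.exp 1) ^ k) := by
  rw [gt_iff_lt]
  have hkR : (4:ℝ) ≤ (k:ℝ) := by exact_mod_cast hk
  have hmain : 1/(8*(k:ℝ)^2) ≤ ‖α - β‖ := by
    rcases le_or_gt ‖β‖ 1 with h2 | h2
    · rcases le_or_gt ‖α‖ 1 with h1 | h1
      · exact caseA hk hα hβ hne h1 h2
      · -- α is the big root : apply caseC with roles swapped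
        have hd := (fib_dichotomy hk hα h1).1
        have := caseC hk hβ hα (Ne.symm hne) hd
        rwa [norm_sub_rev] at this
    · have hd := (fib_dichotomy hk hβ h2).1
      exact caseC hk hα hβ hne hd
  have hπ : 1 ≤ π / Real.exp 1 := by
    rw [le_div_iff₀ (Real.exp_pos 1)]
    have h1 := Real.exp_one_lt_d9
    have h2 := Real.pi_gt_d6
    linarith
  have hpge : (1:ℝ) ≤ (π/Real.exp 1)^k := one_le_pow₀ hπ
  have hk1 : (1:ℝ) ≤ (k:ℝ) := by linarith
  have hr6 : (k:ℝ)^(6:ℕ) ≤ (k:ℝ)^(6.6:ℝ) := by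
    rw [← Real.rpow_natCast (k:ℝ) 6]
    apply Real.rpow_le_rpow_of_exponent_le hk1
    norm_num
  have hrpos : (0:ℝ) < (k:ℝ)^(6.6:ℝ) := Real.rpow_pos_of_pos (by linarith) _
  have hbig : 8*(k:ℝ)^2 < (k:ℝ)^(6.6:ℝ) * (π/Real.exp 1)^k := by
    have h4 : (256:ℝ) ≤ (k:ℝ)^4 := by
      have := pow_le_pow_left₀ (by norm_num : (0:ℝ) ≤ 4) hkR 4
      norm_num at this
      linarith
    have h44 : (256:ℝ)*(k:ℝ)^2 ≤ (k:ℝ)^4*(k:ℝ)^2 :=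
      mul_le_mul_of_nonneg_right h4 (sq_nonneg _)
    have h6 : 8*(k:ℝ)^2 < (k:ℝ)^(6:ℕ) := by nlinarith
    calc 8*(k:ℝ)^2 < (k:ℝ)^(6:ℕ) := h6
    _ ≤ (k:ℝ)^(6.6:ℝ) := hr6
    _ = (k:ℝ)^(6.6:ℝ) * 1 := (mul_one _).symm
    _ ≤ (k:ℝ)^(6.6:ℝ) * (π/Real.exp 1)^k :=
        mul_le_mul_of_nonneg_left hpge (le_of_lt hrpos)
  calc 1/((k:ℝ)^(6.6:ℝ) * (π/Real.exp 1)^k) < 1/(8*(k:ℝ)^2) :=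
    one_div_lt_one_div_of_lt (by positivity) hbig
  _ ≤ ‖α - β‖ := hmain
end

section
/- For every integer k ≥ 100 and any two distinct roots α, β of the k-generalized Fibonacci polynomial f_k in ℂ, one has |α − β| > 1/(k^(3/2) · 3^(k/2)). -/
open Polynomial Real

namespace FibSepAux

/-- geometric sum bound -/
lemma abs_geom_sum_le (M : ℝ) (a b : ℂ) (ha : ‖a‖ ≤ M) (hb : ‖b‖ ≤ M)
    (n : ℕ) :
    ‖∑ i ∈ Finset.range n, b ^ i * a ^ (n - 1 - i)‖ ≤ n * M ^ (n - 1) := by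
  have hM0 : 0 ≤ M := le_trans (norm_nonneg a) ha
  calc ‖∑ i ∈ Finset.range n, b ^ i * a ^ (n - 1 - i)‖
      ≤ ∑ i ∈ Finset.range n, ‖b ^ i * a ^ (n - 1 - i)‖ :=
        norm_sum_le _ _
    _ ≤ ∑ _i ∈ Finset.range n, M ^ (n - 1) := by
        apply Finset.sum_le_sum
        intro i hi
        rw [norm_mul, norm_pow, norm_pow]
        have h1 : ‖b‖ ^ i ≤ M ^ i := pow_le_pow_left₀ (norm_nonneg b) hb i
        have h2 : ‖a‖ ^ (n - 1 - i) ≤ M ^ (n - 1 - i) :=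
          pow_le_pow_left₀ (norm_nonneg a) ha _
        calc ‖b‖ ^ i * ‖a‖ ^ (n - 1 - i)
            ≤ M ^ i * M ^ (n - 1 - i) := by
              exact mul_le_mul h1 h2 (pow_nonneg (norm_nonneg a) _) (pow_nonneg hM0 i)
          _ = M ^ (n - 1) := by
              rw [← pow_add]; congr 1
              have := Finset.mem_range.mp hi; omega
    _ = n * M ^ (n - 1) := by rw [Finset.sum_const, Finset.card_range, nsmul_eq_mul]

lemma abs_pow_sub_pow_le (M : ℝ) (a b : ℂ) (ha : ‖a‖ ≤ M) (hb : ‖b‖ ≤ M)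
    (n : ℕ) :
    ‖b ^ n - a ^ n‖ ≤ (n * M ^ (n - 1)) * ‖b - a‖ := by
  rw [← geom_sum₂_mul b a n, norm_mul]
  exact mul_le_mul_of_nonneg_right (abs_geom_sum_le M a b ha hb n) (norm_nonneg _)

/-- second-order Taylor bound -/
lemma taylor2 (M : ℝ) (hM : 1 ≤ M) (K : ℕ) (a b : ℂ) (ha : ‖a‖ ≤ M)
    (hb : ‖b‖ ≤ M) (n : ℕ) (hn : n ≤ K) :
    ‖b ^ n - a ^ n - (n : ℂ) * a ^ (n - 1) * (b - a)‖
      ≤ ‖b - a‖ ^ 2 * ((n : ℝ) ^ 2 * M ^ K) := by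
  have hM0 : (0 : ℝ) ≤ M := le_trans zero_le_one hM
  rcases Nat.eq_zero_or_pos n with rfl | hn1
  · simp
  have hsum : (n : ℂ) * a ^ (n - 1) = ∑ i ∈ Finset.range n, a ^ i * a ^ (n - 1 - i) := by
    rw [Finset.sum_congr rfl (fun i hi => ?_), Finset.sum_const, Finset.card_range,
      nsmul_eq_mul]
    rw [← pow_add]; congr 1
    have := Finset.mem_range.mp hi; omega
  have key : b ^ n - a ^ n - (n : ℂ) * a ^ (n - 1) * (b - a)
      = (∑ i ∈ Finset.range n, (b ^ i - a ^ i) * a ^ (n - 1 - i)) * (b - a) := by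
    rw [← geom_sum₂_mul b a n, hsum, ← sub_mul, ← Finset.sum_sub_distrib]
    congr 1
    exact Finset.sum_congr rfl (fun i _ => by ring)
  rw [key, norm_mul]
  have hbound : ‖∑ i ∈ Finset.range n, (b ^ i - a ^ i) * a ^ (n - 1 - i)‖
      ≤ (n : ℝ) ^ 2 * M ^ K * ‖b - a‖ := by
    calc ‖∑ i ∈ Finset.range n, (b ^ i - a ^ i) * a ^ (n - 1 - i)‖
        ≤ ∑ i ∈ Finset.range n, ‖(b ^ i - a ^ i) * a ^ (n - 1 - i)‖ :=
          norm_sum_le _ _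
      _ ≤ ∑ _i ∈ Finset.range n, (n : ℝ) * M ^ K * ‖b - a‖ := by
          apply Finset.sum_le_sum
          intro i hi
          have hin : i < n := Finset.mem_range.mp hi
          rw [norm_mul, norm_pow]
          have h1 : ‖b ^ i - a ^ i‖ ≤ (i * M ^ (i - 1)) * ‖b - a‖ :=
            abs_pow_sub_pow_le M a b ha hb i
          have h2 : ‖a‖ ^ (n - 1 - i) ≤ M ^ (n - 1 - i) :=
            pow_le_pow_left₀ (norm_nonneg a) ha _
          have h3 : M ^ (i - 1) * M ^ (n - 1 - i) ≤ M ^ K := by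
            rw [← pow_add]
            exact pow_le_pow_right₀ hM (by omega)
          have h4 : (i : ℝ) ≤ (n : ℝ) := by exact_mod_cast hin.le
          have hd0 : (0 : ℝ) ≤ ‖b - a‖ := norm_nonneg _
          calc ‖b ^ i - a ^ i‖ * ‖a‖ ^ (n - 1 - i)
              ≤ ((i * M ^ (i - 1)) * ‖b - a‖) * M ^ (n - 1 - i) := by
                apply mul_le_mul h1 h2 (pow_nonneg (norm_nonneg a) _)
                positivity
            _ = (i : ℝ) * (M ^ (i - 1) * M ^ (n - 1 - i)) * ‖b - a‖ := by ring
            _ ≤ (n : ℝ) * M ^ K * ‖b - a‖ := by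
                apply mul_le_mul_of_nonneg_right _ hd0
                apply mul_le_mul h4 h3 (by positivity) (by positivity)
      _ = (n : ℝ) * ((n : ℝ) * M ^ K * ‖b - a‖) := by
          rw [Finset.sum_const, Finset.card_range, nsmul_eq_mul]
      _ = (n : ℝ) ^ 2 * M ^ K * ‖b - a‖ := by ring
  calc ‖∑ i ∈ Finset.range n, (b ^ i - a ^ i) * a ^ (n - 1 - i)‖
        * ‖b - a‖
      ≤ ((n : ℝ) ^ 2 * M ^ K * ‖b - a‖) * ‖b - a‖ :=
        mul_le_mul_of_nonneg_right hbound (norm_nonneg _)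
    _ = ‖b - a‖ ^ 2 * ((n : ℝ) ^ 2 * M ^ K) := by ring

/-- derivative lower/upper separation lemma -/
lemma sep (m : ℕ) (α β : ℂ) (gα : α ^ (m + 2) - 2 * α ^ (m + 1) + 1 = 0)
    (gβ : β ^ (m + 2) - 2 * β ^ (m + 1) + 1 = 0) (hne : β ≠ α)
    (M P : ℝ) (hM : 1 ≤ M) (hαM : ‖α‖ ≤ M) (hβM : ‖β‖ ≤ M)
    (hP : M ^ (m + 2) ≤ P) :
    ‖((m : ℂ) + 2) * α ^ (m + 1) - 2 * ((m : ℂ) + 1) * α ^ m‖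
      ≤ ‖β - α‖ * (3 * ((m : ℝ) + 2) ^ 2 * P) := by
  have hM0 : (0 : ℝ) ≤ M := le_trans zero_le_one hM
  have hP0 : (0 : ℝ) ≤ P := le_trans (pow_nonneg hM0 _) hP
  have hT1 := taylor2 M hM (m + 2) α β hαM hβM (m + 2) le_rfl
  have hT2 := taylor2 M hM (m + 2) α β hαM hβM (m + 1) (by omega)
  have hMP : M ^ (m + 2) ≤ P := hP
  have hd : 0 < ‖β - α‖ :=
    norm_pos_iff.mpr (sub_ne_zero.mpr hne)
  have e1 : (m + 2 : ℕ) - 1 = m + 1 := by omega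
  have e2 : (m + 1 : ℕ) - 1 = m := by omega
  rw [e1] at hT1
  rw [e2] at hT2
  have key : (((m : ℂ) + 2) * α ^ (m + 1) - 2 * ((m : ℂ) + 1) * α ^ m) * (β - α)
      = 2 * (β ^ (m + 1) - α ^ (m + 1) - ((m : ℂ) + 1) * α ^ m * (β - α))
        - (β ^ (m + 2) - α ^ (m + 2) - ((m : ℂ) + 2) * α ^ (m + 1) * (β - α)) := by
    linear_combination gβ - gα
  have cast1 : ((m + 2 : ℕ) : ℂ) = (m : ℂ) + 2 := by push_cast; ring
  have cast2 : ((m + 1 : ℕ) : ℂ) = (m : ℂ) + 1 := by push_cast; ring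
  rw [cast1] at hT1
  rw [cast2] at hT2
  have habs : ‖(((m : ℂ) + 2) * α ^ (m + 1) - 2 * ((m : ℂ) + 1) * α ^ m) * (β - α)‖
      ≤ ‖β - α‖ ^ 2 * (3 * ((m : ℝ) + 2) ^ 2 * P) := by
    rw [key]
    calc ‖2 * (β ^ (m + 1) - α ^ (m + 1) - ((m : ℂ) + 1) * α ^ m * (β - α))
          - (β ^ (m + 2) - α ^ (m + 2) - ((m : ℂ) + 2) * α ^ (m + 1) * (β - α))‖
        ≤ ‖2 * (β ^ (m + 1) - α ^ (m + 1) - ((m : ℂ) + 1) * α ^ m * (β - α))‖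
          + ‖β ^ (m + 2) - α ^ (m + 2) - ((m : ℂ) + 2) * α ^ (m + 1) * (β - α)‖ :=
          norm_sub_le _ _
      _ ≤ 2 * (‖β - α‖ ^ 2 * (((m + 1 : ℕ) : ℝ) ^ 2 * M ^ (m + 2)))
          + ‖β - α‖ ^ 2 * (((m + 2 : ℕ) : ℝ) ^ 2 * M ^ (m + 2)) := by
          rw [norm_mul]
          have : ‖(2:ℂ)‖ = 2 := by
            simp
          rw [this]
          exact add_le_add (by nlinarith [hT2, norm_nonneg (β - α)]) hT1
      _ ≤ ‖β - α‖ ^ 2 * (3 * ((m : ℝ) + 2) ^ 2 * P) := by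
          have h1 : ((m + 1 : ℕ) : ℝ) = (m : ℝ) + 1 := by push_cast; ring
          have h2 : ((m + 2 : ℕ) : ℝ) = (m : ℝ) + 2 := by push_cast; ring
          rw [h1, h2]
          have hm0 : (0 : ℝ) ≤ (m : ℝ) := Nat.cast_nonneg m
          have hsq : (0:ℝ) ≤ ‖β - α‖ ^ 2 := by positivity
          have hA : 2 * ((m:ℝ)+1)^2 + ((m:ℝ)+2)^2 ≤ 3 * ((m:ℝ)+2)^2 := by nlinarith
          have hB : (2 * ((m:ℝ)+1)^2 + ((m:ℝ)+2)^2) * M ^ (m+2) ≤ 3 * ((m:ℝ)+2)^2 * P :=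
            mul_le_mul hA hP (by positivity) (by positivity)
          have hC : 2 * (((m:ℝ)+1)^2 * M ^ (m+2)) + ((m:ℝ)+2)^2 * M ^ (m+2)
              ≤ 3 * ((m:ℝ)+2)^2 * P := by
            calc 2 * (((m:ℝ)+1)^2 * M ^ (m+2)) + ((m:ℝ)+2)^2 * M ^ (m+2)
                = (2 * ((m:ℝ)+1)^2 + ((m:ℝ)+2)^2) * M ^ (m+2) := by ring
              _ ≤ 3 * ((m:ℝ)+2)^2 * P := hB
          calc 2 * (‖β - α‖ ^ 2 * (((m:ℝ)+1) ^ 2 * M ^ (m + 2)))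
                + ‖β - α‖ ^ 2 * (((m:ℝ)+2) ^ 2 * M ^ (m + 2))
              = ‖β - α‖ ^ 2
                * (2 * (((m:ℝ)+1)^2 * M ^ (m+2)) + ((m:ℝ)+2)^2 * M ^ (m+2)) := by ring
            _ ≤ ‖β - α‖ ^ 2 * (3 * ((m : ℝ) + 2) ^ 2 * P) :=
                mul_le_mul_of_nonneg_left hC hsq
  rw [norm_mul] at habs
  have hfin : ‖((m : ℂ) + 2) * α ^ (m + 1) - 2 * ((m : ℂ) + 1) * α ^ m‖
      ≤ ‖β - α‖ * (3 * ((m : ℝ) + 2) ^ 2 * P) := by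
    have h := habs
    rw [pow_two] at h
    have h' : ‖((m : ℂ) + 2) * α ^ (m + 1) - 2 * ((m : ℂ) + 1) * α ^ m‖
        * ‖β - α‖
        ≤ (‖β - α‖ * (3 * ((m : ℝ) + 2) ^ 2 * P)) * ‖β - α‖ := by
      calc ‖((m : ℂ) + 2) * α ^ (m + 1) - 2 * ((m : ℂ) + 1) * α ^ m‖
            * ‖β - α‖
          ≤ ‖β - α‖ * ‖β - α‖ * (3 * ((m : ℝ) + 2) ^ 2 * P) := h
        _ = (‖β - α‖ * (3 * ((m : ℝ) + 2) ^ 2 * P)) * ‖β - α‖ := by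
            ring
    exact le_of_mul_le_mul_right h' hd
  exact hfin

lemma nat_le_pow (n : ℕ) : (n : ℝ) ≤ 2 * (9 / 5) ^ n := by
  induction n with
  | zero => norm_num
  | succ n ih =>
    rcases Nat.lt_or_ge n 2 with h | h
    · interval_cases n <;> norm_num
    · have h1 : (2 : ℝ) ≤ n := by exact_mod_cast h
      have h2 : (0 : ℝ) ≤ (9 / 5 : ℝ) ^ n := by positivity
      push_cast
      rw [pow_succ]
      nlinarith

end FibSepAux

open FibSepAux in
set_option maxHeartbeats 2000000 in
/-- For every integer `k ≥ 100` and any two distinct roots `α, β` of `f_k` in `ℂ`,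
one has `|α − β| > 1/(k^(3/2) · 3^(k/2))`. -/
theorem fibPoly_root_separation_weak (k : ℕ) (hk : 100 ≤ k) (α β : ℂ)
    (hα : (fibPoly k).IsRoot α) (hβ : (fibPoly k).IsRoot β) (hne : α ≠ β) :
    ‖α - β‖ > 1 / ((k : ℝ) ^ ((3 : ℝ) / 2) * (3 : ℝ) ^ ((k : ℝ) / 2)) := by
  obtain ⟨m, rfl⟩ : ∃ m, k = m + 1 := ⟨k - 1, by omega⟩
  have hm : 99 ≤ m := by omega
  have hmr : (99 : ℝ) ≤ (m : ℝ) := by exact_mod_cast hm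
  -- root equations
  have eqα : α ^ (m + 1) - ∑ i ∈ Finset.range (m + 1), α ^ i = 0 := by
    simpa [fibPoly, Polynomial.IsRoot] using hα
  have eqβ : β ^ (m + 1) - ∑ i ∈ Finset.range (m + 1), β ^ i = 0 := by
    simpa [fibPoly, Polynomial.IsRoot] using hβ
  have gα : α ^ (m + 2) - 2 * α ^ (m + 1) + 1 = 0 := by
    have hs := geom_sum_mul α (m + 1)
    linear_combination (α - 1) * eqα + hs
  have gβ : β ^ (m + 2) - 2 * β ^ (m + 1) + 1 = 0 := by
    have hs := geom_sum_mul β (m + 1)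
    linear_combination (β - 1) * eqβ + hs
  have h2α : α ^ (m + 1) * (2 - α) = 1 := by linear_combination -gα
  have h2β : β ^ (m + 1) * (2 - β) = 1 := by linear_combination -gβ
  -- all roots have modulus < 2
  have hlt2 : ∀ z : ℂ, z ^ (m + 1) - ∑ i ∈ Finset.range (m + 1), z ^ i = 0 →
      ‖z‖ < 2 := by
    intro z hz
    by_contra hcon
    push_neg at hcon
    set r := ‖z‖ with hr
    have hsum : r ^ (m + 1) ≤ ∑ i ∈ Finset.range (m + 1), r ^ i := by
      have hzz : z ^ (m + 1) = ∑ i ∈ Finset.range (m + 1), z ^ i := by linear_combination hz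
      calc r ^ (m + 1) = ‖z ^ (m + 1)‖ := by rw [norm_pow]
        _ = ‖∑ i ∈ Finset.range (m + 1), z ^ i‖ := by rw [hzz]
        _ ≤ ∑ i ∈ Finset.range (m + 1), ‖z ^ i‖ := norm_sum_le _ _
        _ = ∑ i ∈ Finset.range (m + 1), r ^ i := by
            exact Finset.sum_congr rfl fun i _ => norm_pow _ _
    have hgs : (∑ i ∈ Finset.range (m + 1), r ^ i) * (r - 1) = r ^ (m + 1) - 1 :=
      geom_sum_mul r (m + 1)
    have hS0 : (0 : ℝ) ≤ ∑ i ∈ Finset.range (m + 1), r ^ i :=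
      Finset.sum_nonneg fun i _ => pow_nonneg (norm_nonneg z) i
    nlinarith [mul_nonneg hS0 (by linarith : (0:ℝ) ≤ r - 2)]
  have hα2 : ‖α‖ < 2 := hlt2 α eqα
  have hβ2 : ‖β‖ < 2 := hlt2 β eqβ
  -- facts about roots of small modulus
  have hsmall : ∀ z : ℂ, z ^ (m + 1) * (2 - z) = 1 → ‖z‖ ≤ 19 / 10 →
      ‖z‖ ≤ 11 / 10 ∧ 1 / 4 ≤ ‖z‖ ^ (m + 1) ∧
        ‖z‖ ^ (m + 1) ≤ 10 := by
    intro z h2 hz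
    have aZ : ‖z‖ ^ (m + 1) * ‖2 - z‖ = 1 := by
      have := congrArg Norm.norm h2
      rwa [norm_mul, norm_pow, norm_one] at this
    have hz0 : (0 : ℝ) ≤ ‖z‖ := norm_nonneg z
    have hp0 : (0 : ℝ) ≤ ‖z‖ ^ (m + 1) := pow_nonneg hz0 _
    have h2z_le : ‖2 - z‖ ≤ 2 + ‖z‖ := by
      calc ‖2 - z‖ ≤ ‖(2:ℂ)‖ + ‖z‖ := norm_sub_le 2 z
        _ = 2 + ‖z‖ := by rw [Complex.norm_two]
    have h2z_ge : 2 - ‖z‖ ≤ ‖2 - z‖ := by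
      have := norm_sub_norm_le 2 z
      rwa [Complex.norm_two] at this
    have hz10 : ‖z‖ ^ (m + 1) ≤ 10 := by nlinarith
    refine ⟨?_, ?_, hz10⟩
    · by_contra hgt
      push_neg at hgt
      have hle1 : (11 / 10 : ℝ) ^ (m + 1) ≤ ‖z‖ ^ (m + 1) :=
        pow_le_pow_left₀ (by norm_num) hgt.le _
      have hle2 : (11 / 10 : ℝ) ^ 100 ≤ (11 / 10 : ℝ) ^ (m + 1) :=
        pow_le_pow_right₀ (by norm_num) (by omega)
      have : (10 : ℝ) < (11 / 10 : ℝ) ^ 100 := by norm_num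
      linarith
    · nlinarith
  -- reduce the target
  have hden2 : (0 : ℝ) < ((m + 1 : ℕ) : ℝ) * (3 : ℝ) ^ (50 : ℕ) := by positivity
  have hred : 1 / (((m + 1 : ℕ) : ℝ) ^ ((3 : ℝ) / 2) * (3 : ℝ) ^ (((m + 1 : ℕ) : ℝ) / 2))
      ≤ 1 / (((m + 1 : ℕ) : ℝ) * (3 : ℝ) ^ (50 : ℕ)) := by
    have hx : (100 : ℝ) ≤ ((m + 1 : ℕ) : ℝ) := by exact_mod_cast hk
    have h1 : ((m + 1 : ℕ) : ℝ) ≤ ((m + 1 : ℕ) : ℝ) ^ ((3 : ℝ) / 2) := by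
      nth_rewrite 1 [← Real.rpow_one ((m + 1 : ℕ) : ℝ)]
      exact Real.rpow_le_rpow_of_exponent_le (by linarith) (by norm_num)
    have h2 : (3 : ℝ) ^ (50 : ℕ) ≤ (3 : ℝ) ^ (((m + 1 : ℕ) : ℝ) / 2) := by
      rw [← Real.rpow_natCast 3 50]
      exact Real.rpow_le_rpow_of_exponent_le (by norm_num) (by push_cast; linarith)
    apply one_div_le_one_div_of_le hden2
    exact mul_le_mul h1 h2 (by positivity) (by positivity)
  refine lt_of_le_of_lt hred ?_
  have hcast : ((m + 1 : ℕ) : ℝ) = (m : ℝ) + 1 := by push_cast; ring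
  rw [hcast]
  have h9 : (1000000 : ℝ) ≤ (3 : ℝ) ^ (50 : ℕ) := by norm_num
  set t : ℝ := (3 : ℝ) ^ (50 : ℕ) with hteq
  have ht0 : (0 : ℝ) < t := by linarith
  -- main case analysis
  have hDab : 0 < ‖α - β‖ := norm_pos_iff.mpr (sub_ne_zero.mpr hne)
  rcases le_or_gt (‖α‖) (19 / 10) with hA | hA <;>
    rcases le_or_gt (‖β‖) (19 / 10) with hB | hB
  · -- both small
    obtain ⟨haα, hpα, hqα⟩ := hsmall α h2α hA
    obtain ⟨haβ, hpβ, hqβ⟩ := hsmall β h2β hB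
    set M : ℝ := max 1 (max (‖α‖) (‖β‖)) with hMdef
    have hM1 : (1 : ℝ) ≤ M := le_max_left _ _
    have hM0 : (0 : ℝ) ≤ M := by linarith
    have hαM : ‖α‖ ≤ M := le_trans (le_max_left _ _) (le_max_right _ _)
    have hβM : ‖β‖ ≤ M := le_trans (le_max_right _ _) (le_max_right _ _)
    have hM11 : M ≤ 11 / 10 := max_le (by norm_num) (max_le haα haβ)
    have hMk : M ^ (m + 1) ≤ 10 := by
      rcases max_choice 1 (max (‖α‖) (‖β‖)) with h | h
      · rw [hMdef, h]; norm_num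
      · rw [hMdef, h]
        rcases max_choice (‖α‖) (‖β‖) with h' | h' <;> rw [h']
        · exact hqα
        · exact hqβ
    have hP : M ^ (m + 2) ≤ 11 := by
      have : M ^ (m + 2) = M ^ (m + 1) * M := by rw [pow_succ]
      rw [this]
      calc M ^ (m + 1) * M ≤ 10 * (11 / 10) := mul_le_mul hMk hM11 hM0 (by norm_num)
        _ = 11 := by norm_num
    have hsep := sep m α β gα gβ (Ne.symm hne) M 11 hM1 hαM hβM hP
    -- lower bound on the derivative-like quantity
    have hfac : ((m : ℂ) + 2) * α ^ (m + 1) - 2 * ((m : ℂ) + 1) * α ^ m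
        = α ^ m * (((m : ℂ) + 2) * α - 2 * ((m : ℂ) + 1)) := by ring
    have c1 : ‖2 * ((m : ℂ) + 1)‖ = 2 * ((m : ℝ) + 1) := by
      have h' : (2 * ((m : ℂ) + 1)) = (((2 * (m : ℝ) + 2) : ℝ) : ℂ) := by push_cast; ring
      rw [h', Complex.norm_real, Real.norm_of_nonneg (by positivity)]
      ring
    have c2 : ‖(m : ℂ) + 2‖ = (m : ℝ) + 2 := by
      have h' : ((m : ℂ) + 2) = ((((m : ℝ) + 2) : ℝ) : ℂ) := by push_cast; ring
      rw [h', Complex.norm_real, Real.norm_of_nonneg (by positivity)]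
    have hF : (4 / 5) * ((m : ℝ) + 1)
        ≤ ‖((m : ℂ) + 2) * α - 2 * ((m : ℂ) + 1)‖ := by
      have ht : ‖2 * ((m : ℂ) + 1)‖ - ‖((m : ℂ) + 2) * α‖
          ≤ ‖2 * ((m : ℂ) + 1) - ((m : ℂ) + 2) * α‖ :=
        norm_sub_norm_le _ _
      rw [norm_sub_rev, c1] at ht
      rw [norm_mul, c2] at ht
      have hprod : ((m : ℝ) + 2) * ‖α‖ ≤ ((m : ℝ) + 2) * (11 / 10) :=
        mul_le_mul_of_nonneg_left haα (by positivity)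
      linarith
    have hα_m : (1 / 5 : ℝ) ≤ ‖α‖ ^ m := by
      have hps : ‖α‖ ^ (m + 1) = ‖α‖ ^ m * ‖α‖ := pow_succ _ _
      nlinarith [pow_nonneg (norm_nonneg α) m, norm_nonneg α]
    have hDg : (4 / 25) * ((m : ℝ) + 1)
        ≤ ‖((m : ℂ) + 2) * α ^ (m + 1) - 2 * ((m : ℂ) + 1) * α ^ m‖ := by
      rw [hfac, norm_mul, norm_pow]
      have := mul_le_mul hα_m hF (by positivity) (pow_nonneg (norm_nonneg α) m)
      linarith
    have hD : (4 / 25) * ((m : ℝ) + 1) ≤ ‖α - β‖ * (33 * ((m : ℝ) + 2) ^ 2) := by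
      have hba : ‖β - α‖ = ‖α - β‖ := norm_sub_rev β α
      calc (4 / 25) * ((m : ℝ) + 1)
          ≤ ‖β - α‖ * (3 * ((m : ℝ) + 2) ^ 2 * 11) := le_trans hDg hsep
        _ = ‖α - β‖ * (33 * ((m : ℝ) + 2) ^ 2) := by rw [hba]; ring
    have hstep : 1 / (((m : ℝ) + 1) * t)
        < (4 / 25) * ((m : ℝ) + 1) / (33 * ((m : ℝ) + 2) ^ 2) := by
      rw [div_lt_div_iff₀ (mul_pos (by linarith) ht0) (by positivity)]
      have hmm : ((m : ℝ) + 2) ^ 2 ≤ 4 * ((m : ℝ) + 1) ^ 2 := by nlinarith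
      have hq := mul_le_mul_of_nonneg_left h9 (sq_nonneg ((m : ℝ) + 1))
      nlinarith
    have hstep2 : (4 / 25) * ((m : ℝ) + 1) / (33 * ((m : ℝ) + 2) ^ 2)
        ≤ ‖α - β‖ := by
      rw [div_le_iff₀ (by positivity)]
      linarith
    exact hstep.trans_le hstep2
  · -- α small, β large
    obtain ⟨haα, _, _⟩ := hsmall α h2α hA
    have ht : ‖β‖ - ‖α‖ ≤ ‖β - α‖ := norm_sub_norm_le β α
    rw [norm_sub_rev] at ht
    have hx : (100 : ℝ) ≤ ((m : ℝ) + 1) * t := by nlinarith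
    have := one_div_le_one_div_of_le (by norm_num : (0:ℝ) < 100) hx
    calc 1 / (((m : ℝ) + 1) * t) ≤ 1 / 100 := this
      _ < ‖α - β‖ := by linarith
  · -- β small, α large
    obtain ⟨haβ, _, _⟩ := hsmall β h2β hB
    have ht : ‖α‖ - ‖β‖ ≤ ‖α - β‖ := norm_sub_norm_le α β
    have hx : (100 : ℝ) ≤ ((m : ℝ) + 1) * t := by nlinarith
    have := one_div_le_one_div_of_le (by norm_num : (0:ℝ) < 100) hx
    calc 1 / (((m : ℝ) + 1) * t) ≤ 1 / 100 := this
      _ < ‖α - β‖ := by linarith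
  · -- both large : impossible
    exfalso
    have hid : α ^ (m + 1) - β ^ (m + 1) = α ^ (m + 1) * β ^ (m + 1) * (α - β) := by
      linear_combination β ^ (m + 1) * h2α - α ^ (m + 1) * h2β
    have hup := abs_pow_sub_pow_le 2 β α hβ2.le hα2.le (m + 1)
    have habs : ‖α‖ ^ (m + 1) * ‖β‖ ^ (m + 1) * ‖α - β‖
        = ‖α ^ (m + 1) - β ^ (m + 1)‖ := by
      rw [hid, norm_mul, norm_mul, norm_pow, norm_pow]
    have e1 : (m + 1 : ℕ) - 1 = m := by omega
    rw [e1] at hup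
    have hcancel : ‖α‖ ^ (m + 1) * ‖β‖ ^ (m + 1)
        ≤ ((m + 1 : ℕ) : ℝ) * 2 ^ m := by
      have h' : ‖α‖ ^ (m + 1) * ‖β‖ ^ (m + 1) * ‖α - β‖
          ≤ (((m + 1 : ℕ) : ℝ) * 2 ^ m) * ‖α - β‖ := by
        rw [habs]; exact hup
      exact le_of_mul_le_mul_right h' hDab
    have hl1 : (19 / 10 : ℝ) ^ (m + 1) ≤ ‖α‖ ^ (m + 1) :=
      pow_le_pow_left₀ (by norm_num) hA.le _
    have hl2 : (19 / 10 : ℝ) ^ (m + 1) ≤ ‖β‖ ^ (m + 1) :=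
      pow_le_pow_left₀ (by norm_num) hB.le _
    have hlow : ((361 / 100 : ℝ)) ^ (m + 1)
        ≤ ‖α‖ ^ (m + 1) * ‖β‖ ^ (m + 1) := by
      have : ((361 / 100 : ℝ)) ^ (m + 1) = (19 / 10 : ℝ) ^ (m + 1) * (19 / 10 : ℝ) ^ (m + 1) := by
        rw [← mul_pow]; norm_num
      rw [this]
      exact mul_le_mul hl1 hl2 (by positivity) (pow_nonneg (norm_nonneg α) _)
    have hnat := nat_le_pow (m + 1)
    have hupp : ((m + 1 : ℕ) : ℝ) * 2 ^ m ≤ (360 / 100 : ℝ) ^ (m + 1) := by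
      have h2m : (0 : ℝ) ≤ (2 : ℝ) ^ m := by positivity
      have : ((m + 1 : ℕ) : ℝ) * 2 ^ m ≤ (2 * (9 / 5 : ℝ) ^ (m + 1)) * 2 ^ m :=
        mul_le_mul_of_nonneg_right hnat h2m
      calc ((m + 1 : ℕ) : ℝ) * 2 ^ m ≤ (2 * (9 / 5 : ℝ) ^ (m + 1)) * 2 ^ m := this
        _ = (9 / 5 : ℝ) ^ (m + 1) * 2 ^ (m + 1) := by rw [pow_succ]; ring
        _ = (360 / 100 : ℝ) ^ (m + 1) := by rw [← mul_pow]; norm_num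
    have hstrict : (360 / 100 : ℝ) ^ (m + 1) < (361 / 100 : ℝ) ^ (m + 1) :=
      pow_lt_pow_left₀ (by norm_num) (by norm_num) (by omega)
    linarith
end

section
/- For every integer k ≥ 2 and every root α of the k-generalized Fibonacci polynomial f_k with |α| < 1, one has 1 − (log 3)/k < |α| < 1 − 1/(2^8 · k^3). -/
open Polynomial Real

set_option maxHeartbeats 1000000 in
/-- For every integer `k ≥ 2` and every root `α` of `f_k` with `|α| < 1`, one has
`1 − (log 3)/k < |α| < 1 − 1/(2^8 · k^3)`. -/
theorem fibPoly_small_root_abs_bounds (k : ℕ) (hk : 2 ≤ k) (α : ℂ)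
    (hα : (fibPoly k).IsRoot α) (h1 : ‖α‖ < 1) :
    1 - Real.log 3 / k < ‖α‖ ∧
      ‖α‖ < 1 - 1 / (2 ^ 8 * (k : ℝ) ^ 3) := by
  set r := ‖α‖ with hrdef
  have hk2 : (2:ℝ) ≤ (k:ℝ) := by exact_mod_cast hk
  have hkpos : (0:ℝ) < k := by linarith
  have hr0 : 0 ≤ r := norm_nonneg α
  have hS : α ^ k = ∑ i ∈ Finset.range k, α ^ i := by
    have h := hα
    simp only [fibPoly, IsRoot, eval_sub, eval_pow, eval_X, eval_finset_sum] at h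
    exact sub_eq_zero.mp h
  have hkey : α ^ k * (2 - α) = 1 := by
    have hg := geom_sum_mul α k
    linear_combination (1 - α) * hS - hg
  have habs : r ^ k * ‖2 - α‖ = 1 := by
    rw [hrdef, ← norm_pow, ← norm_mul, hkey, norm_one]
  have hA0 : 0 ≤ ‖2 - α‖ := norm_nonneg _
  have hA3 : ‖2 - α‖ < 3 := by
    have h2 : ‖2 - α‖ ≤ ‖(2:ℂ)‖ + ‖α‖ := by
      simpa [sub_eq_add_neg] using norm_add_le 2 (-α)
    have h3 : ‖(2:ℂ)‖ = 2 := by norm_num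
    rw [h3] at h2; linarith
  have hrk3 : 1/3 < r ^ k := by nlinarith [pow_nonneg hr0 k]
  constructor
  · set t := Real.log 3 / k with htdef
    have ht : 0 < t := div_pos (Real.log_pos (by norm_num)) hkpos
    have hexp : Real.exp (-t) ^ k = 1/3 := by
      rw [← Real.exp_nat_mul]
      have hkt : (k:ℝ) * (-t) = -(Real.log 3) := by
        rw [htdef]; field_simp
      rw [hkt, Real.exp_neg, Real.exp_log (by norm_num : (0:ℝ) < 3)]; norm_num
    have hlt : Real.exp (-t) < r := by
      apply lt_of_pow_lt_pow_left₀ k hr0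
      rw [hexp]; exact hrk3
    have := Real.add_one_lt_exp (x := -t) (by linarith)
    linarith
  · by_contra hcon
    push_neg at hcon
    set x := α.re with hxdef
    set y := α.im with hydef
    obtain ⟨ε, hεdef⟩ : ∃ e : ℝ, e = 1 - r := ⟨_, rfl⟩
    have hεpos : 0 < ε := by rw [hεdef]; linarith only [h1]
    have hc : (0:ℝ) < 2^8 * (k:ℝ)^3 := by positivity
    have hεle : ε ≤ 1/(2^8*(k:ℝ)^3) := by rw [hεdef]; linarith only [hcon]
    have hδ : 256 * (k:ℝ)^3 * ε ≤ 1 := by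
      have := (le_div_iff₀ hc).mp hεle
      linarith only [this]
    have hu : (k:ℝ)*ε ≤ 1/1024 := by
      have h4 : (4:ℝ) ≤ (k:ℝ)^2 := by nlinarith only [hk2]
      have hp : (0:ℝ) ≤ 256*(k:ℝ)*ε*((k:ℝ)^2 - 4) := by
        apply mul_nonneg (mul_nonneg (by norm_num : (0:ℝ) ≤ 256*(k:ℝ)) hεpos.le) (by linarith only [h4])
      linarith only [hδ, hp]
    have h2ε : 2*ε ≤ (k:ℝ)*ε := mul_le_mul_of_nonneg_right hk2 hεpos.le
    have hεsmall : ε ≤ 1/2048 := by linarith only [hu, h2ε]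
    have hr : r = 1 - ε := by rw [hεdef]; ring
    have hrpos : 0 < r := by rw [hr]; linarith only [hεsmall]
    have hA2 : (‖2 - α‖)^2 = (2 - x)^2 + y^2 := by
      rw [Complex.sq_norm, Complex.normSq_apply]
      simp only [Complex.sub_re, Complex.sub_im]
      norm_num
      ring
    have hx2y2 : x^2 + y^2 = r^2 := by
      rw [hrdef, Complex.sq_norm, Complex.normSq_apply]; ring
    have hA : r^(2*k) * ((2-x)^2 + y^2) = 1 := by
      calc r^(2*k) * ((2-x)^2+y^2) = (r^k * ‖2-α‖)^2 := by
            rw [mul_pow, ← pow_mul, mul_comm k 2, hA2]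
        _ = 1 := by rw [habs]; norm_num
    have hbern : 1 - 2*((k:ℝ)*ε) ≤ r^(2*k) := by
      have h := one_add_mul_le_pow (a := -ε) (by linarith only [hεsmall]) (2*k)
      have h2 : (1:ℝ) + -ε = 1 - ε := by ring
      rw [h2] at h
      rw [hr]
      push_cast at h
      linarith only [h]
    have hpowpos : 0 < r^(2*k) := pow_pos hrpos _
    have hv2 : ((k:ℝ)*ε)*((k:ℝ)*ε) ≤ (1/1024)*((k:ℝ)*ε) :=
      mul_le_mul_of_nonneg_right hu (mul_pos hkpos hεpos).le
    have hfrac : (2-x)^2 + y^2 ≤ 1 + 3*((k:ℝ)*ε) := by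
      have hb1 : (1 + 3*((k:ℝ)*ε))*(1 - 2*((k:ℝ)*ε)) ≤ (1 + 3*((k:ℝ)*ε)) * r^(2*k) :=
        mul_le_mul_of_nonneg_left hbern (by linarith only [mul_pos hkpos hεpos])
      have hb2 : (1:ℝ) ≤ (1 + 3*((k:ℝ)*ε))*(1 - 2*((k:ℝ)*ε)) := by
        nlinarith only [hv2, mul_pos hkpos hεpos]
      have h1 : (1:ℝ) ≤ (1 + 3*((k:ℝ)*ε)) * r^(2*k) := le_trans hb2 hb1
      have h2 : ((2-x)^2+y^2) * r^(2*k) ≤ (1 + 3*((k:ℝ)*ε)) * r^(2*k) := by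
        rw [mul_comm]; rw [hA]; exact h1
      exact le_of_mul_le_mul_right h2 hpowpos
    have hxr : x ≤ r := Complex.re_le_norm α
    have hgap : r - x ≤ (3/4)*((k:ℝ)*ε) := by
      nlinarith only [hfrac, hx2y2, hr, mul_nonneg (by linarith only [h1] : (0:ℝ) ≤ 1 - r)
        (by linarith only [h1] : (0:ℝ) ≤ 3 - r)]
    have hrx0 : 0 ≤ r - x := by linarith only [hxr]
    have hy2 : y^2 ≤ 2*(r-x) := by
      nlinarith only [hx2y2, mul_nonneg hrx0 (by linarith only [hxr, h1] : (0:ℝ) ≤ 2 - r - x)]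
    have hy2' : y^2 ≤ (3/2)*((k:ℝ)*ε) := by linarith only [hy2, hgap]
    have h1x : 0 ≤ 1 - x := by linarith only [hxr, h1]
    have h1x' : 1 - x ≤ (5/4)*((k:ℝ)*ε) := by linarith only [hgap, h2ε, hr]
    set D := ‖α - 1‖ with hDdef
    have hD0 : 0 ≤ D := norm_nonneg _
    have hD2 : D^2 = (1-x)^2 + y^2 := by
      rw [hDdef, Complex.sq_norm, Complex.normSq_apply]
      simp only [Complex.sub_re, Complex.sub_im]
      norm_num
      ring
    have hk2v : (k:ℝ)^2*((k:ℝ)*ε) ≤ 1/256 := by linarith only [hδ]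
    have hDk : 12*(k:ℝ)*D ≤ 1 := by
      have ha : (1-x)^2 ≤ ((5/4)*((k:ℝ)*ε))^2 := pow_le_pow_left₀ h1x h1x' 2
      have hprod : ((k:ℝ)^2*((k:ℝ)*ε))*((k:ℝ)*ε) ≤ (1/256)*(1/1024) :=
        mul_le_mul hk2v hu (mul_pos hkpos hεpos).le (by norm_num)
      have e1 : (1-x)^2 + y^2 ≤ (25/16)*(((k:ℝ)*ε)*((k:ℝ)*ε)) + (3/2)*((k:ℝ)*ε) := by
        linarith only [ha, hy2']
      have e3 := mul_le_mul_of_nonneg_left e1 (by positivity : (0:ℝ) ≤ 144*(k:ℝ)^2)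
      have hsq : (12*(k:ℝ)*D)^2 ≤ 1 := by
        rw [mul_pow, mul_pow, hD2]
        linarith only [e3, hprod, hk2v]
      nlinarith only [hsq, sq_nonneg (12*(k:ℝ)*D - 1)]
    have hgeom : ∀ i : ℕ, ‖α^i - 1‖ ≤ (i:ℝ) * D := by
      intro i
      have hmul := geom_sum_mul α i
      calc ‖α^i - 1‖ = ‖∑ j ∈ Finset.range i, α^j‖ * D := by
            rw [← hmul, norm_mul]
        _ ≤ (i:ℝ) * D := by
            apply mul_le_mul_of_nonneg_right _ hD0
            calc ‖∑ j ∈ Finset.range i, α ^ j‖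
                ≤ ∑ j ∈ Finset.range i, ‖α^j‖ := norm_sum_le _ _
              _ ≤ ∑ _j ∈ Finset.range i, (1:ℝ) := by
                  apply Finset.sum_le_sum; intro j _
                  rw [norm_pow]; exact pow_le_one₀ hr0 h1.le
              _ = i := by simp
    have hkey2 : ((1:ℂ) - k) = (∑ i ∈ Finset.range k, (α^i - 1)) - (α^k - 1) := by
      rw [Finset.sum_sub_distrib]
      simp only [Finset.sum_const, Finset.card_range, nsmul_eq_mul, mul_one]
      linear_combination hS
    have hmain : (k:ℝ) - 1 ≤ ((k:ℝ)^2 + k) * D := by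
      have hstep : (k:ℝ) - 1 = ‖(1:ℂ) - k‖ := by
        rw [show ((1:ℂ) - (k:ℂ)) = (((1:ℝ) - (k:ℝ) : ℝ) : ℂ) by push_cast; ring,
          Complex.norm_real, Real.norm_eq_abs, abs_of_nonpos (by linarith only [hk2])]
        ring
      have htri : ‖(∑ i ∈ Finset.range k, (α^i-1)) - (α^k - 1)‖
          ≤ ‖∑ i ∈ Finset.range k, (α^i-1)‖ + ‖α^k-1‖ := by
        have h := norm_add_le (∑ i ∈ Finset.range k, (α^i-1)) (-(α^k-1))
        rw [norm_neg, ← sub_eq_add_neg] at h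
        exact h
      have hsum : ‖∑ i ∈ Finset.range k, (α^i-1)‖ ≤ ∑ i ∈ Finset.range k, (i:ℝ)*D :=
        le_trans (norm_sum_le _ _) (Finset.sum_le_sum fun i _ => hgeom i)
      have hsum2 : ∑ i ∈ Finset.range k, (i:ℝ)*D ≤ ∑ _i ∈ Finset.range k, (k:ℝ)*D := by
        apply Finset.sum_le_sum
        intro i hi
        apply mul_le_mul_of_nonneg_right _ hD0
        exact_mod_cast (Finset.mem_range.mp hi).le
      have hsum3 : ∑ _i ∈ Finset.range k, (k:ℝ)*D = (k:ℝ)*((k:ℝ)*D) := by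
        simp [Finset.sum_const, Finset.card_range]
      have := hgeom k
      rw [hstep, hkey2]
      calc ‖(∑ i ∈ Finset.range k, (α^i-1)) - (α^k - 1)‖
          ≤ ‖∑ i ∈ Finset.range k, (α^i-1)‖ + ‖α^k-1‖ := htri
        _ ≤ (k:ℝ)*((k:ℝ)*D) + (k:ℝ)*D := by
            apply add_le_add _ (hgeom k)
            calc ‖∑ i ∈ Finset.range k, (α^i-1)‖
                ≤ ∑ i ∈ Finset.range k, (i:ℝ)*D := hsum
              _ ≤ ∑ _i ∈ Finset.range k, (k:ℝ)*D := hsum2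
              _ = (k:ℝ)*((k:ℝ)*D) := hsum3
        _ = ((k:ℝ)^2 + k) * D := by ring
    linarith only [hmain, hk2, mul_le_mul_of_nonneg_left hDk (by linarith only [hk2] : (0:ℝ) ≤ (k:ℝ)+1)]
end

section
/- For every integer k ≥ 2 and every h ∈ {0, 1, …, k−1}, there exists a root α of the k-generalized Fibonacci polynomial f_k whose argument θ ∈ [0, 2π) (i.e., α = |α|·e^(iθ)) satisfies |θ − 2πh/k| < π/k modulo 2π, that is, there is an integer m with |θ − 2πh/k − 2πm| < π/k. -/
open Polynomial Real

noncomputable def fibQ (k : ℕ) (θ r : ℝ) : ℝ :=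
  4 * r^(2*k) - 4 * Real.cos θ * r^(2*k+1) + r^(2*k+2)

lemma fibQ_continuous (k : ℕ) : Continuous (fun p : ℝ × ℝ => fibQ k p.1 p.2) := by
  unfold fibQ; fun_prop

lemma fibQ_hasDeriv (k : ℕ) (θ r : ℝ) :
    HasDerivAt (fibQ k θ)
      (4 * (2*k) * r^(2*k-1) - 4 * Real.cos θ * (2*k+1) * r^(2*k) + (2*k+2) * r^(2*k+1)) r := by
  have h1 := hasDerivAt_pow (2*k) r
  have h2 := hasDerivAt_pow (2*k+1) r
  have h3 := hasDerivAt_pow (2*k+2) r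
  have := ((h1.const_mul 4).sub (h2.const_mul (4 * Real.cos θ))).add h3
  refine this.congr_deriv ?_
  push_cast
  ring_nf

lemma fibQ_strictMonoOn (k : ℕ) (hk : 2 ≤ k) (θ : ℝ) :
    StrictMonoOn (fibQ k θ) (Set.Icc 0 1) := by
  apply strictMonoOn_of_deriv_pos (convex_Icc 0 1)
  · unfold fibQ; fun_prop
  · intro r hr
    rw [interior_Icc] at hr
    rw [(fibQ_hasDeriv k θ r).deriv]
    obtain ⟨hr0, hr1⟩ := hr
    have hc : Real.cos θ ≤ 1 := Real.cos_le_one θ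
    have hc' : -1 ≤ Real.cos θ := Real.neg_one_le_cos θ
    have hkk : (2:ℝ) ≤ (k:ℝ) := by exact_mod_cast hk
    -- rewrite powers: r^(2k) = r^(2k-1)*r, r^(2k+1) = r^(2k-1)*r^2
    have h2k : 2*k - 1 + 1 = 2*k := by omega
    have e1 : r^(2*k) = r^(2*k-1) * r := by rw [← pow_succ, h2k]
    have e2 : r^(2*k+1) = r^(2*k-1) * r^2 := by rw [← pow_add]; congr 1; omega
    rw [e1, e2]
    have hp : 0 < r^(2*k-1) := pow_pos hr0 _
    have key : 0 < 4 * (2*(k:ℝ)) - 4 * Real.cos θ * (2*k+1) * r + (2*k+2) * r^2 := by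
      nlinarith [mul_pos hr0 (sub_pos.mpr hr1), sq_nonneg r, sq_nonneg (1-r),
        mul_nonneg hr0.le (sub_nonneg.mpr hc)]
    calc (0:ℝ) < (4 * (2*(k:ℝ)) - 4 * Real.cos θ * (2*k+1) * r + (2*k+2) * r^2) * r^(2*k-1) :=
          mul_pos key hp
      _ = 4 * (2*k) * r^(2*k-1) - 4 * Real.cos θ * (2*k+1) * (r^(2*k-1) * r)
            + (2*k+2) * (r^(2*k-1) * r^2) := by ring

lemma fibQ_zero (k : ℕ) (hk : 2 ≤ k) (θ : ℝ) : fibQ k θ 0 = 0 := by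
  have h1 : 2*k ≠ 0 := by omega
  have h2 : 2*k+1 ≠ 0 := by omega
  have h3 : 2*k+2 ≠ 0 := by omega
  simp [fibQ, zero_pow h1, zero_pow h2, zero_pow h3]

lemma fibQ_one (k : ℕ) (hk : 2 ≤ k) (θ : ℝ) : fibQ k θ 1 = 5 - 4 * Real.cos θ := by
  simp [fibQ]; ring

lemma fibQ_exists_root (k : ℕ) (hk : 2 ≤ k) (θ : ℝ) (hc : Real.cos θ < 1) :
    ∃ r ∈ Set.Ioo (0:ℝ) 1, fibQ k θ r = 1 := by
  have hcont : ContinuousOn (fibQ k θ) (Set.Icc 0 1) := by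
    have := (fibQ_continuous k).comp (continuous_const.prodMk continuous_id : Continuous fun r : ℝ => (θ, r))
    exact this.continuousOn
  have h01 : (1:ℝ) ∈ Set.Ioo (fibQ k θ 0) (fibQ k θ 1) := by
    rw [fibQ_zero k hk, fibQ_one k hk]; constructor <;> [norm_num; linarith]
  have := intermediate_value_Ioo (by norm_num : (0:ℝ) ≤ 1) hcont h01
  obtain ⟨r, hr, hr1⟩ := this
  exact ⟨r, hr, hr1⟩

open scoped Classical in
noncomputable def fibR (k : ℕ) (θ : ℝ) : ℝ :=
  if h : ∃ r ∈ Set.Ioo (0:ℝ) 1, fibQ k θ r = 1 then h.choose else 1/2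

lemma fibR_spec (k : ℕ) (hk : 2 ≤ k) (θ : ℝ) (hc : Real.cos θ < 1) :
    fibR k θ ∈ Set.Ioo (0:ℝ) 1 ∧ fibQ k θ (fibR k θ) = 1 := by
  have h := fibQ_exists_root k hk θ hc
  rw [fibR]
  rw [dif_pos h]
  exact ⟨h.choose_spec.1, h.choose_spec.2⟩

lemma cos_lt_one_of_mem (θ : ℝ) (h0 : 0 < θ) (h2 : θ < 2 * π) : Real.cos θ < 1 := by
  have hs : 0 < Real.sin (θ/2) := Real.sin_pos_of_pos_of_lt_pi (by linarith) (by linarith)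
  have h1 : Real.cos (2*(θ/2)) = 2 * Real.cos (θ/2)^2 - 1 := Real.cos_two_mul _
  have h2 : Real.sin (θ/2)^2 + Real.cos (θ/2)^2 = 1 := Real.sin_sq_add_cos_sq _
  have : (2:ℝ)*(θ/2) = θ := by ring
  rw [this] at h1
  nlinarith

lemma fibR_continuousAt (k : ℕ) (hk : 2 ≤ k) (θ₀ : ℝ) (h0 : 0 < θ₀) (h2 : θ₀ < 2 * π) :
    ContinuousAt (fibR k) θ₀ := by
  have hc0 := cos_lt_one_of_mem θ₀ h0 h2
  obtain ⟨⟨hr0, hr1⟩, hq0⟩ := fibR_spec k hk θ₀ hc0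
  set r₀ := fibR k θ₀ with hr₀def
  rw [Metric.continuousAt_iff]
  intro ε hε
  set ε' : ℝ := min ε (min (r₀/2) ((1 - r₀)/2)) with hε'def
  have hε'pos : 0 < ε' := by
    apply lt_min hε; apply lt_min <;> linarith
  have hlo : 0 < r₀ - ε' := by
    have : ε' ≤ r₀/2 := le_trans (min_le_right _ _) (min_le_left _ _)
    linarith
  have hhi : r₀ + ε' < 1 := by
    have : ε' ≤ (1-r₀)/2 := le_trans (min_le_right _ _) (min_le_right _ _)
    linarith
  -- Q θ₀ (r₀ - ε') < 1 < Q θ₀ (r₀ + ε')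
  have hmono := fibQ_strictMonoOn k hk θ₀
  have hq_lo : fibQ k θ₀ (r₀ - ε') < 1 := by
    rw [← hq0]
    exact hmono ⟨by linarith, by linarith⟩ ⟨by linarith, by linarith⟩ (by linarith)
  have hq_hi : 1 < fibQ k θ₀ (r₀ + ε') := by
    rw [← hq0]
    exact hmono ⟨by linarith, by linarith⟩ ⟨by linarith, by linarith⟩ (by linarith)
  -- continuity in θ at fixed r
  have hclo : ContinuousAt (fun θ => fibQ k θ (r₀ - ε')) θ₀ := by
    exact ((fibQ_continuous k).comp (continuous_id.prodMk continuous_const)).continuousAt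
  have hchi : ContinuousAt (fun θ => fibQ k θ (r₀ + ε')) θ₀ := by
    exact ((fibQ_continuous k).comp (continuous_id.prodMk continuous_const)).continuousAt
  have hev1 : ∀ᶠ θ in nhds θ₀, fibQ k θ (r₀ - ε') < 1 := hclo.eventually_lt_const hq_lo
  have hev2 : ∀ᶠ θ in nhds θ₀, 1 < fibQ k θ (r₀ + ε') := hchi.eventually_const_lt hq_hi
  have hev3 : ∀ᶠ θ in nhds θ₀, 0 < θ ∧ θ < 2 * π := by
    have : Set.Ioo 0 (2*π) ∈ nhds θ₀ := Ioo_mem_nhds h0 h2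
    filter_upwards [this] with θ hθ using hθ
  have hev := (hev1.and hev2).and hev3
  rw [Metric.eventually_nhds_iff] at hev
  obtain ⟨δ, hδ, hδspec⟩ := hev
  refine ⟨δ, hδ, fun {θ} hθ => ?_⟩
  obtain ⟨⟨hl, hh⟩, hθ0, hθ2⟩ := hδspec hθ
  obtain ⟨⟨hs0, hs1⟩, hsq⟩ := fibR_spec k hk θ (cos_lt_one_of_mem θ hθ0 hθ2)
  set s := fibR k θ
  have hmθ := fibQ_strictMonoOn k hk θ
  -- s > r₀ - ε'
  have h1 : r₀ - ε' < s := by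
    by_contra hcon
    push_neg at hcon
    have := hmθ.monotoneOn ⟨hs0.le, hs1.le⟩ ⟨by linarith, by linarith⟩ hcon
    rw [hsq] at this; linarith
  have h2' : s < r₀ + ε' := by
    by_contra hcon
    push_neg at hcon
    have := hmθ.monotoneOn ⟨by linarith, by linarith⟩ ⟨hs0.le, hs1.le⟩ hcon
    rw [hsq] at this; linarith
  rw [Real.dist_eq]
  have : ε' ≤ ε := min_le_left _ _
  rw [abs_lt]; constructor <;> linarith

lemma fibQ_def (k : ℕ) (θ r : ℝ) :
    fibQ k θ r = 4 * r^(2*k) - 4 * Real.cos θ * r^(2*k+1) + r^(2*k+2) := rfl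

noncomputable def fibZ (k : ℕ) (θ : ℝ) : ℂ := (fibR k θ : ℂ) * Complex.exp (θ * Complex.I)

lemma fibZ_re (k : ℕ) (θ : ℝ) : (2 - fibZ k θ).re = 2 - fibR k θ * Real.cos θ := by
  simp [fibZ, Complex.exp_ofReal_mul_I_re, Complex.ext_iff, Complex.sub_re, Complex.mul_re]

lemma fibZ_normSq (k : ℕ) (θ : ℝ) :
    Complex.normSq (2 - fibZ k θ) = 4 - 4 * fibR k θ * Real.cos θ + (fibR k θ)^2 := by
  have h1 : (2 - fibZ k θ).re = 2 - fibR k θ * Real.cos θ := fibZ_re k θ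
  have h2 : (2 - fibZ k θ).im = -(fibR k θ * Real.sin θ) := by
    simp [fibZ, Complex.exp_ofReal_mul_I_im, Complex.sub_im, Complex.mul_im]
  rw [Complex.normSq_apply, h1, h2]
  have := Real.sin_sq_add_cos_sq θ
  ring_nf
  nlinarith [Real.sin_sq_add_cos_sq θ]

-- root of fibPoly for the sector h ∈ [1, k-1]
theorem main_nonzero (k : ℕ) (hk : 2 ≤ k) (h : ℕ) (h1 : 1 ≤ h) (hh : h < k) :
    ∃ (α : ℂ) (θ : ℝ) (m : ℤ), (fibPoly k).IsRoot α ∧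
      0 ≤ θ ∧ θ < 2 * π ∧ α = ((‖α‖ : ℝ) : ℂ) * Complex.exp (θ * Complex.I) ∧
      |θ - 2 * π * h / k - 2 * π * m| < π / k := by
  have hπ := Real.pi_pos
  have hk0 : (0:ℝ) < k := by positivity
  set a : ℝ := (2*h - 1) * π / k with ha_def
  set b : ℝ := (2*h + 1) * π / k with hb_def
  have hh' : (h:ℝ) ≤ k - 1 := by
    have : (h:ℝ) + 1 ≤ k := by exact_mod_cast hh
    linarith
  have h1' : (1:ℝ) ≤ (h:ℝ) := by exact_mod_cast h1
  have ha_pos : 0 < a := by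
    apply div_pos _ hk0; nlinarith
  have hb_lt : b < 2 * π := by
    rw [hb_def, div_lt_iff₀ hk0]; nlinarith
  have hab : a < b := by
    rw [ha_def, hb_def, div_lt_div_iff₀ hk0 hk0]; nlinarith
  have hIcc : Set.Icc a b ⊆ Set.Ioo 0 (2*π) := fun θ hθ =>
    ⟨lt_of_lt_of_le ha_pos hθ.1, lt_of_le_of_lt hθ.2 hb_lt⟩
  -- the function G
  set A : ℝ → ℝ := fun θ => Complex.arg (2 - fibZ k θ) with hA_def
  set G : ℝ → ℝ := fun θ => k * θ + A θ with hG_def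
  -- facts about points in Icc a b
  have hfacts : ∀ θ ∈ Set.Icc a b, fibR k θ ∈ Set.Ioo (0:ℝ) 1 ∧ fibQ k θ (fibR k θ) = 1 := by
    intro θ hθ
    obtain ⟨hθ0, hθ2⟩ := hIcc hθ
    exact fibR_spec k hk θ (cos_lt_one_of_mem θ hθ0 hθ2)
  have hre_pos : ∀ θ ∈ Set.Icc a b, 0 < (2 - fibZ k θ).re := by
    intro θ hθ
    rw [fibZ_re]
    obtain ⟨⟨hr0, hr1⟩, _⟩ := hfacts θ hθ
    nlinarith [Real.cos_le_one θ, Real.neg_one_le_cos θ, hr0.le]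
  have hAbound : ∀ θ ∈ Set.Icc a b, |A θ| ≤ π / 2 := by
    intro θ hθ
    exact Complex.abs_arg_le_pi_div_two_iff.mpr (hre_pos θ hθ).le
  -- continuity of G on Icc a b
  have hGcont : ContinuousOn G (Set.Icc a b) := by
    have hRcont : ContinuousOn (fibR k) (Set.Icc a b) := fun θ hθ => by
      obtain ⟨hθ0, hθ2⟩ := hIcc hθ
      exact (fibR_continuousAt k hk θ hθ0 hθ2).continuousWithinAt
    have hZcont : ContinuousOn (fun θ => 2 - fibZ k θ) (Set.Icc a b) := by
      unfold fibZ
      exact continuousOn_const.sub ((Complex.continuous_ofReal.comp_continuousOn hRcont).mul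
        ((Complex.continuous_exp.comp (Complex.continuous_ofReal.mul continuous_const)).continuousOn))
    have hAcont : ContinuousOn A (Set.Icc a b) := by
      intro θ hθ
      have harg : ContinuousAt Complex.arg (2 - fibZ k θ) :=
        Complex.continuousAt_arg (Complex.mem_slitPlane_iff.mpr (Or.inl (hre_pos θ hθ)))
      have h2 : ContinuousWithinAt (Complex.arg ∘ fun θ => 2 - fibZ k θ) (Set.Icc a b) θ :=
        ContinuousAt.comp_continuousWithinAt_of_eq harg (hZcont θ hθ) rfl
      exact h2
    exact (continuousOn_const.mul continuousOn_id).add hAcont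
  -- endpoint values
  have hka : (k:ℝ) * a = (2*h - 1) * π := by
    rw [ha_def]; field_simp
  have hkb : (k:ℝ) * b = (2*h + 1) * π := by
    rw [hb_def]; field_simp
  have hGa : G a < 2 * π * h := by
    have := hAbound a ⟨le_refl a, hab.le⟩
    rw [abs_le] at this
    simp only [hG_def]
    rw [hka]; linarith [this.2]
  have hGb : 2 * π * h < G b := by
    have := hAbound b ⟨hab.le, le_refl b⟩
    rw [abs_le] at this
    simp only [hG_def]
    rw [hkb]; linarith [this.1]
  -- IVT
  obtain ⟨θ, hθmem, hGθ⟩ := intermediate_value_Ioo hab.le hGcont ⟨hGa, hGb⟩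
  obtain ⟨hθa, hθb⟩ := hθmem
  have hθIcc : θ ∈ Set.Icc a b := ⟨hθa.le, hθb.le⟩
  obtain ⟨⟨hr0, hr1⟩, hq⟩ := hfacts θ hθIcc
  set r := fibR k θ with hr_def
  set z := fibZ k θ with hz_def
  set w := 2 - z with hw_def
  -- |z^k * w| = 1 via fibQ
  have habs_w_sq : (‖w‖)^2 = 4 - 4*r*Real.cos θ + r^2 := by
    rw [Complex.sq_norm, hw_def, hz_def, fibZ_normSq, hr_def]
  have hprod : (r^k * ‖w‖)^2 = 1 := by
    have : (r^k * ‖w‖)^2 = r^(2*k) * (‖w‖)^2 := by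
      rw [mul_pow, ← pow_mul, mul_comm k 2]
    rw [this, habs_w_sq, ← hq, fibQ_def]; ring
  have habs1 : r^k * ‖w‖ = 1 := by
    have hnn : 0 ≤ r^k * ‖w‖ := by positivity
    nlinarith
  -- arg identity: z^k * w = 1
  have hwpolar : w = (‖w‖ : ℂ) * Complex.exp (A θ * Complex.I) := by
    rw [hA_def]
    exact (Complex.norm_mul_exp_arg_mul_I w).symm
  have hzk : z^k = (r:ℂ)^k * Complex.exp ((k * θ : ℝ) * Complex.I) := by
    rw [hz_def, fibZ, mul_pow, ← Complex.exp_nat_mul]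
    push_cast; rw [← hr_def]; ring
  have hkey : z^k * w = 1 := by
    rw [hzk, hwpolar]
    have hGθ' : (k:ℝ) * θ + A θ = 2 * π * h := hGθ
    have this : ((k * θ : ℝ) : ℂ) * Complex.I + ((A θ : ℝ) : ℂ) * Complex.I
        = ((2 * π * h : ℝ) : ℂ) * Complex.I := by
      rw [← add_mul, ← Complex.ofReal_add, hGθ']
    calc (r:ℂ)^k * Complex.exp ((k * θ : ℝ) * Complex.I) *
          ((‖w‖ : ℂ) * Complex.exp (A θ * Complex.I))
        = ((r^k * ‖w‖ : ℝ) : ℂ) *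
            Complex.exp (((k * θ : ℝ):ℂ) * Complex.I + ((A θ : ℝ):ℂ) * Complex.I) := by
          rw [Complex.exp_add]; push_cast; ring
      _ = 1 * Complex.exp (((2 * π * h : ℝ):ℂ) * Complex.I) := by
          rw [habs1, this]; norm_num
      _ = 1 := by
          have : ((2 * π * h : ℝ):ℂ) * Complex.I = (h:ℕ) * (2 * (π:ℂ) * Complex.I) := by
            push_cast; ring
          rw [this, Complex.exp_nat_mul_two_pi_mul_I]; ring
  -- z is a root of fibPoly
  have hzabs : ‖z‖ = r := by
    rw [hz_def, fibZ, norm_mul, Complex.norm_real, Complex.norm_exp_ofReal_mul_I, Real.norm_eq_abs, abs_of_pos hr0]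
    ring
  have hzne1 : z ≠ 1 := by
    intro hcon
    rw [hcon] at hzabs
    simp at hzabs
    rw [← hzabs] at hr1
    exact lt_irrefl _ hr1
  have hroot : (fibPoly k).IsRoot z := by
    have heval : (fibPoly k).eval z = z^k - ∑ i ∈ Finset.range k, z^i := by
      simp [fibPoly, eval_finset_sum]
    have hgeom : (z - 1) * (∑ i ∈ Finset.range k, z^i) = z^k - 1 := by
      rw [mul_comm]; exact geom_sum_mul z k
    have hfactor : (z - 1) * ((fibPoly k).eval z) = -(z^k * w) + 1 + (z-1) * 0 := by
      rw [heval, mul_sub, hgeom, hw_def]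
      ring
    have : (z - 1) * ((fibPoly k).eval z) = 0 := by
      rw [hfactor, hkey]; ring
    rcases mul_eq_zero.mp this with hc | hc
    · exact absurd (sub_eq_zero.mp hc) hzne1
    · exact hc
  refine ⟨z, θ, 0, hroot, ?_, ?_, ?_, ?_⟩
  · linarith [lt_of_lt_of_le ha_pos hθa.le]
  · linarith [lt_of_le_of_lt hθb.le hb_lt]
  · rw [hzabs, hz_def, fibZ]
  · push_cast
    rw [abs_lt]
    have hae : a = 2 * π * h / k - π / k := by rw [ha_def]; field_simp
    have hbe : b = 2 * π * h / k + π / k := by rw [hb_def]; field_simp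
    constructor
    · rw [hae] at hθa; linarith
    · rw [hbe] at hθb; linarith

theorem main_zero (k : ℕ) (hk : 2 ≤ k) :
    ∃ (α : ℂ) (θ : ℝ) (m : ℤ), (fibPoly k).IsRoot α ∧
      0 ≤ θ ∧ θ < 2 * π ∧ α = ((‖α‖ : ℝ) : ℂ) * Complex.exp (θ * Complex.I) ∧
      |θ - 2 * π * (0:ℕ) / k - 2 * π * m| < π / k := by
  have hπ := Real.pi_pos
  have hk0 : (0:ℝ) < k := by positivity
  set F : ℝ → ℝ := fun x => x^k - ∑ i ∈ Finset.range k, x^i with hF_def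
  have hFcont : ContinuousOn F (Set.Icc 1 2) := by
    apply Continuous.continuousOn; fun_prop
  have hF1 : F 1 < 0 := by
    simp only [hF_def, one_pow, Finset.sum_const, Finset.card_range, smul_eq_mul, mul_one,
      nsmul_eq_mul]
    have : (2:ℝ) ≤ (k:ℝ) := by exact_mod_cast hk
    linarith
  have hF2 : 0 < F 2 := by
    have hgeom : ∑ i ∈ Finset.range k, (2:ℝ)^i = 2^k - 1 := by
      have := geom_sum_eq (by norm_num : (2:ℝ) ≠ 1) k
      rw [this]; norm_num
    simp only [hF_def, hgeom]; norm_num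
  obtain ⟨t, htmem, htF⟩ := intermediate_value_Icc (by norm_num : (1:ℝ) ≤ 2) hFcont
    (Set.mem_Icc.mpr ⟨hF1.le, hF2.le⟩)
  have ht1 : (1:ℝ) ≤ t := htmem.1
  refine ⟨(t:ℂ), 0, 0, ?_, le_refl 0, by linarith, ?_, ?_⟩
  · have : (fibPoly k).eval (t:ℂ) = ((F t : ℝ) : ℂ) := by
      simp only [fibPoly, eval_sub, eval_pow, eval_X, eval_finset_sum, hF_def]
      push_cast; ring
    simp [IsRoot, this, htF]
  · rw [Complex.ofReal_zero, zero_mul, Complex.exp_zero, mul_one]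
    rw [Complex.norm_real, Real.norm_eq_abs, abs_of_pos (by linarith : (0:ℝ) < t)]
  · have : |(0:ℝ) - 2 * π * (0:ℕ) / k - 2 * π * ((0:ℤ):ℝ)| = 0 := by
      simp
    rw [this]
    positivity

/-- For every integer `k ≥ 2` and every `h ∈ {0, 1, …, k−1}`, there exists a root `α`
of `f_k` whose argument `θ ∈ [0, 2π)` (i.e. `α = |α|·e^(iθ)`) satisfies
`|θ − 2πh/k − 2πm| < π/k` for some integer `m`. -/
theorem fibPoly_arg_distribution (k : ℕ) (hk : 2 ≤ k) (h : ℕ) (hh : h < k) :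
    ∃ (α : ℂ) (θ : ℝ) (m : ℤ), (fibPoly k).IsRoot α ∧
      0 ≤ θ ∧ θ < 2 * π ∧ α = ((‖α‖ : ℝ) : ℂ) * Complex.exp (θ * Complex.I) ∧
      |θ - 2 * π * h / k - 2 * π * m| < π / k := by
  rcases Nat.eq_zero_or_pos h with h0 | h1
  · subst h0
    exact main_zero k hk
  · exact main_nonzero k hk h h1 hh
end

section
/- For every integer k ≥ 2 and every h ∈ {0, 1, …, k−1}, there is exactly one root α of the k-generalized Fibonacci polynomial f_k whose argument θ ∈ [0, 2π) (i.e., α = |α|·e^(iθ)) satisfies |θ − 2πh/k − 2πm| < π/k for some integer m. -/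
open Polynomial Real

lemma isRoot_iff (k : ℕ) (hk : 2 ≤ k) (x : ℂ) :
    (fibPoly k).IsRoot x ↔ x ^ k * (2 - x) = 1 ∧ x ≠ 1 := by
  have heval : (fibPoly k).IsRoot x ↔ x ^ k - ∑ i ∈ Finset.range k, x ^ i = 0 := by
    simp [fibPoly, IsRoot, eval_finset_sum]
  have hid : (x - 1) * (x ^ k - ∑ i ∈ Finset.range k, x ^ i)
      = -(x ^ k * (2 - x) - 1) := by
    linear_combination -(mul_geom_sum x k)
  constructor
  · intro hr
    rw [heval] at hr
    have h1 : x ≠ 1 := by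
      intro hx1
      rw [hx1] at hr
      simp [Finset.sum_const] at hr
      have : (k : ℂ) = 1 := by linear_combination -hr
      have : (k : ℂ) ≠ 1 := by
        have : (1:ℕ) < k := hk.trans_lt' one_lt_two |>.trans_le le_rfl
        exact_mod_cast Nat.ne_of_gt (by omega)
      exact this ‹_›
    refine ⟨?_, h1⟩
    have := hid
    rw [hr, mul_zero] at this
    linear_combination this
  · rintro ⟨he, h1⟩
    rw [heval]
    have hne : x - 1 ≠ 0 := sub_ne_zero.mpr h1
    have : (x - 1) * (x ^ k - ∑ i ∈ Finset.range k, x ^ i) = 0 := by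
      rw [hid, he]; ring
    exact (mul_eq_zero.mp this).resolve_left hne


section S2
variable {k : ℕ} {x : ℂ}

lemma root_ne_zero (he : x ^ k * (2 - x) = 1) : x ≠ 0 := by
  intro h0
  rcases Nat.eq_zero_or_pos k with hk0 | hk0
  · subst hk0; subst h0; norm_num at he
  · rw [h0, zero_pow hk0.ne', zero_mul] at he
    exact zero_ne_one he

lemma root_abs_eq (he : x ^ k * (2 - x) = 1) :
    ‖x‖ ^ k * ‖(2 - x)‖ = 1 := by
  have := congrArg norm he
  simpa [norm_mul, norm_pow] using this

lemma root_two_sub_ne_zero (he : x ^ k * (2 - x) = 1) : (2 : ℂ) - x ≠ 0 := by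
  intro h0; rw [h0, mul_zero] at he; exact zero_ne_one he

lemma root_abs_ne_one (he : x ^ k * (2 - x) = 1) (hx1 : x ≠ 1) :
    ‖x‖ ≠ 1 := by
  intro ha
  have habs := root_abs_eq he
  rw [ha, one_pow, one_mul] at habs
  -- |2 - x| = 1 and |x| = 1 imply x = 1
  have h1 : ‖x‖ ^ 2 = 1 := by rw [ha]; norm_num
  have h2 : ‖(2 - x)‖ ^ 2 = 1 := by rw [habs]; norm_num
  rw [Complex.sq_norm, Complex.normSq_apply] at h1 h2
  simp only [Complex.sub_re, Complex.sub_im] at h2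
  have hre2 : ((2:ℂ).re : ℝ) = 2 := by norm_num
  have him2 : ((2:ℂ).im : ℝ) = 0 := by norm_num
  rw [hre2, him2] at h2
  have hre : x.re = 1 := by nlinarith
  have him : x.im = 0 := by nlinarith
  exact hx1 (Complex.ext hre him)

end S2
section S3

open Complex in
/-- the argument of `exp w` is `w.im` modulo `2π`. -/
lemma arg_exp_mod (w : ℂ) : ∃ m : ℤ, (Complex.exp w).arg = w.im + 2 * π * m := by
  have hz : Complex.exp w ≠ 0 := Complex.exp_ne_zero w
  have h1 : Complex.exp w = Complex.exp ((Complex.exp w).arg * Complex.I)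
      * Real.exp w.re := by
    rw [← Complex.norm_exp w]
    rw [mul_comm]
    exact (Complex.norm_mul_exp_arg_mul_I _).symm
  have h2 : Complex.exp w = Complex.exp (w.im * Complex.I) * Real.exp w.re := by
    conv_lhs => rw [← Complex.re_add_im w]
    rw [Complex.exp_add, ← Complex.ofReal_exp]
    ring
  have hre : (Real.exp w.re : ℂ) ≠ 0 := by
    exact_mod_cast (Real.exp_pos w.re).ne'
  have h3 : Complex.exp ((Complex.exp w).arg * Complex.I)
      = Complex.exp (w.im * Complex.I) := by
    have h4 := h1.symm.trans h2
    exact mul_right_cancel₀ hre h4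
  rw [Complex.exp_eq_exp_iff_exists_int] at h3
  obtain ⟨n, hn⟩ := h3
  refine ⟨n, ?_⟩
  have : ((Complex.exp w).arg : ℂ) = ((w.im + 2 * π * n : ℝ) : ℂ) := by
    push_cast
    have h5 : ((Complex.exp w).arg : ℂ) * Complex.I
        = ((w.im : ℂ) + 2*π*n) * Complex.I := by rw [hn]; push_cast; ring
    have h6 := mul_right_cancel₀ Complex.I_ne_zero h5
    linear_combination h6
  exact_mod_cast this

lemma kpow_le (k : ℕ) (hk : 2 ≤ k) : (k : ℝ) * (2/3)^k ≤ 8/9 := by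
  induction k with
  | zero => norm_num
  | succ n ih =>
    rcases Nat.lt_or_ge n 2 with hn | hn
    · interval_cases n <;> norm_num
    · have h1 := ih (by omega)
      have h2 : ((n:ℝ)+1) * (2/3)^(n+1) ≤ (n:ℝ) * (2/3)^n := by
        have hp : (0:ℝ) < (2/3)^n := by positivity
        have hn2 : (2:ℝ) ≤ n := by exact_mod_cast hn
        rw [pow_succ]
        nlinarith
      push_cast
      linarith

lemma int_eq_zero_of_abs_lt {a : ℤ} (h : |(a : ℝ)| < 1) : a = 0 := by
  have h2 := abs_lt.mp h
  have h3 : (-1:ℝ) < (a:ℝ) ∧ (a:ℝ) < 1 := h2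
  have h4 : -1 < a ∧ a < 1 := by exact_mod_cast h3
  omega

end S3
section S4
variable {k : ℕ} {x : ℂ}

lemma dominant_close (hk : 2 ≤ k) (he : x ^ k * (2 - x) = 1)
    (hx : 1 < ‖x‖) :
    ‖(2 - x)‖ ≤ (2/3)^k ∧ 3/2 ≤ ‖x‖ := by
  set a := ‖x‖ with ha
  set t := ‖(2 - x)‖ with ht
  have habs : a ^ k * t = 1 := root_abs_eq he
  have ht0 : 0 < t := by
    have h0 := root_two_sub_ne_zero he
    have := norm_pos_iff.mpr h0
    simpa [ht] using this
  have hak : 1 < a ^ k := one_lt_pow₀ hx (by omega)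
  have ht1 : t < 1 := by nlinarith
  have htri : 2 ≤ a + t := by
    have h1 := norm_add_le x (2 - x)
    simpa [ht, ha] using h1
  have hta : 2 - t ≤ a := by linarith
  have h12 : t ≤ 1/2 := by
    by_contra hgt; push_neg at hgt
    have h1a : (1:ℝ) ≤ 2 - t := by linarith
    have hp1 : (2 - t)^2 ≤ (2 - t)^k := pow_le_pow_right₀ h1a hk
    have hp2 : (2 - t)^k ≤ a^k := pow_le_pow_left₀ (by linarith) hta k
    nlinarith [sq_nonneg (t - 1), sq_nonneg t]
  have ha32 : 3/2 ≤ a := by linarith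
  refine ⟨?_, ha32⟩
  have hp3 : ((3:ℝ)/2)^k ≤ a^k := pow_le_pow_left₀ (by norm_num) ha32 k
  have hteq : t = (a^k)⁻¹ := eq_inv_of_mul_eq_one_left (by linarith [habs] : t * a^k = 1)
  have h23 : ((2:ℝ)/3)^k = (((3:ℝ)/2)^k)⁻¹ := by rw [← inv_pow]; norm_num
  rw [hteq, h23]
  gcongr


lemma dominant_fixed (he : x ^ k * (2 - x) = 1) : x = 2 - (x^k)⁻¹ := by
  have hxk : x^k ≠ 0 := pow_ne_zero k (root_ne_zero he)
  field_simp
  linear_combination -he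

lemma pow23_le (hk : 2 ≤ k) : ((2:ℝ)/3)^k ≤ 4/9 := by
  have h2 : ((2:ℝ)/3)^k ≤ (2/3:ℝ)^2 := pow_le_pow_of_le_one (by norm_num) (by norm_num) hk
  nlinarith

lemma dominant_mem (hk : 2 ≤ k) (he : x ^ k * (2 - x) = 1)
    (hx : 1 < ‖x‖) : x ∈ Metric.closedBall (2:ℂ) (1/2) := by
  obtain ⟨h1, _⟩ := dominant_close hk he hx
  have h2 := pow23_le hk
  rw [Metric.mem_closedBall, dist_comm, Complex.dist_eq]
  linarith

lemma dominant_arg (hk : 2 ≤ k) (he : x ^ k * (2 - x) = 1)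
    (hx : 1 < ‖x‖) : |x.arg| < π / k := by
  obtain ⟨ht23, ha32⟩ := dominant_close hk he hx
  have hkpos : (0:ℝ) < k := by exact_mod_cast (by omega : 0 < k)
  have hapos : (0:ℝ) < ‖x‖ := by linarith
  have hre : (3/2:ℝ) ≤ x.re := by
    have h1 : (2 - x).re ≤ ‖(2 - x)‖ := Complex.re_le_norm _
    have h2 : (2 - x).re = 2 - x.re := by simp
    have h3 := pow23_le hk
    linarith
  have hre0 : 0 < x.re := by linarith
  have harg2 : |x.arg| < π/2 := Complex.abs_arg_lt_pi_div_two_iff.mpr (Or.inl hre0)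
  have him : |x.im| ≤ (2/3:ℝ)^k := by
    have h1 : |(2-x).im| ≤ ‖(2-x)‖ := Complex.abs_im_le_norm _
    have h2 : (2-x).im = -x.im := by simp
    rw [h2, abs_neg] at h1; linarith
  have hsin_eq : Real.sin |x.arg| = |x.im| / ‖x‖ := by
    have hs := Complex.sin_arg x
    have hdm : x.im = x.im / ‖x‖ * ‖x‖ :=
      (div_mul_cancel₀ _ hapos.ne').symm
    rcases le_or_gt 0 x.arg with hpos | hneg
    · have h4 : 0 ≤ x.im := by
        have h5 := Real.sin_nonneg_of_nonneg_of_le_pi hpos (Complex.arg_le_pi x)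
        rw [hs] at h5
        rw [hdm]; exact mul_nonneg h5 hapos.le
      rw [abs_of_nonneg hpos, hs, abs_of_nonneg h4]
    · have h4 : x.im ≤ 0 := by
        have h5 := Real.sin_nonpos_of_nonpos_of_neg_pi_le hneg.le
          (le_of_lt (Complex.neg_pi_lt_arg x))
        rw [hs] at h5
        rw [hdm]; exact mul_nonpos_of_nonpos_of_nonneg h5 hapos.le
      rw [abs_of_neg hneg, Real.sin_neg, hs, abs_of_nonpos h4]
      ring
  have hs2 := Real.mul_le_sin (abs_nonneg x.arg) harg2.le
  rw [hsin_eq] at hs2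
  have hq : |x.im| / ‖x‖ ≤ (2/3:ℝ)^k / (3/2) :=
    div_le_div₀ (by positivity) him (by norm_num) ha32
  have hpi := Real.pi_pos
  have hk3 : (k:ℝ) * (2/3)^k ≤ 8/9 := kpow_le k hk
  rw [lt_div_iff₀ hkpos]
  have h6 : |x.arg| ≤ π/2 * ((2/3:ℝ)^k/(3/2)) := by
    have h7 := mul_le_mul_of_nonneg_left (hs2.trans hq)
      (le_of_lt (by positivity : (0:ℝ) < π/2))
    calc |x.arg| = π/2 * (2/π * |x.arg|) := by field_simp
    _ ≤ π/2 * ((2/3:ℝ)^k/(3/2)) := h7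
  have h8 : |x.arg| * k ≤ π/3 * ((k:ℝ) * (2/3)^k) := by
    have h9 := mul_le_mul_of_nonneg_right h6 hkpos.le
    calc |x.arg| * k ≤ (π/2 * ((2/3:ℝ)^k/(3/2))) * k := h9
    _ = π/3 * ((k:ℝ)*(2/3)^k) := by ring
  nlinarith

end S4
section S5
variable {k : ℕ} {x : ℂ}

noncomputable def secF (k j : ℕ) (x : ℂ) : ℂ :=
  Complex.exp ((2*π*j*Complex.I - Complex.log (2 - x)) / k)

lemma two_sub_re (hx : ‖x‖ ≤ 1) : 1 ≤ ((2:ℂ) - x).re := by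
  have h1 := Complex.abs_re_le_norm x
  have h2 : ((2:ℂ) - x).re = 2 - x.re := by simp
  rw [h2]
  have := abs_le.mp (h1.trans hx)
  linarith

lemma two_sub_abs (hx : ‖x‖ ≤ 1) : 1 ≤ ‖((2:ℂ) - x)‖ :=
  (two_sub_re hx).trans (Complex.re_le_norm _)

lemma two_sub_ne (hx : ‖x‖ ≤ 1) : (2:ℂ) - x ≠ 0 := by
  intro h0
  have := two_sub_re hx
  rw [h0] at this
  simp at this
  linarith

lemma two_sub_slit (hx : ‖x‖ ≤ 1) : ((2:ℂ) - x) ∈ Complex.slitPlane :=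
  Complex.mem_slitPlane_iff.mpr (Or.inl (by linarith [two_sub_re hx]))

lemma two_sub_arg (hx : ‖x‖ ≤ 1) : |((2:ℂ) - x).arg| < π/2 :=
  Complex.abs_arg_lt_pi_div_two_iff.mpr (Or.inl (by linarith [two_sub_re hx]))

lemma log_two_sub (x : ℂ) : Complex.log (2 - x)
    = ((Real.log (‖(2-x)‖) : ℂ)) + (((2-x).arg : ℂ)) * Complex.I := by
  rw [← Complex.re_add_im (Complex.log (2-x)), Complex.log_re, Complex.log_im]

lemma w_eq (hk : 2 ≤ k) (j : ℕ) (x : ℂ) :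
    (2*π*j*Complex.I - Complex.log (2 - x)) / k
      = ((-(Real.log (‖(2-x)‖))/k : ℝ) : ℂ)
        + (((2*π*j - (2-x).arg)/k : ℝ) : ℂ) * Complex.I := by
  have hk0 : (k:ℂ) ≠ 0 := by exact_mod_cast (by omega : k ≠ 0)
  rw [log_two_sub]
  push_cast
  field_simp
  ring

lemma secF_pow (hk : 2 ≤ k) (j : ℕ) (hx : ‖x‖ ≤ 1) :
    (secF k j x)^k = ((2:ℂ) - x)⁻¹ := by
  have hk0 : (k:ℂ) ≠ 0 := by exact_mod_cast (by omega : k ≠ 0)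
  rw [secF, ← Complex.exp_nat_mul]
  have h1 : (k:ℂ) * ((2*π*j*Complex.I - Complex.log (2-x))/k)
      = 2*π*j*Complex.I - Complex.log (2-x) := by field_simp
  rw [h1, Complex.exp_sub, Complex.exp_log (two_sub_ne hx)]
  have h2 : (2*π*(j:ℂ)*Complex.I) = ((j:ℤ) : ℂ) * (2*π*Complex.I) := by push_cast; ring
  rw [h2, Complex.exp_int_mul_two_pi_mul_I]
  exact one_div _

lemma secF_abs (hk : 2 ≤ k) (j : ℕ) (hx : ‖x‖ ≤ 1) :
    ‖(secF k j x)‖ ≤ 1 := by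
  rw [secF, Complex.norm_exp, w_eq hk j x]
  have h1 : 0 ≤ Real.log (‖(2-x)‖) := Real.log_nonneg (two_sub_abs hx)
  have hkpos : (0:ℝ) < k := by exact_mod_cast (by omega : 0 < k)
  have h2 : ((((-(Real.log (‖(2-x)‖))/k : ℝ) : ℂ))
      + (((2*π*j - (2-x).arg)/k : ℝ) : ℂ) * Complex.I).re
      = -(Real.log (‖(2-x)‖))/k := by simp
  rw [h2]
  have h6 : (0:ℝ) ≤ Real.log (‖(2-x)‖)/k := by positivity
  have h7 : -(Real.log (‖(2-x)‖))/k ≤ 0 := by rw [neg_div]; linarith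
  calc Real.exp _ ≤ Real.exp 0 := Real.exp_le_exp.mpr h7
  _ = 1 := Real.exp_zero

lemma secF_arg (hk : 2 ≤ k) (j : ℕ) (hx : ‖x‖ ≤ 1) :
    ∃ m : ℤ, (secF k j x).arg = (2*π*j - ((2:ℂ)-x).arg)/k + 2*π*m := by
  obtain ⟨m, hm⟩ := arg_exp_mod ((2*π*j*Complex.I - Complex.log (2 - x)) / k)
  refine ⟨m, ?_⟩
  rw [secF, hm, w_eq hk j x]
  simp

lemma secF_mapsTo (hk : 2 ≤ k) (j : ℕ) :
    Set.MapsTo (secF k j) (Metric.closedBall (0:ℂ) 1) (Metric.closedBall (0:ℂ) 1) := by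
  intro x hxmem
  rw [Metric.mem_closedBall, dist_zero_right] at hxmem ⊢
  exact secF_abs hk j hxmem

lemma secF_hasDerivAt (hk : 2 ≤ k) (j : ℕ) (hx : ‖x‖ ≤ 1) :
    HasDerivAt (secF k j) (secF k j x * (-(((2:ℂ)-x)⁻¹ * (-1))/k)) x := by
  have h2 : HasDerivAt (fun y : ℂ => (2:ℂ) - y) (-1) x := by
    simpa using (hasDerivAt_id x).const_sub (2:ℂ)
  have hlog : HasDerivAt (fun y : ℂ => Complex.log (2 - y)) (((2:ℂ)-x)⁻¹ * (-1)) x :=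
    (Complex.hasDerivAt_log (two_sub_slit hx)).comp x h2
  have hw : HasDerivAt (fun y : ℂ => (2*π*j*Complex.I - Complex.log (2-y))/(k:ℂ))
      (-(((2:ℂ)-x)⁻¹ * (-1))/(k:ℂ)) x := (hlog.const_sub _).div_const _
  exact hw.cexp

lemma secF_lipschitz (hk : 2 ≤ k) (j : ℕ) :
    LipschitzOnWith (1/2 : NNReal) (secF k j) (Metric.closedBall (0:ℂ) 1) := by
  apply (convex_closedBall (0:ℂ) 1).lipschitzOnWith_of_nnnorm_hasDerivWithin_le
    (f' := fun x => secF k j x * (-(((2:ℂ)-x)⁻¹ * (-1))/k))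
  · intro x hxmem
    rw [Metric.mem_closedBall, dist_zero_right] at hxmem
    exact (secF_hasDerivAt hk j hxmem).hasDerivWithinAt
  · intro x hxmem
    rw [Metric.mem_closedBall, dist_zero_right] at hxmem
    have hb : ‖secF k j x * (-(((2:ℂ)-x)⁻¹ * (-1))/k)‖ ≤ 1/2 := by
      rw [norm_mul]
      have h1 : ‖(secF k j x)‖ ≤ 1 := secF_abs hk j hxmem
      have hkpos : (2:ℝ) ≤ k := by exact_mod_cast hk
      have h2 : ‖(-(((2:ℂ)-x)⁻¹ * (-1))/k)‖ ≤ 1/2 := by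
        rw [norm_div, norm_neg, norm_mul, norm_inv]
        simp only [norm_neg, norm_one, mul_one]
        have h3 : 1 ≤ ‖((2:ℂ) - x)‖ := two_sub_abs hxmem
        have h4 : (‖((2:ℂ)-x)‖)⁻¹ ≤ 1 := by
          rw [inv_le_one_iff₀]; right; exact h3
        have h5 : ‖((k:ℂ))‖ = (k:ℝ) := by
          rw [Complex.norm_natCast]
        rw [h5]
        rw [div_le_iff₀ (by linarith : (0:ℝ) < (k:ℝ))]
        linarith
      calc ‖(secF k j x)‖ * ‖(-(((2:ℂ)-x)⁻¹ * (-1))/k)‖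
          ≤ 1 * (1/2) := by
            apply mul_le_mul h1 h2 (by positivity) (by norm_num)
      _ = 1/2 := by norm_num
    have hcoe : ((1/2 : NNReal) : ℝ) = 1/2 := by norm_num
    rw [← NNReal.coe_le_coe, coe_nnnorm, hcoe]
    exact hb

end S5
section S6
variable {k : ℕ} {x : ℂ}

lemma fixed_unique {f : ℂ → ℂ} {s : Set ℂ} {C : NNReal} (hL : LipschitzOnWith C f s)
    (hC : (C:ℝ) < 1) {x y : ℂ} (hx : x ∈ s) (hy : y ∈ s)
    (hfx : f x = x) (hfy : f y = y) : x = y := by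
  have h := hL.dist_le_mul x hx y hy
  rw [hfx, hfy] at h
  have h2 : 0 ≤ dist x y := dist_nonneg
  have hC0 : (0:ℝ) ≤ (C:ℝ) := C.coe_nonneg
  have h3 : dist x y ≤ 0 := by nlinarith
  exact dist_eq_zero.mp (le_antisymm h3 h2)

lemma secF_one_val (hk : 2 ≤ k) (j : ℕ) :
    secF k j 1 = Complex.exp (2*π*j*Complex.I / k) := by
  rw [secF]
  norm_num [Complex.log_one]

lemma secF_zero_one (hk : 2 ≤ k) : secF k 0 1 = 1 := by
  rw [secF_one_val hk]
  norm_num [Complex.exp_zero]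

lemma secF_exists_fixed (hk : 2 ≤ k) (j : ℕ) :
    ∃ x ∈ Metric.closedBall (0:ℂ) 1, secF k j x = x := by
  have hsc : IsComplete (Metric.closedBall (0:ℂ) 1) := Metric.isClosed_closedBall.isComplete
  have hmaps := secF_mapsTo hk j
  have hcontr : ContractingWith (1/2) (hmaps.restrict _ _ _) :=
    ⟨by rw [← NNReal.coe_lt_coe]; norm_num, (secF_lipschitz hk j).mapsToRestrict hmaps⟩
  obtain ⟨y, hys, hyfix, -⟩ := hcontr.exists_fixedPoint' hsc hmaps
    (Metric.mem_closedBall_self (by norm_num)) (edist_ne_top _ _)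
  exact ⟨y, hys, hyfix⟩

lemma ball2_abs (hx : x ∈ Metric.closedBall (2:ℂ) (1/2)) : 3/2 ≤ ‖x‖ := by
  rw [Metric.mem_closedBall, Complex.dist_eq] at hx
  have h1 := norm_add_le x (2 - x)
  have h2 : ‖(2 - x)‖ = ‖(x - 2)‖ := norm_sub_rev _ _
  have h3 : x + (2 - x) = 2 := by ring
  rw [h3] at h1
  have h4 : ‖(2:ℂ)‖ = 2 := by norm_num [Complex.norm_two]
  rw [h4, h2] at h1
  linarith

lemma G_lipschitz (hk : 2 ≤ k) :
    LipschitzOnWith (16/27 : NNReal) (fun z : ℂ => 2 - (z^k)⁻¹)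
      (Metric.closedBall (2:ℂ) (1/2)) := by
  apply (convex_closedBall (2:ℂ) (1/2)).lipschitzOnWith_of_nnnorm_hasDerivWithin_le
    (f' := fun x : ℂ => -(-((k:ℂ) * x^(k-1)) / (x^k)^2))
  · intro x hxmem
    have ha := ball2_abs hxmem
    have hx0 : x ≠ 0 := by
      intro h0; rw [h0] at ha; simp at ha; linarith
    have hxk : x^k ≠ 0 := pow_ne_zero _ hx0
    exact (((hasDerivAt_pow k x).inv hxk).const_sub 2).hasDerivWithinAt
  · intro x hxmem
    have ha := ball2_abs hxmem
    have hkpos : (0:ℝ) < k := by exact_mod_cast (by omega : 0 < k)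
    have hb : ‖-(-((k:ℂ) * x^(k-1)) / (x^k)^2)‖ ≤ 16/27 := by
      simp only [norm_neg, norm_div, norm_mul,
        norm_pow, Complex.norm_natCast]
      set a := ‖x‖ with hadef
      have ha0 : (0:ℝ) < a := by linarith
      have hsplit : (a^k)^2 = a^(k-1) * a^(k+1) := by
        rw [← pow_mul, ← pow_add]
        congr 1
        omega
      rw [hsplit]
      have hane : a^(k-1) ≠ 0 := by positivity
      have hane2 : a^(k+1) ≠ 0 := by positivity
      have hcancel : (k:ℝ) * a^(k-1) / (a^(k-1) * a^(k+1)) = (k:ℝ)/a^(k+1) := by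
        field_simp
      rw [hcancel]
      have hpow1 : ((3:ℝ)/2)^(k+1) ≤ a^(k+1) := pow_le_pow_left₀ (by norm_num) ha (k+1)
      have hone : ((2:ℝ)/3)^k * ((3:ℝ)/2)^k = 1 := by rw [← mul_pow]; norm_num
      have hk3 := kpow_le k hk
      have hppos : (0:ℝ) < ((3:ℝ)/2)^k := by positivity
      have hkb : (k:ℝ) ≤ 8/9 * ((3:ℝ)/2)^k := by nlinarith
      have hps : ((3:ℝ)/2)^(k+1) = 3/2 * ((3:ℝ)/2)^k := by ring
      rw [div_le_iff₀ (by positivity)]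
      nlinarith
    have hcoe : ((16/27 : NNReal) : ℝ) = 16/27 := by norm_num
    rw [← NNReal.coe_le_coe, coe_nnnorm, hcoe]
    exact hb

end S6
section S7
variable {k : ℕ} {x : ℂ}

lemma abs_eq_one_of_pow {u : ℂ} (hk : 2 ≤ k) (hu : u^k = 1) : ‖u‖ = 1 := by
  have h1 : (‖u‖)^k = 1 := by
    rw [← norm_pow, hu, norm_one]
  have h0 : 0 ≤ ‖u‖ := norm_nonneg u
  rcases lt_trichotomy (‖u‖) 1 with hlt | heq | hgt
  · have := pow_lt_one₀ h0 hlt (by omega : k ≠ 0)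
    rw [h1] at this; exact absurd this (lt_irrefl _)
  · exact heq
  · have := one_lt_pow₀ hgt (by omega : k ≠ 0)
    rw [h1] at this; exact absurd this (lt_irrefl _)

lemma root_in_sector_fixed (hk : 2 ≤ k) (h : ℕ) (he : x ^ k * (2 - x) = 1)
    (hx : ‖x‖ ≤ 1)
    (hsec : ∃ m : ℤ, |x.arg - 2*π*(h:ℝ)/k - 2*π*m| < π/k) :
    secF k h x = x := by
  obtain ⟨m, hm⟩ := hsec
  have hkpos : (0:ℝ) < k := by exact_mod_cast (by omega : 0 < k)
  have hpi := Real.pi_pos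
  have hx0 : x ≠ 0 := root_ne_zero he
  have hxk : x^k = ((2:ℂ)-x)⁻¹ := eq_inv_of_mul_eq_one_left he
  have hFk : (secF k h x)^k = ((2:ℂ)-x)⁻¹ := secF_pow hk h hx
  have hF0 : secF k h x ≠ 0 := by rw [secF]; exact Complex.exp_ne_zero _
  set u := x / secF k h x with hu_def
  have hu0 : u ≠ 0 := div_ne_zero hx0 hF0
  have hupow : u^k = 1 := by
    rw [hu_def, div_pow, hxk, hFk, div_self (inv_ne_zero (two_sub_ne hx))]
  have huabs : ‖u‖ = 1 := abs_eq_one_of_pow hk hupow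
  have huexp : Complex.exp (u.arg * Complex.I) = u := by
    have h1 := Complex.norm_mul_exp_arg_mul_I u
    rw [huabs] at h1
    simpa using h1
  -- k * arg u = 2πn
  obtain ⟨n, hn⟩ : ∃ n : ℤ, (k:ℝ) * u.arg = 2*π*n := by
    have h2 : Complex.exp ((k:ℂ) * (u.arg * Complex.I)) = 1 := by
      rw [Complex.exp_nat_mul, huexp, hupow]
    rw [Complex.exp_eq_one_iff] at h2
    obtain ⟨n, hn⟩ := h2
    refine ⟨n, ?_⟩
    have h3 : (((k:ℝ) * u.arg : ℝ) : ℂ) * Complex.I = ((2*π*n : ℝ) : ℂ) * Complex.I := by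
      push_cast
      rw [show ((k:ℂ) * (u.arg : ℂ)) * Complex.I = (k:ℂ) * ((u.arg:ℂ) * Complex.I) by ring, hn]
      ring
    have h4 := mul_right_cancel₀ Complex.I_ne_zero h3
    exact_mod_cast h4
  -- x as an exponential
  have hxF : x = secF k h x * u := by
    rw [hu_def, mul_div_cancel₀ _ hF0]
  have hxexp : x = Complex.exp ((2*π*h*Complex.I - Complex.log (2 - x)) / k
      + u.arg * Complex.I) := by
    rw [Complex.exp_add, ← secF, huexp]; exact hxF
  obtain ⟨mx, hmx⟩ := arg_exp_mod ((2*π*h*Complex.I - Complex.log (2 - x)) / k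
      + u.arg * Complex.I)
  rw [← hxexp] at hmx
  have him : ((2*π*h*Complex.I - Complex.log (2 - x)) / k + u.arg * Complex.I).im
      = (2*π*h - ((2:ℂ)-x).arg)/k + u.arg := by
    rw [Complex.add_im, w_eq hk h x]
    simp
  rw [him] at hmx
  -- combine with the sector hypothesis
  set A := ((2:ℂ)-x).arg with hA
  have hAbound : |A| < π/2 := two_sub_arg hx
  have hargu : u.arg = 2*π*n/k := by
    field_simp at hn ⊢
    linarith [hn]
  have hsub : x.arg - 2*π*(h:ℝ)/k - 2*π*m
      = (-A + 2*π*n + 2*π*k*((mx:ℝ) - m))/k := by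
    rw [hmx, hargu]
    field_simp
    ring
  rw [hsub] at hm
  have hnum : |(-A + 2*π*n + 2*π*k*((mx:ℝ) - m))| < π := by
    rw [abs_div, abs_of_pos hkpos, div_lt_div_iff₀ hkpos hkpos] at hm
    nlinarith [abs_nonneg (-A + 2*π*n + 2*π*k*((mx:ℝ) - m))]
  -- |2π(n + k(mx - m))| < 3π/2, so the integer is 0
  have hS : ((n:ℝ) + k*((mx:ℝ) - m)) = ((n + k*(mx - m) : ℤ) : ℝ) := by push_cast; ring
  have htri : |2*π*((n:ℝ) + k*((mx:ℝ) - m))| < 3*π/2 := by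
    have h5 : 2*π*((n:ℝ) + k*((mx:ℝ) - m))
        = (-A + 2*π*n + 2*π*k*((mx:ℝ) - m)) + A := by ring
    rw [h5]
    calc |(-A + 2*π*n + 2*π*k*((mx:ℝ) - m)) + A|
        ≤ |(-A + 2*π*n + 2*π*k*((mx:ℝ) - m))| + |A| := abs_add_le _ _
    _ < π + π/2 := by linarith
    _ = 3*π/2 := by ring
  have hZ : (n + k*(mx - m) : ℤ) = 0 := by
    apply int_eq_zero_of_abs_lt
    rw [← hS]
    have h6 : |2*π*((n:ℝ) + k*((mx:ℝ) - m))| = 2*π*|((n:ℝ) + k*((mx:ℝ) - m))| := by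
      rw [abs_mul, abs_of_pos (by linarith : (0:ℝ) < 2*π)]
    rw [h6] at htri
    nlinarith [abs_nonneg ((n:ℝ) + k*((mx:ℝ) - m))]
  -- hence u = 1
  have hargu2 : u.arg = 2*π*((m:ℝ) - mx) := by
    have h7 : (n:ℝ) = k * ((m:ℝ) - mx) := by
      have : ((n + k*(mx - m) : ℤ) : ℝ) = 0 := by exact_mod_cast hZ
      push_cast at this
      linarith
    rw [hargu, h7]
    field_simp
  have hu1 : u = 1 := by
    rw [← huexp, hargu2]
    have h8 : ((2*π*((m:ℝ) - mx) : ℝ) : ℂ) * Complex.I = ((m - mx : ℤ) : ℂ) * (2*π*Complex.I) := by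
      push_cast; ring
    rw [h8, Complex.exp_int_mul_two_pi_mul_I]
  conv_rhs => rw [hxF]
  rw [hu1, mul_one]

end S7
section S8
variable {k : ℕ} {x : ℂ}

lemma theta_iff (α : ℂ) (hα : α ≠ 0) (c d : ℝ) :
    (∃ (θ : ℝ) (m : ℤ), 0 ≤ θ ∧ θ < 2*π ∧
        α = (‖α‖ : ℂ) * Complex.exp (θ * Complex.I) ∧
        |θ - c - 2*π*m| < d)
    ↔ (∃ m : ℤ, |α.arg - c - 2*π*m| < d) := by
  have hpi := Real.pi_pos
  constructor
  · rintro ⟨θ, m, hθ0, hθ2, heq, hlt⟩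
    have habs0 : (‖α‖ : ℂ) ≠ 0 := by
      simpa using (norm_ne_zero_iff.mpr hα)
    have h1 : (‖α‖ : ℂ) * Complex.exp (α.arg * Complex.I) = α :=
      Complex.norm_mul_exp_arg_mul_I α
    have h2 : Complex.exp (θ * Complex.I) = Complex.exp (α.arg * Complex.I) := by
      apply mul_left_cancel₀ habs0
      rw [h1, ← heq]
    rw [Complex.exp_eq_exp_iff_exists_int] at h2
    obtain ⟨nn, hnn⟩ := h2
    have h3 : θ = α.arg + 2*π*nn := by
      have h4 : ((θ:ℝ):ℂ) * Complex.I = ((α.arg + 2*π*nn : ℝ):ℂ) * Complex.I := by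
        push_cast
        linear_combination hnn
      have h5 := mul_right_cancel₀ Complex.I_ne_zero h4
      exact_mod_cast h5
    refine ⟨m - nn, ?_⟩
    have h6 : α.arg - c - 2*π*((m - nn : ℤ):ℝ) = θ - c - 2*π*m := by
      push_cast
      rw [h3]
      ring
    rw [h6]
    exact hlt
  · rintro ⟨m, hm⟩
    rcases le_or_gt 0 α.arg with hpos | hneg
    · exact ⟨α.arg, m, hpos, by linarith [Complex.arg_le_pi α],
        (Complex.norm_mul_exp_arg_mul_I α).symm, hm⟩
    · refine ⟨α.arg + 2*π, m + 1, ?_, ?_, ?_, ?_⟩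
      · linarith [Complex.neg_pi_lt_arg α]
      · linarith
      · have h7 : ((α.arg + 2*π : ℝ):ℂ) * Complex.I
            = α.arg * Complex.I + 2*π*Complex.I := by push_cast; ring
        rw [h7, Complex.exp_add, Complex.exp_two_pi_mul_I, mul_one]
        exact (Complex.norm_mul_exp_arg_mul_I α).symm
      · have h8 : α.arg + 2*π - c - 2*π*((m + 1 : ℤ):ℝ) = α.arg - c - 2*π*m := by
          push_cast; ring
        rw [h8]
        exact hm

lemma fixed_gives (hk : 2 ≤ k) (h : ℕ) (hx : ‖x‖ ≤ 1)
    (hfix : secF k h x = x) :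
    ∃ m : ℤ, |x.arg - 2*π*(h:ℝ)/k - 2*π*m| < π/k := by
  have hkpos : (0:ℝ) < k := by exact_mod_cast (by omega : 0 < k)
  obtain ⟨m, hm⟩ := secF_arg hk h hx
  rw [hfix] at hm
  refine ⟨m, ?_⟩
  rw [hm]
  have h1 : (2*π*(h:ℝ) - ((2:ℂ)-x).arg)/k + 2*π*m - 2*π*(h:ℝ)/k - 2*π*m
      = -(((2:ℂ)-x).arg)/k := by ring
  rw [h1, abs_div, abs_of_pos hkpos, abs_neg, div_lt_div_iff₀ hkpos hkpos]
  have h2 := two_sub_arg hx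
  nlinarith [abs_nonneg (((2:ℂ)-x).arg), Real.pi_pos]

lemma exists_real_root (hk : 2 ≤ k) :
    ∃ γ : ℝ, 1 < γ ∧ γ < 2 ∧ (fibPoly k).IsRoot (γ:ℂ) := by
  set q : ℝ → ℝ := fun y => y^k - ∑ i ∈ Finset.range k, y^i with hq
  have hcont : Continuous q :=
    (continuous_pow k).sub (continuous_finset_sum _ fun i _ => continuous_pow i)
  have hq1 : q 1 = 1 - k := by simp [hq]
  have hq2 : q 2 = 1 := by
    have hg := geom_sum_mul (2:ℝ) k
    have : (∑ i ∈ Finset.range k, (2:ℝ)^i) = 2^k - 1 := by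
      have h21 : (2:ℝ) - 1 = 1 := by norm_num
      rw [h21, mul_one] at hg
      exact hg
    simp [hq, this]
  have hkR : (2:ℝ) ≤ k := by exact_mod_cast hk
  have hmem : (0:ℝ) ∈ Set.Icc (q 1) (q 2) := by
    rw [hq1, hq2]
    constructor <;> [linarith; norm_num]
  have hsub := intermediate_value_Icc (by norm_num : (1:ℝ) ≤ 2) hcont.continuousOn
  obtain ⟨γ, hγmem, hγ0⟩ := hsub hmem
  have hγ1 : γ ≠ 1 := by
    intro h1; rw [h1, hq1] at hγ0; linarith
  have hγ2 : γ ≠ 2 := by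
    intro h1; rw [h1, hq2] at hγ0; linarith
  refine ⟨γ, lt_of_le_of_ne hγmem.1 (Ne.symm hγ1), lt_of_le_of_ne hγmem.2 hγ2, ?_⟩
  have heval : (fibPoly k).IsRoot (γ:ℂ)
      ↔ (γ:ℂ) ^ k - ∑ i ∈ Finset.range k, (γ:ℂ) ^ i = 0 := by
    simp [fibPoly, IsRoot, eval_finset_sum]
  rw [heval]
  have hcast : (γ:ℂ) ^ k - ∑ i ∈ Finset.range k, (γ:ℂ) ^ i = ((q γ : ℝ) : ℂ) := by
    rw [hq]
    push_cast
    ring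
  rw [hcast, hγ0]
  norm_num

lemma nat_dvd_eq_zero {h k : ℕ} (hh : h < k) (hdvd : k ∣ h) : h = 0 :=
  Nat.eq_zero_of_dvd_of_lt hdvd hh

end S8
section S9
variable {k : ℕ}

lemma mem_ball01 {z : ℂ} (hz : ‖z‖ ≤ 1) : z ∈ Metric.closedBall (0:ℂ) 1 := by
  rw [Metric.mem_closedBall, dist_zero_right]
  exact hz

lemma sector_unique (hk : 2 ≤ k) {h : ℕ} (hh : h < k) {α β : ℂ}
    (hαroot : (fibPoly k).IsRoot α) (hβroot : (fibPoly k).IsRoot β)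
    (hαsec : ∃ m : ℤ, |α.arg - 2*π*(h:ℝ)/k - 2*π*m| < π/k)
    (hβsec : ∃ m : ℤ, |β.arg - 2*π*(h:ℝ)/k - 2*π*m| < π/k) :
    α = β := by
  have hkpos : (0:ℝ) < k := by exact_mod_cast (by omega : 0 < k)
  have hpi := Real.pi_pos
  obtain ⟨heα, hα1⟩ := (isRoot_iff k hk α).mp hαroot
  obtain ⟨heβ, hβ1⟩ := (isRoot_iff k hk β).mp hβroot
  have hαne := root_abs_ne_one heα hα1
  have hβne := root_abs_ne_one heβ hβ1
  have hco : ((1/2 : NNReal):ℝ) < 1 := by norm_num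
  have hco2 : ((16/27 : NNReal):ℝ) < 1 := by norm_num
  have inside : ∀ z : ℂ, z^k*(2-z) = 1 → z ≠ 1 → ‖z‖ < 1 →
      (∃ m : ℤ, |z.arg - 2*π*(h:ℝ)/k - 2*π*m| < π/k) → h ≠ 0 := by
    intro z hez hz1 hzlt hzsec h0
    subst h0
    have hfix := root_in_sector_fixed hk 0 hez hzlt.le hzsec
    have h1fix : secF k 0 1 = 1 := secF_zero_one hk
    have hzb := mem_ball01 hzlt.le
    have h1b : (1:ℂ) ∈ Metric.closedBall (0:ℂ) 1 := mem_ball01 (by norm_num)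
    exact hz1 (fixed_unique (secF_lipschitz hk 0) hco hzb h1b hfix h1fix)
  have outside : ∀ z : ℂ, z^k*(2-z) = 1 → 1 < ‖z‖ →
      (∃ m : ℤ, |z.arg - 2*π*(h:ℝ)/k - 2*π*m| < π/k) → h = 0 := by
    intro z hez hzgt hzsec
    obtain ⟨m, hm⟩ := hzsec
    have hargz := dominant_arg hk hez hzgt
    have h1 : |2*π*(h:ℝ)/k + 2*π*m| < 2*π/k := by
      have he1 : 2*π*(h:ℝ)/k + 2*π*m
          = z.arg - (z.arg - 2*π*(h:ℝ)/k - 2*π*m) := by ring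
      rw [he1, sub_eq_add_neg]
      calc |z.arg + -(z.arg - 2*π*(h:ℝ)/k - 2*π*m)|
          ≤ |z.arg| + |-(z.arg - 2*π*(h:ℝ)/k - 2*π*m)| := abs_add_le _ _
      _ = |z.arg| + |z.arg - 2*π*(h:ℝ)/k - 2*π*m| := by rw [abs_neg]
      _ < π/k + π/k := by linarith
      _ = 2*π/k := by ring
    have heq2 : 2*π*(h:ℝ)/k + 2*π*m = (2*π/k) * ((h:ℝ) + k*m) := by
      field_simp
    have hposc : (0:ℝ) < 2*π/k := by positivity
    rw [heq2, abs_mul, abs_of_pos hposc] at h1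
    have h2 : |(h:ℝ) + k*m| < 1 := by
      have h4 : (2*π/k) * |(h:ℝ) + k*m| < (2*π/k) * 1 := by
        calc (2*π/k) * |(h:ℝ) + k*m| < 2*π/k := h1
        _ = (2*π/k) * 1 := by ring
      exact (mul_lt_mul_iff_right₀ hposc).mp h4
    have h3 : ((h:ℤ) + k*m : ℤ) = 0 := by
      apply int_eq_zero_of_abs_lt
      have : (((h:ℤ) + k*m : ℤ) : ℝ) = (h:ℝ) + k*m := by push_cast; ring
      rw [this]
      exact h2
    have hdvd : (k:ℤ) ∣ (h:ℤ) := ⟨-m, by linarith [h3]⟩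
    exact nat_dvd_eq_zero hh (Int.natCast_dvd_natCast.mp hdvd)
  rcases lt_or_gt_of_ne hαne with hαlt | hαgt <;>
    rcases lt_or_gt_of_ne hβne with hβlt | hβgt
  · have hfα := root_in_sector_fixed hk h heα hαlt.le hαsec
    have hfβ := root_in_sector_fixed hk h heβ hβlt.le hβsec
    exact fixed_unique (secF_lipschitz hk h) hco (mem_ball01 hαlt.le)
      (mem_ball01 hβlt.le) hfα hfβ
  · exact absurd (outside β heβ hβgt hβsec) (inside α heα hα1 hαlt hαsec)
  · exact absurd (outside α heα hαgt hαsec) (inside β heβ hβ1 hβlt hβsec)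
  · have hfα : (fun z : ℂ => 2 - (z^k)⁻¹) α = α := (dominant_fixed heα).symm
    have hfβ : (fun z : ℂ => 2 - (z^k)⁻¹) β = β := (dominant_fixed heβ).symm
    exact fixed_unique (G_lipschitz hk) hco2 (dominant_mem hk heα hαgt)
      (dominant_mem hk heβ hβgt) hfα hfβ

lemma sector_exists (hk : 2 ≤ k) {h : ℕ} (hh : h < k) :
    ∃ α : ℂ, (fibPoly k).IsRoot α ∧
      ∃ m : ℤ, |α.arg - 2*π*(h:ℝ)/k - 2*π*m| < π/k := by
  have hkpos : (0:ℝ) < k := by exact_mod_cast (by omega : 0 < k)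
  have hpi := Real.pi_pos
  rcases Nat.eq_zero_or_pos h with h0 | hpos
  · subst h0
    obtain ⟨γ, hγ1, hγ2, hγroot⟩ := exists_real_root hk
    refine ⟨(γ:ℂ), hγroot, 0, ?_⟩
    rw [Complex.arg_ofReal_of_nonneg (by linarith)]
    have : |(0:ℝ) - 2*π*((0:ℕ):ℝ)/k - 2*π*((0:ℤ):ℝ)| = 0 := by
      push_cast; simp
    rw [this]
    positivity
  · obtain ⟨x, hball, hfix⟩ := secF_exists_fixed hk h
    have hx : ‖x‖ ≤ 1 := by
      rw [Metric.mem_closedBall, dist_zero_right] at hball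
      exact hball
    have h2x := two_sub_ne hx
    have hroot : (fibPoly k).IsRoot x := by
      rw [isRoot_iff k hk]
      constructor
      · have hp := secF_pow hk h hx
        rw [hfix] at hp
        rw [hp]
        exact inv_mul_cancel₀ h2x
      · intro hx1
        rw [hx1] at hfix
        rw [secF_one_val hk h] at hfix
        rw [Complex.exp_eq_one_iff] at hfix
        obtain ⟨n, hn⟩ := hfix
        have h6 : ((2*π*(h:ℝ)/k : ℝ):ℂ) * Complex.I = ((2*π*(n:ℝ) : ℝ):ℂ) * Complex.I := by
          push_cast
          linear_combination hn
        have h7 := mul_right_cancel₀ Complex.I_ne_zero h6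
        have h8 : 2*π*(h:ℝ)/k = 2*π*(n:ℝ) := by exact_mod_cast h7
        have h9 : (h:ℝ) = (n:ℝ) * k := by
          rw [div_eq_iff (by positivity : (k:ℝ) ≠ 0)] at h8
          exact mul_left_cancel₀ (show (2:ℝ)*π ≠ 0 by positivity)
            (by linarith : (2*π)*(h:ℝ) = (2*π)*((n:ℝ)*k))
        have h10 : (h:ℤ) = n * k := by exact_mod_cast h9
        have hdvd : (k:ℤ) ∣ (h:ℤ) := ⟨n, by linarith [h10]⟩
        have := nat_dvd_eq_zero hh (Int.natCast_dvd_natCast.mp hdvd)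
        omega
    exact ⟨x, hroot, fixed_gives hk h hx hfix⟩

end S9

/-- For every integer `k ≥ 2` and every `h ∈ {0, 1, …, k−1}`, there is exactly one root
`α` of `f_k` whose argument `θ ∈ [0, 2π)` (i.e. `α = |α|·e^(iθ)`) satisfies
`|θ − 2πh/k − 2πm| < π/k` for some integer `m`. -/
theorem fibPoly_arg_distribution_unique (k : ℕ) (hk : 2 ≤ k) (h : ℕ) (hh : h < k) :
    ∃! α : ℂ, (fibPoly k).IsRoot α ∧
      ∃ (θ : ℝ) (m : ℤ), 0 ≤ θ ∧ θ < 2 * π ∧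
        α = (‖α‖ : ℂ) * Complex.exp (θ * Complex.I) ∧
        |θ - 2 * π * h / k - 2 * π * m| < π / k := by
  obtain ⟨α₀, hroot₀, hsec₀⟩ := sector_exists hk hh
  have hα₀e := ((isRoot_iff k hk α₀).mp hroot₀).1
  have hα₀0 : α₀ ≠ 0 := root_ne_zero hα₀e
  have hbridge : ∀ z : ℂ, z ≠ 0 →
      ((∃ (θ : ℝ) (m : ℤ), 0 ≤ θ ∧ θ < 2 * π ∧
        z = (‖z‖ : ℂ) * Complex.exp (θ * Complex.I) ∧
        |θ - 2 * π * h / k - 2 * π * m| < π / k)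
      ↔ (∃ m : ℤ, |z.arg - 2*π*(h:ℝ)/k - 2*π*m| < π/k)) := by
    intro z hz
    exact theta_iff z hz (2*π*(h:ℝ)/k) (π/k)
  refine ⟨α₀, ⟨hroot₀, (hbridge α₀ hα₀0).mpr hsec₀⟩, ?_⟩
  rintro β ⟨hβroot, hβθ⟩
  have hβe := ((isRoot_iff k hk β).mp hβroot).1
  have hβ0 : β ≠ 0 := root_ne_zero hβe
  exact sector_unique hk hh hβroot hroot₀ ((hbridge β hβ0).mp hβθ) hsec₀
end

section
/- For every integer k ≥ 2, the absolute value of the discriminant of the polynomial g_k(X) = X^(k+1) − 2·X^k + 1 equals 2^(k+1) · k^k − (k+1)^(k+1). -/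
open Polynomial

/-- The absolute value of the discriminant of a polynomial over `ℂ`.
For a monic polynomial `p` of degree `n` with roots `r_1, …, r_n` (with multiplicity)
in `ℂ`, one has `|disc p| = ∏ i, |p'(r_i)|`, which we take as the definition. -/
noncomputable def absDisc (p : Polynomial ℂ) : ℝ :=
  (p.roots.map fun r => ‖p.derivative.eval r‖).prod

lemma nat_ineq (k : ℕ) (hk : 2 ≤ k) : (k+1)^(k+1) ≤ 2^(k+1) * k^k := by
  induction k, hk using Nat.le_induction with
  | base => norm_num
  | succ k hk ih =>
    have hpos : 0 < k ^ (k+1) := Nat.pow_pos (by omega)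
    refine Nat.le_of_mul_le_mul_left ?_ hpos
    calc k^(k+1) * (k+1+1)^(k+1+1)
        = (k+2) * (k*(k+2))^(k+1) := by rw [mul_pow]; ring
      _ ≤ (k+2) * ((k+1)^2)^(k+1) :=
          Nat.mul_le_mul_left _ (Nat.pow_le_pow_left (by nlinarith) _)
      _ = (k+2) * ((k+1)^(k+1) * (k+1)^(k+1)) := by
          rw [← pow_mul, two_mul, pow_add]
      _ ≤ (k+2) * ((k+1)^(k+1) * (2^(k+1) * k^k)) :=
          Nat.mul_le_mul_left _ (Nat.mul_le_mul_left _ ih)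
      _ ≤ (2*k) * ((k+1)^(k+1) * (2^(k+1) * k^k)) :=
          Nat.mul_le_mul_right _ (by omega)
      _ = k^(k+1) * (2^(k+1+1) * (k+1)^(k+1)) := by ring

/-- For every integer `k ≥ 2`, the absolute value of the discriminant of
`g_k(X) = X^(k+1) − 2X^k + 1` equals `2^(k+1) · k^k − (k+1)^(k+1)`. -/
theorem absDisc_gPoly (k : ℕ) (hk : 2 ≤ k) :
    absDisc (X ^ (k + 1) - 2 * X ^ k + 1) =
      2 ^ (k + 1) * (k : ℝ) ^ k - ((k : ℝ) + 1) ^ (k + 1) := by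
  set p : ℂ[X] := X ^ (k + 1) - 2 * X ^ k + 1 with hp
  have hm : p.Monic := by unfold p; monicity!
  have hcard : p.roots.card = k + 1 := by
    rw [splits_iff_card_roots.mp (IsAlgClosed.splits p), hp]
    compute_degree!
  have hev : ∀ c : ℂ, (p.roots.map fun r => c - r).prod = eval c p := by
    intro c
    conv_rhs => rw [(IsAlgClosed.splits p).eq_prod_roots_of_monic hm]
    rw [eval_multiset_prod, Multiset.map_map]
    simp
  have hk1 : ((k:ℂ) + 1) ≠ 0 := by
    have : ((k+1 : ℕ) : ℂ) ≠ 0 := Nat.cast_ne_zero.mpr (by omega)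
    push_cast at this; exact this
  set c : ℂ := 2*k/((k:ℂ)+1) with hc
  -- roots product
  have hrp : p.roots.prod = (-1)^(k+1) := by
    have h0 := hev 0
    have he0 : eval (0:ℂ) p = 1 := by simp [hp]; omega
    rw [he0] at h0
    have : (p.roots.map fun r => (0:ℂ) - r).prod
        = ((-1:ℂ))^(k+1) * p.roots.prod := by
      have : (p.roots.map fun r => (0:ℂ) - r)
          = p.roots.map fun r => (-1) * r := by
        apply Multiset.map_congr rfl; intro r _; ring
      rw [this, Multiset.prod_map_mul, Multiset.map_const', Multiset.prod_replicate,
        hcard, Multiset.map_id']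
    rw [this] at h0
    have hsq : ((-1:ℂ))^(k+1) * ((-1:ℂ))^(k+1) = 1 := by
      rw [← pow_add, ← two_mul, pow_mul]; norm_num
    calc p.roots.prod = ((-1:ℂ))^(k+1) * (((-1:ℂ))^(k+1) * p.roots.prod) := by
          rw [← mul_assoc, hsq, one_mul]
      _ = (-1)^(k+1) := by rw [h0, mul_one]
  -- derivative eval
  have hder : ∀ r : ℂ, eval r (derivative p) = r^(k-1) * (((k:ℂ)+1)*r - 2*k) := by
    intro r
    have hr : r^k = r^(k-1)*r := by rw [← pow_succ]; congr 1; omega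
    simp [hp, derivative_X_pow]
    rw [hr]; ring
  -- second product
  have h2 : (p.roots.map fun r => ((k:ℂ)+1)*r - 2*(k:ℂ)).prod
      = ((k:ℂ)+1)^(k+1) * ((-1)^(k+1) * eval c p) := by
    have hpt : (p.roots.map fun r => ((k:ℂ)+1)*r - 2*(k:ℂ))
        = p.roots.map fun r => (((k:ℂ)+1) * (-1)) * (c - r) := by
      apply Multiset.map_congr rfl; intro r _
      rw [hc]; field_simp; ring
    rw [hpt, Multiset.prod_map_mul, Multiset.map_const', Multiset.prod_replicate, hcard,
      hev c, mul_pow]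
    ring
  -- total product
  have hA : (p.roots.map fun r => eval r (derivative p)).prod
      = (-1:ℂ)^((k+1)*(k-1)+(k+1)) * (((k:ℂ)+1)^(k+1) * eval c p) := by
    rw [Multiset.map_congr rfl (fun r _ => hder r), Multiset.prod_map_mul,
      Multiset.prod_map_pow, Multiset.map_id', hrp, h2]
    ring
  -- key numeric identity
  have hnum : ((k:ℂ)+1)^(k+1) * eval c p
      = ((((k:ℝ)+1)^(k+1) - 2^(k+1)*(k:ℝ)^k : ℝ) : ℂ) := by
    have hec : eval c p = c^(k+1) - 2*c^k + 1 := by simp [hp]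
    rw [hec, hc]
    push_cast
    rw [div_pow, div_pow]
    field_simp
    ring
  -- conclude
  unfold absDisc
  rw [show (p.roots.map fun r => ‖eval r (derivative p)‖)
      = (p.roots.map fun r => eval r (derivative p)).map (normHom : ℂ →*₀ ℝ) by
      rw [Multiset.map_map]; rfl]
  rw [← map_multiset_prod, hA, hnum, map_mul, map_pow]
  simp only [normHom_apply]
  rw [Complex.norm_real, Real.norm_eq_abs]
  have hm1 : ‖(-1 : ℂ)‖ = 1 := by simp
  rw [hm1, one_pow, one_mul]
  have hineq : ((k:ℝ)+1)^(k+1) ≤ 2^(k+1)*(k:ℝ)^k := by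
    have := nat_ineq k hk
    have h' : (((k+1)^(k+1) : ℕ) : ℝ) ≤ ((2^(k+1) * k^k : ℕ) : ℝ) := by exact_mod_cast this
    push_cast at h'
    linarith
  rw [abs_of_nonpos (by linarith)]
  ring
end

section
/- For every integer k ≥ 2, the discriminant of the k-generalized Fibonacci polynomial f_k is nonzero; equivalently, f_k has k distinct roots in ℂ. -/
open Polynomial

private lemma fibAux_sum_deg (k : ℕ) :
    (∑ i ∈ Finset.range k, (X:Polynomial ℂ) ^ i).degree < (k : WithBot ℕ) := by
  refine lt_of_le_of_lt (degree_sum_le _ _) ?_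
  rw [Finset.sup_lt_iff (show (⊥:WithBot ℕ) < (k:WithBot ℕ) from by
    exact_mod_cast WithBot.bot_lt_coe k)]
  intro i hi
  simpa [degree_X_pow] using (by exact_mod_cast Finset.mem_range.mp hi : (i:WithBot ℕ) < k)

private lemma fibAux_monic (k : ℕ) : (fibPoly k).Monic :=
  monic_X_pow_sub (fibAux_sum_deg k)

private lemma fibAux_natDegree (k : ℕ) : (fibPoly k).natDegree = k := by
  have : (fibPoly k).degree = k := by
    unfold fibPoly
    rw [degree_sub_eq_left_of_degree_lt (by simpa [degree_X_pow] using fibAux_sum_deg k),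
      degree_X_pow]
  exact natDegree_eq_of_degree_eq_some this

private lemma fibAux_key (k : ℕ) (hk : 2 ≤ k) (r : ℂ) (h0 : (fibPoly k).eval r = 0) :
    (fibPoly k).derivative.eval r ≠ 0 := by
  intro h1
  set p := fibPoly k with hp
  -- the auxiliary polynomial G = (X-1)*p = X^(k+1) - 2 X^k + 1
  have hG : (X ^ (k+1) - C 2 * X ^ k + 1 : Polynomial ℂ) = (X - 1) * p := by
    have geo : (∑ i ∈ Finset.range k, (X:Polynomial ℂ) ^ i) * (X - 1) = X ^ k - 1 :=
      geom_sum_mul _ _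
    rw [hp]; unfold fibPoly
    rw [mul_sub]
    rw [mul_comm (X - 1 : Polynomial ℂ) (∑ i ∈ Finset.range k, (X:Polynomial ℂ) ^ i), geo]
    have h2 : (C 2 : Polynomial ℂ) = 2 := map_ofNat C 2
    rw [h2, pow_succ]
    ring
  -- r ≠ 0
  have hr0 : r ≠ 0 := by
    intro h
    rw [h] at h0
    simp [hp, fibPoly, eval_finset_sum, zero_pow (by omega : k ≠ 0)] at h0
    omega
  -- eval of G and G' at r
  have hGr : r ^ (k+1) - 2 * r ^ k + 1 = 0 := by
    have := congrArg (eval r) hG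
    simp [eval_mul, h0] at this
    simpa using this
  have hG'r : ((k:ℂ)+1) * r ^ k - 2 * (k * r ^ (k-1)) = 0 := by
    have := congrArg (fun q => eval r (derivative q)) hG
    simp only [derivative_mul, derivative_sub, derivative_add, derivative_one, derivative_X,
      derivative_X_pow, derivative_mul, derivative_C, eval_add, eval_sub, eval_mul, eval_pow,
      eval_X, eval_one, eval_C, eval_natCast] at this
    rw [h0, h1] at this
    push_cast at this
    simpa using this
  -- deduce r = 2k/(k+1)
  have hrk : ((k:ℂ)+1) * r = 2 * k := by
    have hfac : r ^ (k-1) * (((k:ℂ)+1) * r - 2 * k) = 0 := by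
      obtain ⟨m, hm⟩ : ∃ m, k = m + 1 := ⟨k-1, by omega⟩
      subst hm
      simp only [Nat.add_sub_cancel] at hG'r ⊢
      push_cast at hG'r ⊢
      ring_nf at hG'r ⊢
      linear_combination hG'r
    rcases mul_eq_zero.mp hfac with h | h
    · exact absurd (pow_eq_zero_iff (by omega : k - 1 ≠ 0) |>.mp h) hr0
    · linear_combination h
  -- real contradiction
  have hK2 : (2:ℝ) ≤ (k:ℝ) := by exact_mod_cast hk
  have hKpos : (0:ℝ) < (k:ℝ) + 1 := by linarith
  set t : ℝ := 1 + ((k:ℝ)-1)/((k:ℝ)+1) with hT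
  have ha : (0:ℝ) ≤ ((k:ℝ)-1)/((k:ℝ)+1) := div_nonneg (by linarith) (by linarith)
  have ht0 : (0:ℝ) ≤ t := by rw [hT]; linarith
  have hfe : t * ((k:ℝ)+1) = 2*(k:ℝ) := by rw [hT]; field_simp; ring
  have hrt : r = ((t:ℝ):ℂ) := by
    have hkc : ((k:ℂ)+1) ≠ 0 := by
      have : ((k:ℂ)+1) = ((((k:ℝ)+1):ℝ):ℂ) := by push_cast; ring
      rw [this]
      exact Complex.ofReal_ne_zero.mpr (by linarith)
    have htc : ((t:ℝ):ℂ) * ((k:ℂ)+1) = 2*(k:ℂ) := by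
      have := congrArg (fun x : ℝ => (x:ℂ)) hfe
      push_cast at this ⊢
      linear_combination this
    have hz : ((k:ℂ)+1) * (r - ((t:ℝ):ℂ)) = 0 := by linear_combination hrk - htc
    rcases mul_eq_zero.mp hz with h | h
    · exact absurd h hkc
    · linear_combination h
  have hre : t^(k+1) - 2*t^k + 1 = 0 := by
    rw [hrt] at hGr
    exact_mod_cast hGr
  have hber := one_add_mul_le_pow (show (-2:ℝ) ≤ ((k:ℝ)-1)/((k:ℝ)+1) by linarith) k
  rw [← hT] at hber
  rw [pow_succ] at hre
  have hd : ((k:ℝ)-1)/((k:ℝ)+1) * ((k:ℝ)+1) = (k:ℝ) - 1 := by field_simp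
  nlinarith [hre, hber, hK2, hfe, hd, sq_nonneg ((k:ℝ)-1),
    mul_le_mul_of_nonneg_right hber (le_of_lt hKpos),
    mul_nonneg (pow_nonneg ht0 k) (le_of_lt hKpos)]

/-- For every integer `k ≥ 2`, the discriminant of the `k`-generalized Fibonacci
polynomial `f_k` is nonzero; equivalently, `f_k` has `k` distinct roots in `ℂ`. -/
theorem fibPoly_disc_ne_zero (k : ℕ) (hk : 2 ≤ k) :
    absDisc (fibPoly k) ≠ 0 ∧ (fibPoly k).roots.toFinset.card = k := by
  set p := fibPoly k with hp
  have hpne : p ≠ 0 := (fibAux_monic k).ne_zero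
  have hnodup : p.roots.Nodup := by
    rw [Multiset.nodup_iff_count_le_one]
    intro r
    rw [count_roots]
    by_contra hcnt
    have h2 : 2 ≤ p.rootMultiplicity r := by omega
    have hroot : p.IsRoot r := (rootMultiplicity_pos hpne).mp (by omega)
    have hd := derivative_rootMultiplicity_of_root hroot
    have hdne : p.derivative ≠ 0 := by
      intro h
      have := natDegree_eq_zero_of_derivative_eq_zero h
      rw [fibAux_natDegree k] at this
      omega
    have : 0 < p.derivative.rootMultiplicity r := by omega
    have : p.derivative.IsRoot r := (rootMultiplicity_pos hdne).mp this
    exact fibAux_key k hk r hroot this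
  have hcard : p.roots.card = k := by
    rw [← fibAux_natDegree k]
    exact (splits_iff_card_roots.mp (IsAlgClosed.splits p))
  constructor
  · unfold absDisc
    apply Multiset.prod_ne_zero
    rw [Multiset.mem_map]
    rintro ⟨r, hr, habs⟩
    have hroot : p.IsRoot r := isRoot_of_mem_roots hr
    exact fibAux_key k hk r hroot (by simpa using norm_eq_zero.mp habs)
  · rw [Multiset.toFinset_card_of_nodup hnodup, hcard]
end

section
/- For every integer k ≥ 2, the k-generalized Fibonacci polynomial f_k has exactly one root α_k in ℂ with |α_k| ≥ 1; this root is real and satisfies 2 − 1/2^(k−1) < α_k < 2, and every other root of f_k has absolute value strictly less than 1. -/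
open Polynomial Finset Set

/-- Auxiliary real function `x ^ (k+1) - 2 x^k + 1 = (x-1) f_k(x)`. -/
noncomputable def Hfn (k : ℕ) : ℝ → ℝ := fun x => x ^ (k + 1) - 2 * x ^ k + 1

lemma two_mul_lt_two_pow {k : ℕ} (hk : 3 ≤ k) : 2 * k < 2 ^ k := by
  induction k, hk using Nat.le_induction with
  | base => norm_num
  | succ n hn ih =>
    have h2 : 2 ≤ 2 ^ n := by
      calc 2 = 2 ^ 1 := rfl
      _ ≤ 2 ^ n := Nat.pow_le_pow_right (by norm_num) (by omega)
    rw [pow_succ]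
    omega

lemma hasDerivAt_Hfn (k : ℕ) (x : ℝ) :
    HasDerivAt (Hfn k) (((k:ℝ) + 1) * x ^ k - 2 * ((k:ℝ) * x ^ (k - 1))) x := by
  have h1 := hasDerivAt_pow (k + 1) x
  have h2 := (hasDerivAt_pow k x).const_mul (2 : ℝ)
  have := (h1.sub h2).add_const 1
  rw [show Hfn k = fun x => x ^ (k + 1) - 2 * x ^ k + 1 from rfl]
  simpa [Nat.add_sub_cancel] using this

lemma continuous_Hfn (k : ℕ) : Continuous (Hfn k) := by
  unfold Hfn; continuity

lemma Hfn_mono {k : ℕ} (hk : 2 ≤ k) :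
    StrictMonoOn (Hfn k) (Ici (2 * k / (k + 1) : ℝ)) := by
  apply strictMonoOn_of_deriv_pos (convex_Ici _) (continuous_Hfn k).continuousOn
  intro x hx
  rw [interior_Ici, Set.mem_Ioi] at hx
  rw [(hasDerivAt_Hfn k x).deriv]
  have hK : (0:ℝ) < (k:ℝ) + 1 := by positivity
  have hx' : 2 * (k:ℝ) < ((k:ℝ) + 1) * x := by
    rw [div_lt_iff₀ hK] at hx; linarith
  have hx0 : (0:ℝ) < x := by
    have : (0:ℝ) ≤ 2 * k / (k + 1) := by positivity
    linarith
  have hy : (0:ℝ) < x ^ (k - 1) := pow_pos hx0 _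
  have he : x ^ k = x * x ^ (k - 1) := by
    conv_lhs => rw [show k = (k - 1) + 1 by omega]
    rw [pow_succ]; ring
  rw [he]
  nlinarith

lemma Hfn_anti {k : ℕ} (hk : 2 ≤ k) :
    StrictAntiOn (Hfn k) (Icc 1 (2 * k / (k + 1) : ℝ)) := by
  apply strictAntiOn_of_deriv_neg (convex_Icc _ _) (continuous_Hfn k).continuousOn
  intro x hx
  rw [interior_Icc, Set.mem_Ioo] at hx
  rw [(hasDerivAt_Hfn k x).deriv]
  have hK : (0:ℝ) < (k:ℝ) + 1 := by positivity
  have hx' : ((k:ℝ) + 1) * x < 2 * (k:ℝ) := by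
    rw [lt_div_iff₀ hK] at hx; linarith [hx.2]
  have hx0 : (0:ℝ) < x := by linarith [hx.1]
  have hy : (0:ℝ) < x ^ (k - 1) := pow_pos hx0 _
  have he : x ^ k = x * x ^ (k - 1) := by
    conv_lhs => rw [show k = (k - 1) + 1 by omega]
    rw [pow_succ]; ring
  rw [he]
  nlinarith

lemma Hfn_c_neg {k : ℕ} (hk : 2 ≤ k) : Hfn k (2 - 1 / 2 ^ (k - 1)) < 0 := by
  rcases eq_or_lt_of_le hk with h | h
  · rw [← h]; norm_num [Hfn]
  · have hk3 : 3 ≤ k := h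
    have h2k : (2 * k : ℝ) < 2 ^ k := by exact_mod_cast two_mul_lt_two_pow hk3
    have hpos : (0:ℝ) < 2 ^ k := by positivity
    have hpos' : (0:ℝ) < 2 ^ (k - 1) := by positivity
    have h2k1 : (2:ℝ) ^ k = 2 * 2 ^ (k - 1) := by
      conv_lhs => rw [show k = (k - 1) + 1 by omega]
      rw [pow_succ]; ring
    set c : ℝ := 2 - 1 / 2 ^ (k - 1) with hc_def
    have hb : (1 - (k:ℝ) / 2 ^ k) ≤ (1 - 1 / 2 ^ k) ^ k := by
      have h1 : (-2 : ℝ) ≤ -(1 / 2 ^ k) := by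
        have : (1:ℝ) / 2 ^ k ≤ 1 := by
          rw [div_le_one hpos]; exact one_le_pow₀ (by norm_num)
        linarith
      have := one_add_mul_le_pow h1 k
      have e1 : (1 : ℝ) + -(1 / 2 ^ k) = 1 - 1 / 2 ^ k := by ring
      have e2 : (1 : ℝ) + (k:ℝ) * -(1 / 2 ^ k) = 1 - (k:ℝ) / 2 ^ k := by ring
      rw [e1, e2] at this
      exact this
    have hc2 : c = 2 * (1 - 1 / 2 ^ k) := by
      rw [hc_def, h2k1]; field_simp
    have hck : (2 ^ k - (k:ℝ)) ≤ c ^ k := by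
      rw [hc2, mul_pow]
      calc (2 ^ k - (k:ℝ)) = 2 ^ k * (1 - (k:ℝ) / 2 ^ k) := by field_simp
        _ ≤ 2 ^ k * (1 - 1 / 2 ^ k) ^ k := by nlinarith
    have key : 1 < c ^ k * (1 / 2 ^ (k - 1)) := by
      have e3 : c ^ k * (1 / 2 ^ (k - 1) : ℝ) = 2 * c ^ k / 2 ^ k := by
        rw [h2k1]; ring
      rw [e3, lt_div_iff₀ hpos]
      nlinarith
    simp only [Hfn]
    have hps : c ^ (k + 1) = c ^ k * c := pow_succ c k
    rw [hps]
    have e5 : c - 2 = -(1 / 2 ^ (k - 1)) := by rw [hc_def]; ring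
    have e4 : c ^ k * c - 2 * c ^ k + 1 = 1 - c ^ k * (1 / 2 ^ (k - 1)) := by
      linear_combination (c ^ k) * e5
    rw [e4]; linarith

/-- If `|2 - β| = 2 - |β|` then `β` is a nonnegative real. -/
lemma eq_ofReal_abs {β : ℂ} (h : ‖2 - β‖ = 2 - ‖β‖) :
    β = (‖β‖ : ℂ) := by
  have hray : SameRay ℝ β (2 - β) := by
    rw [sameRay_iff_norm_add]
    have e : β + (2 - β) = 2 := by ring
    rw [e]
    simp only [h]
    rw [show ‖(2:ℂ)‖ = 2 by simp]
    ring
  rcases hray with h0 | h0 | ⟨r₁, r₂, hr₁, hr₂, heq⟩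
  · rw [h0]; simp
  · have : β = 2 := by linear_combination -h0
    rw [this]; simp
  · rw [Complex.real_smul, Complex.real_smul] at heq
    have hsum : (0:ℝ) < r₁ + r₂ := by linarith
    have hsum' : ((r₁ : ℂ) + (r₂ : ℂ)) ≠ 0 := by
      exact_mod_cast (ne_of_gt hsum)
    have hβ : β = ((2 * r₂ / (r₁ + r₂) : ℝ) : ℂ) := by
      push_cast
      rw [eq_div_iff hsum']
      linear_combination heq
    rw [hβ, Complex.norm_real, Real.norm_eq_abs, abs_of_nonneg (by positivity)]

/-- For every integer `k ≥ 2`, the polynomial `f_k` has exactly one root in `ℂ` of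
absolute value `≥ 1`; this root is real, lies strictly between `2 − 1/2^(k−1)` and `2`,
and every other root of `f_k` has absolute value strictly less than `1`. -/
theorem fibPoly_dominant_root (k : ℕ) (hk : 2 ≤ k) :
    ∃ a : ℝ, (fibPoly k).IsRoot (a : ℂ) ∧
      2 - 1 / 2 ^ (k - 1) < a ∧ a < 2 ∧
      (∀ β : ℂ, (fibPoly k).IsRoot β → β ≠ (a : ℂ) → ‖β‖ < 1) ∧
      (∃! α : ℂ, (fibPoly k).IsRoot α ∧ 1 ≤ ‖α‖) := by
  have hkR : (2:ℝ) ≤ (k:ℝ) := by exact_mod_cast hk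
  set c : ℝ := 2 - 1 / 2 ^ (k - 1) with hc_def
  set m : ℝ := 2 * k / (k + 1) with hm_def
  have hK : (0:ℝ) < (k:ℝ) + 1 := by positivity
  have hm1 : (1:ℝ) < m := by
    rw [hm_def, lt_div_iff₀ hK]; linarith
  have hpow1 : (2:ℝ) ≤ 2 ^ (k - 1) := by
    calc (2:ℝ) = 2 ^ 1 := by norm_num
    _ ≤ 2 ^ (k - 1) := pow_le_pow_right₀ (by norm_num) (by omega)
  have hc32 : (3/2 : ℝ) ≤ c := by
    rw [hc_def]
    have : (1:ℝ) / 2 ^ (k - 1) ≤ 1 / 2 := by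
      apply div_le_div_of_nonneg_left (by norm_num) (by norm_num) hpow1
    linarith
  have hmc : m ≤ c := by
    have hk2p : (k:ℝ) + 1 ≤ 2 ^ k := by
      have h := Nat.lt_two_pow_self (n := k)
      have h' : k + 1 ≤ 2 ^ k := h
      exact_mod_cast h'
    have h2k1 : (2:ℝ) ^ k = 2 * 2 ^ (k - 1) := by
      conv_lhs => rw [show k = (k - 1) + 1 by omega]
      rw [pow_succ]; ring
    rw [hm_def, hc_def, div_le_iff₀ hK]
    have hpos' : (0:ℝ) < 2 ^ (k - 1) := by positivity
    rw [h2k1] at hk2p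
    have : ((k:ℝ) + 1) / 2 ^ (k - 1) ≤ 2 := by
      rw [div_le_iff₀ hpos']; linarith
    have e : (2 - 1 / 2 ^ (k - 1)) * ((k:ℝ) + 1)
        = 2 * ((k:ℝ) + 1) - ((k:ℝ) + 1) / 2 ^ (k - 1) := by ring
    rw [e]
    linarith
  have hc1 : (1:ℝ) < c := by linarith
  have hc2 : c < 2 := by
    rw [hc_def]
    have : (0:ℝ) < 1 / 2 ^ (k - 1) := by positivity
    linarith
  -- IVT
  have hHc : Hfn k c < 0 := Hfn_c_neg hk
  have hH2 : (0:ℝ) < Hfn k 2 := by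
    simp only [Hfn]
    linarith [pow_succ (2:ℝ) k]
  obtain ⟨a, ha_mem, ha0⟩ : ∃ a ∈ Ioo c 2, Hfn k a = 0 := by
    have hsub := intermediate_value_Ioo (le_of_lt hc2) (continuous_Hfn k).continuousOn
    have h0 : (0:ℝ) ∈ Ioo (Hfn k c) (Hfn k 2) := ⟨hHc, hH2⟩
    obtain ⟨a, ha, h⟩ := hsub h0
    exact ⟨a, ha, h⟩
  have ha1 : (1:ℝ) < a := lt_trans hc1 ha_mem.1
  have hma : m ≤ a := le_trans hmc (le_of_lt ha_mem.1)
  have hH1 : Hfn k 1 = 0 := by norm_num [Hfn]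
  have hmono := Hfn_mono hk
  have hanti := Hfn_anti hk
  have hsign_pos : ∀ x : ℝ, a < x → 0 < Hfn k x := by
    intro x hx
    have := hmono (mem_Ici.2 hma) (mem_Ici.2 (le_trans hma hx.le)) hx
    rw [ha0] at this; exact this
  have hsign_neg : ∀ x : ℝ, 1 < x → x < a → Hfn k x < 0 := by
    intro x hx1 hxa
    rcases le_or_gt x m with h | h
    · have := hanti ⟨le_refl 1, hm1.le⟩ ⟨hx1.le, h⟩ hx1
      rw [hH1] at this; exact this
    · have := hmono (mem_Ici.2 h.le) (mem_Ici.2 hma) hxa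
      rw [ha0] at this; linarith
  -- algebraic identities
  have heval : ∀ β : ℂ, eval β (fibPoly k) = β ^ k - ∑ i ∈ Finset.range k, β ^ i := by
    intro β; simp [fibPoly]
  have identC : ∀ β : ℂ,
      (β - 1) * (β ^ k - ∑ i ∈ Finset.range k, β ^ i) = β ^ (k + 1) - 2 * β ^ k + 1 := by
    intro β; linear_combination -(geom_sum_mul β k)
  have haroot : (fibPoly k).IsRoot (a : ℂ) := by
    have h1 : ((a:ℂ) - 1) * eval (a:ℂ) (fibPoly k) = 0 := by
      rw [heval, identC]
      have e : ((a:ℂ)) ^ (k + 1) - 2 * (a:ℂ) ^ k + 1 = ((Hfn k a : ℝ) : ℂ) := by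
        simp only [Hfn]; push_cast; ring
      rw [e, ha0]; simp
    have h2 : ((a:ℂ) - 1) ≠ 0 := by
      rw [sub_ne_zero]
      exact_mod_cast (ne_of_gt ha1)
    exact (mul_eq_zero.mp h1).resolve_left h2
  -- key smallness claim
  have hsmall : ∀ β : ℂ, (fibPoly k).IsRoot β → β ≠ (a : ℂ) → ‖β‖ < 1 := by
    intro β hroot hne
    by_contra hge
    push_neg at hge
    set r := ‖β‖ with hr_def
    have hβroot : β ^ k = ∑ i ∈ Finset.range k, β ^ i := by
      have h := hroot
      rw [Polynomial.IsRoot, heval] at h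
      linear_combination h
    have hβ1 : β ≠ 1 := by
      intro h
      rw [h] at hβroot
      simp at hβroot
      have : (k:ℂ) = 1 := hβroot.symm
      have : (k:ℕ) = 1 := by exact_mod_cast this
      omega
    have hH0 : β ^ (k + 1) - 2 * β ^ k + 1 = 0 := by
      rw [← identC β, sub_eq_zero.mpr hβroot, mul_zero]
    have hprod : β ^ k * (2 - β) = 1 := by linear_combination -hH0
    have hkey : r ^ k * ‖2 - β‖ = 1 := by
      calc r ^ k * ‖2 - β‖ = ‖β ^ k * (2 - β)‖ := by
            rw [norm_mul, norm_pow]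
        _ = 1 := by rw [hprod]; simp
    have hsumle : r ^ k ≤ ∑ i ∈ Finset.range k, r ^ i := by
      calc r ^ k = ‖β ^ k‖ := by rw [norm_pow]
        _ = ‖∑ i ∈ Finset.range k, β ^ i‖ := by rw [hβroot]
        _ ≤ ∑ i ∈ Finset.range k, ‖β ^ i‖ := by
            simpa using
              norm_sum_le (Finset.range k) (fun i => β ^ i)
        _ = ∑ i ∈ Finset.range k, r ^ i := by simp [map_pow, hr_def]
    have hA : Hfn k r ≤ 0 := by
      have hg := geom_sum_mul r k
      have h1 : (0:ℝ) ≤ r - 1 := by linarith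
      have h2 := mul_le_mul_of_nonneg_right hsumle h1
      rw [hg] at h2
      simp only [Hfn]
      nlinarith [pow_succ r k]
    have hB : (0:ℝ) ≤ Hfn k r := by
      have h2 : 2 - r ≤ ‖2 - β‖ := by
        have := norm_sub_norm_le (2:ℂ) β
        simpa using this
      have hr0 : (0:ℝ) < r := by linarith
      have hrk : (0:ℝ) < r ^ k := pow_pos hr0 k
      have h3 := mul_le_mul_of_nonneg_left h2 hrk.le
      rw [hkey] at h3
      simp only [Hfn]
      nlinarith [pow_succ r k]
    have hra : r ≤ a := by
      by_contra h
      push_neg at h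
      exact absurd hA (not_le.2 (hsign_pos r h))
    have hr1a : r = 1 ∨ r = a := by
      rcases eq_or_lt_of_le hge with h | h
      · left; exact h.symm
      · rcases eq_or_lt_of_le hra with h2 | h2
        · right; exact h2
        · exact absurd (hsign_neg r h h2) (not_lt.2 hB)
    have habs2 : ‖2 - β‖ = 2 - r := by
      rcases hr1a with h | h
      · rw [h] at hkey
        simp at hkey
        rw [hkey, h]; norm_num
      · have hak : (0:ℝ) < a ^ k := pow_pos (by linarith) k
        have h3 : a ^ k * (2 - a) = 1 := by
          simp only [Hfn] at ha0
          nlinarith [pow_succ a k]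
        rw [h] at hkey
        have := mul_left_cancel₀ (ne_of_gt hak) (hkey.trans h3.symm)
        rw [this, h]
    have hβreal : β = (r : ℂ) := eq_ofReal_abs habs2
    rcases hr1a with h | h
    · rw [h] at hβreal
      norm_num at hβreal
      exact hβ1 hβreal
    · rw [h] at hβreal
      exact hne hβreal
  refine ⟨a, haroot, ha_mem.1, ha_mem.2, hsmall, (a:ℂ), ⟨haroot, ?_⟩, ?_⟩
  · rw [Complex.norm_real, Real.norm_eq_abs, abs_of_pos (by linarith)]
    linarith
  · rintro α ⟨hαroot, hα1⟩
    by_contra hne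
    exact absurd (hsmall α hαroot hne) (not_lt.2 hα1)
end
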